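/- arXiv:2604.05098 — 3 statements merged into one kernel-verified Lean document; each statement's English description precedes it below -/
import Mathlib

section
/- Let n ≥ 1 be an integer and h = 1/(n+1). The 1D Laplacian matrix P satisfies P_{i,i} = 2/h, P_{i,i'} = −1/h whenever |i−i'| = 1, and P_{i,i'} = 0 whenever |i−i'| ≥ 2. Moreover P is symmetric positive definite and every eigenvalue λ of P satisfies 4h ≤ λ ≤ 4/h; in particular the condition number of P is at most 1/h². -/
open MeasureTheory Finset Matrix

lemma lap_sum_identity (b : ℕ → ℝ) (N : ℕ) :
    ∑ j ∈ range (N+1), (b (j+1) - b j)^2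
      = (∑ k ∈ range N, b (k+1) * (2 * b (k+1) - b (k+2) - b k))
        + b 0 ^ 2 - b 0 * b 1 + b (N+1) ^ 2 - b (N+1) * b N := by
  induction N with
  | zero => simp; ring
  | succ N ih =>
      rw [sum_range_succ, ih, sum_range_succ]
      ring

lemma lap_quadform (b : ℕ → ℝ) (N : ℕ) (h0 : b 0 = 0) (hN : b (N+1) = 0) :
    ∑ k ∈ range N, b (k+1) * (2 * b (k+1) - b (k+2) - b k)
      = ∑ j ∈ range (N+1), (b (j+1) - b j)^2 := by
  rw [lap_sum_identity, h0, hN]; ring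

lemma lap_poincare (b : ℕ → ℝ) (N : ℕ) (h0 : b 0 = 0) (hN : b (N+1) = 0) :
    4 * ∑ k ∈ range N, b (k+1) ^ 2
      ≤ ((N:ℝ)+1)^2 * ∑ j ∈ range (N+1), (b (j+1) - b j)^2 := by
  set d : ℕ → ℝ := fun j => b (j+1) - b j with hd
  set D : ℝ := ∑ j ∈ range (N+1), d j ^ 2 with hD
  have hDnn : 0 ≤ D := Finset.sum_nonneg fun j _ => sq_nonneg _
  have hpart : ∀ s : Finset ℕ, (∑ j ∈ s, d j)^2 ≤ s.card * ∑ j ∈ s, d j ^ 2 :=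
    fun s => sq_sum_le_card_mul_sum_sq
  have key : ∀ k ∈ range N, 4 * ((N:ℝ)+1) * b (k+1) ^ 2 ≤ ((N:ℝ)+1)^2 * D := by
    intro k hk
    have hkN : k + 1 ≤ N := by simpa using Finset.mem_range.1 hk
    set L : ℝ := ∑ j ∈ range (k+1), d j ^ 2 with hLdef
    set R : ℝ := ∑ j ∈ Finset.Ico (k+1) (N+1), d j ^ 2 with hRdef
    have hLnn : 0 ≤ L := Finset.sum_nonneg fun j _ => sq_nonneg _
    have hRnn : 0 ≤ R := Finset.sum_nonneg fun j _ => sq_nonneg _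
    have hLR : L + R = D := by
      rw [hLdef, hRdef, hD, Finset.range_eq_Ico, Finset.range_eq_Ico]
      exact Finset.sum_Ico_consecutive _ (by omega) (by omega)
    have hleft : b (k+1) = ∑ j ∈ range (k+1), d j := by
      have := Finset.sum_range_sub b (k+1)
      rw [hd]; rw [this, h0]; ring
    have hright : b (k+1) = - ∑ j ∈ Finset.Ico (k+1) (N+1), d j := by
      have h1 := Finset.sum_range_sub b (N+1)
      have h2 := Finset.sum_range_sub b (k+1)
      have h3 : ∑ j ∈ Finset.Ico (k+1) (N+1), d j
          = (∑ j ∈ range (N+1), d j) - ∑ j ∈ range (k+1), d j := by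
        rw [Finset.range_eq_Ico, Finset.range_eq_Ico]
        have := Finset.sum_Ico_consecutive (fun j => d j) (by omega : 0 ≤ k+1) (by omega : k+1 ≤ N+1)
        linarith [this]
      rw [h3, hd]
      simp only at h1 h2 ⊢
      rw [h1, h2, h0, hN]; ring
    have hL : b (k+1) ^ 2 ≤ ((k:ℝ)+1) * L := by
      calc b (k+1) ^ 2 = (∑ j ∈ range (k+1), d j)^2 := by rw [hleft]
        _ ≤ (range (k+1)).card * L := hpart _
        _ = ((k:ℝ)+1) * L := by rw [Finset.card_range]; push_cast; ring
    have hR : b (k+1) ^ 2 ≤ ((N:ℝ)-k) * R := by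
      calc b (k+1) ^ 2 = (∑ j ∈ Finset.Ico (k+1) (N+1), d j)^2 := by rw [hright]; ring
        _ ≤ (Finset.Ico (k+1) (N+1)).card * R := hpart _
        _ = ((N:ℝ)-k) * R := by
            rw [Nat.card_Ico]
            have e : N + 1 - (k+1) = N - k := by omega
            rw [e, Nat.cast_sub (by omega : k ≤ N)]
    set x : ℝ := (k:ℝ)+1 with hx
    set y : ℝ := (N:ℝ)-k with hy
    have hx1 : 1 ≤ x := by
      have : (0:ℝ) ≤ (k:ℝ) := Nat.cast_nonneg k
      rw [hx]; linarith
    have hy1 : 1 ≤ y := by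
      rw [hy]
      have : (k:ℝ)+1 ≤ N := by exact_mod_cast hkN
      linarith
    have hxy : x + y = (N:ℝ)+1 := by rw [hx, hy]; ring
    have e1 : y * b (k+1)^2 ≤ y * (x * L) := by
      apply mul_le_mul_of_nonneg_left hL (by linarith)
    have e2 : x * b (k+1)^2 ≤ x * (y * R) := by
      apply mul_le_mul_of_nonneg_left hR (by linarith)
    rw [← hxy, ← hLR]
    nlinarith [sq_nonneg (x - y), mul_nonneg (mul_nonneg (by linarith : (0:ℝ) ≤ x) (by linarith : (0:ℝ) ≤ y)) (by linarith : (0:ℝ) ≤ L + R)]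
  have hsum := Finset.sum_le_sum key
  rw [← Finset.mul_sum, ← Finset.mul_sum] at hsum
  simp only [Finset.sum_const, Finset.card_range, nsmul_eq_mul] at hsum
  have hNpos : (0:ℝ) < (N:ℝ)+1 := by positivity
  have hfin : ((N:ℝ)+1) * (4 * ∑ k ∈ range N, b (k+1) ^ 2)
      ≤ ((N:ℝ)+1) * (((N:ℝ)+1)^2 * D) := by
    have hND : (N:ℝ) * (((N:ℝ)+1)^2 * D) ≤ ((N:ℝ)+1) * (((N:ℝ)+1)^2 * D) := by
      nlinarith [hDnn, sq_nonneg ((N:ℝ)+1)]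
    calc ((N:ℝ)+1) * (4 * ∑ k ∈ range N, b (k+1) ^ 2)
        = 4 * ((N:ℝ)+1) * ∑ k ∈ range N, b (k+1) ^ 2 := by ring
      _ ≤ (N:ℝ) * (((N:ℝ)+1)^2 * D) := by linarith [hsum]
      _ ≤ _ := hND
  exact le_of_mul_le_mul_left hfin hNpos

lemma lap_T (h : ℝ) (hpos : 0 < h) (n : ℕ) (hone : ((n:ℝ)+1) * h = 1)
    (k m : ℕ) (hk : k ≤ n) (hm : m ≤ n) :
    ∫ x in Set.Icc (0:ℝ) 1,
      (Set.Ioo ((k:ℝ)*h) (((k:ℝ)+1)*h)).indicator (fun _ => (1:ℝ)) x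
        * (Set.Ioo ((m:ℝ)*h) (((m:ℝ)+1)*h)).indicator (fun _ => (1:ℝ)) x
      = if k = m then h else 0 := by
  have hprod : (fun x => (Set.Ioo ((k:ℝ)*h) (((k:ℝ)+1)*h)).indicator (fun _ => (1:ℝ)) x
        * (Set.Ioo ((m:ℝ)*h) (((m:ℝ)+1)*h)).indicator (fun _ => (1:ℝ)) x)
      = (Set.Ioo ((k:ℝ)*h) (((k:ℝ)+1)*h) ∩ Set.Ioo ((m:ℝ)*h) (((m:ℝ)+1)*h)).indicator
          (fun _ => (1:ℝ)) := by
    funext x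
    rw [← Set.inter_indicator_mul]
    simp
  rw [show (∫ x in Set.Icc (0:ℝ) 1,
      (Set.Ioo ((k:ℝ)*h) (((k:ℝ)+1)*h)).indicator (fun _ => (1:ℝ)) x
        * (Set.Ioo ((m:ℝ)*h) (((m:ℝ)+1)*h)).indicator (fun _ => (1:ℝ)) x)
      = ∫ x in Set.Icc (0:ℝ) 1,
        (Set.Ioo ((k:ℝ)*h) (((k:ℝ)+1)*h) ∩ Set.Ioo ((m:ℝ)*h) (((m:ℝ)+1)*h)).indicator
          (fun _ => (1:ℝ)) x from by rw [← hprod]]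
  rw [MeasureTheory.setIntegral_indicator (measurableSet_Ioo.inter measurableSet_Ioo)]
  by_cases hkm : k = m
  · subst hkm
    simp only [if_pos rfl, Set.inter_self]
    have hsub : Set.Ioo ((k:ℝ)*h) (((k:ℝ)+1)*h) ⊆ Set.Icc (0:ℝ) 1 := by
      intro x hx
      obtain ⟨h1, h2⟩ := hx
      constructor
      · have : (0:ℝ) ≤ (k:ℝ)*h := by positivity
        linarith
      · have : ((k:ℝ)+1)*h ≤ ((n:ℝ)+1)*h := by
          have : (k:ℝ) ≤ n := by exact_mod_cast hk
          nlinarith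
        linarith [hone]
    rw [Set.inter_eq_self_of_subset_right hsub, setIntegral_const, measureReal_def, Real.volume_Ioo]
    rw [ENNReal.toReal_ofReal (by linarith [hpos] : (0:ℝ) ≤ ((k:ℝ)+1)*h - (k:ℝ)*h)]
    simp only [smul_eq_mul, mul_one, if_true]; ring
  · rw [if_neg hkm]
    have hempty : Set.Ioo ((k:ℝ)*h) (((k:ℝ)+1)*h) ∩ Set.Ioo ((m:ℝ)*h) (((m:ℝ)+1)*h) = ∅ := by
      rcases Nat.lt_or_ge k m with hlt | hge
      · apply Set.eq_empty_iff_forall_notMem.2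
        intro x ⟨⟨_, h2⟩, ⟨h3, _⟩⟩
        have : ((k:ℝ)+1) ≤ (m:ℝ) := by exact_mod_cast hlt
        nlinarith
      · have hlt : m < k := lt_of_le_of_ne hge (fun e => hkm e.symm)
        apply Set.eq_empty_iff_forall_notMem.2
        intro x ⟨⟨h1, _⟩, ⟨_, h4⟩⟩
        have : ((m:ℝ)+1) ≤ (k:ℝ) := by exact_mod_cast hlt
        nlinarith
    rw [hempty]
    simp


noncomputable def lapb (n : ℕ) (v : Fin n → ℝ) : ℕ → ℝ :=
  fun k => if hk : 1 ≤ k ∧ k ≤ n then v ⟨k-1, by omega⟩ else 0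

lemma lapb_zero (n : ℕ) (v : Fin n → ℝ) : lapb n v 0 = 0 := by
  rw [lapb, dif_neg (by omega)]

lemma lapb_top (n : ℕ) (v : Fin n → ℝ) : lapb n v (n+1) = 0 := by
  rw [lapb, dif_neg (by omega)]

lemma lapb_succ (n : ℕ) (v : Fin n → ℝ) (k : ℕ) (hk : k < n) :
    lapb n v (k+1) = v ⟨k, hk⟩ := by
  rw [lapb, dif_pos ⟨by omega, by omega⟩]
  congr 1

lemma lapb_fin (n : ℕ) (v : Fin n → ℝ) (i : Fin n) :
    v i = lapb n v (i.val+1) := by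
  rw [lapb_succ n v i.val i.2]

lemma lap_mulVec (n : ℕ) (h : ℝ) (P : Matrix (Fin n) (Fin n) ℝ)
    (hEntry : ∀ i i' : Fin n, P i i'
      = if i.val = i'.val then 2/h
        else if i.val+1 = i'.val ∨ i'.val+1 = i.val then -(1/h) else 0)
    (v : Fin n → ℝ) (i : Fin n) :
    P.mulVec v i = (1/h) * (2 * lapb n v (i.val+1) - lapb n v (i.val+2) - lapb n v i.val) := by
  set b := lapb n v with hb
  have hsummand : ∀ i' : Fin n, P i i' * v i'
      = (2/h) * (if i'.val = i.val then b (i'.val+1) else 0)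
        + (-(1/h)) * (if i'.val = i.val+1 then b (i'.val+1) else 0)
        + (-(1/h)) * (if i'.val+1 = i.val then b (i'.val+1) else 0) := by
    intro i'
    rw [hEntry, lapb_fin n v i', ← hb]
    by_cases c1 : i.val = i'.val
    · rw [if_pos c1, if_pos (by omega), if_neg (by omega), if_neg (by omega)]
      ring
    · rw [if_neg c1]
      by_cases c2 : i.val + 1 = i'.val
      · rw [if_pos (Or.inl c2), if_neg (by omega), if_pos (by omega), if_neg (by omega)]
        ring
      · by_cases c3 : i'.val + 1 = i.val
        · rw [if_pos (Or.inr c3), if_neg (by omega), if_neg (by omega), if_pos c3]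
          ring
        · rw [if_neg (by tauto), if_neg (by omega), if_neg (by omega), if_neg c3]
          ring
  have hmv : P.mulVec v i = ∑ i' : Fin n, P i i' * v i' := by
    simp [Matrix.mulVec, dotProduct]
  rw [hmv, Finset.sum_congr rfl (fun i' _ => hsummand i'), Finset.sum_add_distrib,
      Finset.sum_add_distrib, ← Finset.mul_sum, ← Finset.mul_sum, ← Finset.mul_sum]
  have r1 : ∑ i' : Fin n, (if i'.val = i.val then b (i'.val+1) else 0) = b (i.val+1) := by
    rw [Fin.sum_univ_eq_sum_range (fun k => if k = i.val then b (k+1) else 0) n,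
        Finset.sum_ite_eq' (range n) i.val (fun k => b (k+1)),
        if_pos (Finset.mem_range.2 i.2)]
  have r2 : ∑ i' : Fin n, (if i'.val = i.val+1 then b (i'.val+1) else 0) = b (i.val+2) := by
    rw [Fin.sum_univ_eq_sum_range (fun k => if k = i.val+1 then b (k+1) else 0) n,
        Finset.sum_ite_eq' (range n) (i.val+1) (fun k => b (k+1))]
    by_cases hc : i.val + 1 < n
    · rw [if_pos (Finset.mem_range.2 hc)]
    · rw [if_neg (fun hmem => hc (Finset.mem_range.1 hmem))]
      have : i.val + 2 = n + 1 := by omega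
      rw [hb, this, lapb_top]
  have r3 : ∑ i' : Fin n, (if i'.val+1 = i.val then b (i'.val+1) else 0) = b i.val := by
    rw [Fin.sum_univ_eq_sum_range (fun k => if k+1 = i.val then b (k+1) else 0) n]
    by_cases h0 : i.val = 0
    · rw [h0]
      have : ∀ k ∈ range n, (if k+1 = 0 then b (k+1) else 0) = 0 := by
        intro k _; rw [if_neg (by omega)]
      rw [Finset.sum_congr rfl this, Finset.sum_const_zero, hb, lapb_zero]
    · have hcong : ∀ k ∈ range n, (if k+1 = i.val then b (k+1) else 0)
          = (if k = i.val-1 then b (k+1) else 0) := by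
        intro k _
        by_cases hk : k + 1 = i.val
        · rw [if_pos hk, if_pos (by omega)]
        · rw [if_neg hk, if_neg (by omega)]
      rw [Finset.sum_congr rfl hcong,
          Finset.sum_ite_eq' (range n) (i.val-1) (fun k => b (k+1)),
          if_pos (Finset.mem_range.2 (by omega))]
      congr 1
      omega
  rw [r1, r2, r3]
  ring

lemma lap_dot (n : ℕ) (h : ℝ) (P : Matrix (Fin n) (Fin n) ℝ)
    (hEntry : ∀ i i' : Fin n, P i i'
      = if i.val = i'.val then 2/h
        else if i.val+1 = i'.val ∨ i'.val+1 = i.val then -(1/h) else 0)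
    (v : Fin n → ℝ) :
    v ⬝ᵥ P.mulVec v
      = (1/h) * ∑ j ∈ range (n+1), (lapb n v (j+1) - lapb n v j)^2 := by
  set b := lapb n v with hb
  have : v ⬝ᵥ P.mulVec v
      = ∑ i : Fin n, b (i.val+1) * ((1/h) * (2 * b (i.val+1) - b (i.val+2) - b i.val)) := by
    rw [dotProduct]
    refine Finset.sum_congr rfl (fun i _ => ?_)
    rw [lap_mulVec n h P hEntry v i, lapb_fin n v i, ← hb]
  rw [this,
      Fin.sum_univ_eq_sum_range (fun k => b (k+1) * ((1/h) * (2 * b (k+1) - b (k+2) - b k))) n]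
  have : ∑ k ∈ range n, b (k+1) * ((1/h) * (2 * b (k+1) - b (k+2) - b k))
      = (1/h) * ∑ k ∈ range n, b (k+1) * (2 * b (k+1) - b (k+2) - b k) := by
    rw [Finset.mul_sum]
    exact Finset.sum_congr rfl (fun k _ => by ring)
  rw [this, lap_quadform b n (lapb_zero n v) (lapb_top n v)]

lemma lap_normsq (n : ℕ) (v : Fin n → ℝ) :
    ∑ i : Fin n, v i ^ 2 = ∑ k ∈ range n, lapb n v (k+1) ^ 2 := by
  rw [← Fin.sum_univ_eq_sum_range (fun k => lapb n v (k+1) ^ 2) n]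
  exact Finset.sum_congr rfl (fun i _ => by rw [← lapb_fin n v i])

/-- **1D Laplacian (stiffness) matrix.** With `n ≥ 1`, `h = 1/(n+1)`, and
`g_i` the a.e.-derivative of the hat function `φ_i` (equal to `1/h` on `((i−1)h, ih)`,
`−1/h` on `(ih, (i+1)h)`, `0` otherwise; here `i` is represented by `i.val + 1` for
`i : Fin n`), the matrix `P_{i,i'} = ∫₀¹ g_i g_{i'}` has tridiagonal entries `2/h` and
`−1/h`, is symmetric positive definite, all its eigenvalues lie in `[4h, 4/h]`, and hence
its condition number is at most `1/h²`. -/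
theorem stmt1 (n : ℕ) (hn : 1 ≤ n) (h : ℝ) (hh : h = 1 / ((n : ℝ) + 1))
    (g : Fin n → ℝ → ℝ)
    (hg : ∀ (i : Fin n) (x : ℝ),
      g i x = if (i.val : ℝ) * h < x ∧ x < ((i.val : ℝ) + 1) * h then 1 / h
        else if ((i.val : ℝ) + 1) * h < x ∧ x < ((i.val : ℝ) + 2) * h then -(1 / h)
        else 0)
    (P : Matrix (Fin n) (Fin n) ℝ)
    (hP : ∀ i i', P i i' = ∫ x in Set.Icc (0:ℝ) 1, g i x * g i' x) :
    (∀ i, P i i = 2 / h) ∧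
    (∀ i i' : Fin n, |(i.val : ℤ) - (i'.val : ℤ)| = 1 → P i i' = -(1 / h)) ∧
    (∀ i i' : Fin n, 2 ≤ |(i.val : ℤ) - (i'.val : ℤ)| → P i i' = 0) ∧
    P.IsSymm ∧ P.PosDef ∧
    (∀ (lam : ℝ) (v : Fin n → ℝ), v ≠ 0 → P.mulVec v = lam • v →
      4 * h ≤ lam ∧ lam ≤ 4 / h) ∧
    (∀ (lam mu : ℝ) (v w : Fin n → ℝ), v ≠ 0 → w ≠ 0 →
      P.mulVec v = lam • v → P.mulVec w = mu • w → lam ≤ (1 / h ^ 2) * mu) := by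
  have hNpos : (0:ℝ) < (n:ℝ) + 1 := by positivity
  have hpos : 0 < h := by rw [hh]; positivity
  have hne : h ≠ 0 := ne_of_gt hpos
  have hone : ((n:ℝ)+1) * h = 1 := by rw [hh]; field_simp
  -- indicator functions
  set ind : ℕ → ℝ → ℝ :=
    fun k x => (Set.Ioo ((k:ℝ)*h) (((k:ℝ)+1)*h)).indicator (fun _ => (1:ℝ)) x with hind
  -- g as combination of indicators
  have hgind : ∀ (i : Fin n) (x : ℝ),
      g i x = (1/h) * ind (i.val) x - (1/h) * ind (i.val+1) x := by
    intro i x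
    have e1 : ((i.val+1:ℕ):ℝ) = (i.val:ℝ)+1 := by push_cast; ring
    rw [hg]
    by_cases hA : (i.val:ℝ) * h < x ∧ x < ((i.val:ℝ)+1)*h
    · rw [if_pos hA]
      have m1 : x ∈ Set.Ioo (((i.val:ℕ):ℝ)*h) ((((i.val:ℕ):ℝ)+1)*h) := hA
      have m2 : x ∉ Set.Ioo (((i.val+1:ℕ):ℝ)*h) ((((i.val+1:ℕ):ℝ)+1)*h) := by
        intro hx
        have := hx.1
        rw [e1] at this
        linarith [hA.2]
      rw [hind]
      simp only [Set.indicator_of_mem m1, Set.indicator_of_notMem m2]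
      ring
    · by_cases hB : ((i.val:ℝ)+1)*h < x ∧ x < ((i.val:ℝ)+2)*h
      · rw [if_neg hA, if_pos hB]
        have m1 : x ∉ Set.Ioo (((i.val:ℕ):ℝ)*h) ((((i.val:ℕ):ℝ)+1)*h) := by
          intro hx
          linarith [hx.2, hB.1]
        have m2 : x ∈ Set.Ioo (((i.val+1:ℕ):ℝ)*h) ((((i.val+1:ℕ):ℝ)+1)*h) := by
          constructor
          · rw [e1]; exact hB.1
          · rw [e1]; linarith [hB.2]
        rw [hind]
        simp only [Set.indicator_of_notMem m1, Set.indicator_of_mem m2]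
        ring
      · rw [if_neg hA, if_neg hB]
        have m1 : x ∉ Set.Ioo (((i.val:ℕ):ℝ)*h) ((((i.val:ℕ):ℝ)+1)*h) := fun hx => hA ⟨hx.1, hx.2⟩
        have m2 : x ∉ Set.Ioo (((i.val+1:ℕ):ℝ)*h) ((((i.val+1:ℕ):ℝ)+1)*h) := by
          intro hx
          apply hB
          constructor
          · have := hx.1; rw [e1] at this; exact this
          · have := hx.2; rw [e1] at this; linarith
        rw [hind]
        simp only [Set.indicator_of_notMem m1, Set.indicator_of_notMem m2]
        ring
  -- integrability of indicator products
  have hIntg : ∀ k m : ℕ, IntegrableOn (fun x => ind k x * ind m x) (Set.Icc (0:ℝ) 1) := by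
    intro k m
    have hprod : (fun x => ind k x * ind m x)
        = (Set.Ioo ((k:ℝ)*h) (((k:ℝ)+1)*h) ∩ Set.Ioo ((m:ℝ)*h) (((m:ℝ)+1)*h)).indicator
            (fun _ => (1:ℝ)) := by
      funext x
      rw [hind, ← Set.inter_indicator_mul]
      simp
    rw [hprod]
    apply (integrable_indicator_iff (measurableSet_Ioo.inter measurableSet_Ioo)).2
    exact integrableOn_const (lt_of_le_of_lt (MeasureTheory.Measure.restrict_apply_le _ _) (lt_of_le_of_lt (measure_mono Set.inter_subset_left) measure_Ioo_lt_top)).ne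
  -- entry computation
  have hEntry : ∀ i i' : Fin n, P i i'
      = if i.val = i'.val then 2/h
        else if i.val+1 = i'.val ∨ i'.val+1 = i.val then -(1/h) else 0 := by
    intro i i'
    have hkn : i.val < n := i.2
    have hmn : i'.val < n := i'.2
    set k := i.val with hk
    set m := i'.val with hm
    have hexp : (fun x => g i x * g i' x) = fun x =>
        (1/h)^2 * (ind k x * ind m x) - (1/h)^2 * (ind k x * ind (m+1) x)
        - ((1/h)^2 * (ind (k+1) x * ind m x)) + (1/h)^2 * (ind (k+1) x * ind (m+1) x) := by
      funext x
      rw [hgind, hgind]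
      ring
    have i1 := (hIntg k m).const_mul ((1/h)^2)
    have i2 := (hIntg k (m+1)).const_mul ((1/h)^2)
    have i3 := (hIntg (k+1) m).const_mul ((1/h)^2)
    have i4 := (hIntg (k+1) (m+1)).const_mul ((1/h)^2)
    have e4 : (∫ x in Set.Icc (0:ℝ) 1,
        ((1/h)^2 * (ind k x * ind m x) - (1/h)^2 * (ind k x * ind (m+1) x)
        - ((1/h)^2 * (ind (k+1) x * ind m x)) + (1/h)^2 * (ind (k+1) x * ind (m+1) x)))
        = ((∫ x in Set.Icc (0:ℝ) 1, ((1/h)^2 * (ind k x * ind m x)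
            - (1/h)^2 * (ind k x * ind (m+1) x) - ((1/h)^2 * (ind (k+1) x * ind m x)))))
          + ∫ x in Set.Icc (0:ℝ) 1, (1/h)^2 * (ind (k+1) x * ind (m+1) x) :=
      MeasureTheory.integral_add ((i1.sub i2).sub i3) i4
    have e3 : (∫ x in Set.Icc (0:ℝ) 1, ((1/h)^2 * (ind k x * ind m x)
            - (1/h)^2 * (ind k x * ind (m+1) x) - ((1/h)^2 * (ind (k+1) x * ind m x))))
        = (∫ x in Set.Icc (0:ℝ) 1, ((1/h)^2 * (ind k x * ind m x)
            - (1/h)^2 * (ind k x * ind (m+1) x)))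
          - ∫ x in Set.Icc (0:ℝ) 1, (1/h)^2 * (ind (k+1) x * ind m x) :=
      MeasureTheory.integral_sub (i1.sub i2) i3
    have e2 : (∫ x in Set.Icc (0:ℝ) 1, ((1/h)^2 * (ind k x * ind m x)
            - (1/h)^2 * (ind k x * ind (m+1) x)))
        = (∫ x in Set.Icc (0:ℝ) 1, (1/h)^2 * (ind k x * ind m x))
          - ∫ x in Set.Icc (0:ℝ) 1, (1/h)^2 * (ind k x * ind (m+1) x) :=
      MeasureTheory.integral_sub i1 i2
    rw [hP, hexp, e4, e3, e2,
        MeasureTheory.integral_const_mul, MeasureTheory.integral_const_mul,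
        MeasureTheory.integral_const_mul, MeasureTheory.integral_const_mul]
    simp only [hind]
    rw [lap_T h hpos n hone k m (by omega) (by omega),
        lap_T h hpos n hone k (m+1) (by omega) (by omega),
        lap_T h hpos n hone (k+1) m (by omega) (by omega),
        lap_T h hpos n hone (k+1) (m+1) (by omega) (by omega)]
    by_cases e0 : k = m
    · rw [if_pos e0, if_pos (by omega : k+1 = m+1), if_neg (by omega : ¬ k = m+1),
          if_neg (by omega : ¬ k+1 = m), if_pos e0]
      field_simp
      ring
    · rw [if_neg e0, if_neg (by omega : ¬ k+1 = m+1), if_neg e0]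
      by_cases e1 : k+1 = m
      · rw [if_pos e1, if_neg (by omega : ¬ k = m+1), if_pos (Or.inl e1)]
        field_simp
        ring
      · rw [if_neg e1]
        by_cases e2 : m+1 = k
        · rw [if_pos (by omega : k = m+1), if_pos (Or.inr e2)]
          field_simp
          ring
        · rw [if_neg (by omega : ¬ k = m+1), if_neg (by omega : ¬ (k+1 = m ∨ m+1 = k))]
          ring
  clear hgind hIntg hg hP
  -- explicit entries
  have part1 : ∀ i : Fin n, P i i = 2 / h := by
    intro i; rw [hEntry]; simp
  have part2 : ∀ i i' : Fin n, |(i.val : ℤ) - (i'.val : ℤ)| = 1 → P i i' = -(1 / h) := by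
    intro i i' hd
    rcases abs_cases ((i.val : ℤ) - (i'.val : ℤ)) with ⟨he, _⟩ | ⟨he, _⟩ <;>
      rw [he] at hd <;>
      rw [hEntry, if_neg (by omega), if_pos (by omega)]
  have part3 : ∀ i i' : Fin n, 2 ≤ |(i.val : ℤ) - (i'.val : ℤ)| → P i i' = 0 := by
    intro i i' hd
    rcases abs_cases ((i.val : ℤ) - (i'.val : ℤ)) with ⟨he, _⟩ | ⟨he, _⟩ <;>
      rw [he] at hd <;>
      rw [hEntry, if_neg (by omega), if_neg (by omega)]
  have hsymm : P.IsSymm := by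
    apply Matrix.ext
    intro i i'
    rw [Matrix.transpose_apply, hEntry, hEntry]
    split_ifs <;> first | rfl | omega
  -- quadratic form facts
  have hdot : ∀ v : Fin n → ℝ, v ⬝ᵥ P.mulVec v
      = (1/h) * ∑ j ∈ range (n+1), (lapb n v (j+1) - lapb n v j)^2 :=
    fun v => lap_dot n h P hEntry v
  have hQnn : ∀ v : Fin n → ℝ,
      0 ≤ ∑ j ∈ range (n+1), (lapb n v (j+1) - lapb n v j)^2 :=
    fun v => Finset.sum_nonneg fun j _ => sq_nonneg _
  have hpoin : ∀ v : Fin n → ℝ, 4 * ∑ i, v i ^ 2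
      ≤ ((n:ℝ)+1)^2 * ∑ j ∈ range (n+1), (lapb n v (j+1) - lapb n v j)^2 := by
    intro v
    rw [lap_normsq n v]
    exact lap_poincare (lapb n v) n (lapb_zero n v) (lapb_top n v)
  have hupper : ∀ v : Fin n → ℝ,
      ∑ j ∈ range (n+1), (lapb n v (j+1) - lapb n v j)^2 ≤ 4 * ∑ i, v i ^ 2 := by
    intro v
    set b := lapb n v with hb
    have step : ∑ j ∈ range (n+1), (b (j+1) - b j)^2
        ≤ ∑ j ∈ range (n+1), (2 * b (j+1)^2 + 2 * b j ^2) :=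
      Finset.sum_le_sum fun j _ => by nlinarith [sq_nonneg (b (j+1) + b j)]
    have e1 : ∑ j ∈ range (n+1), (2 * b (j+1)^2 + 2 * b j ^2)
        = 2 * (∑ j ∈ range (n+1), b (j+1)^2) + 2 * ∑ j ∈ range (n+1), b j ^2 := by
      rw [Finset.sum_add_distrib, ← Finset.mul_sum, ← Finset.mul_sum]
    have e2 : ∑ j ∈ range (n+1), b (j+1)^2 = ∑ k ∈ range n, b (k+1)^2 := by
      rw [Finset.sum_range_succ, hb, lapb_top]
      ring
    have e3 : ∑ j ∈ range (n+1), b j ^2 = ∑ k ∈ range n, b (k+1)^2 := by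
      rw [Finset.sum_range_succ', hb, lapb_zero]
      ring
    rw [lap_normsq n v, ← hb]
    calc ∑ j ∈ range (n+1), (b (j+1) - b j)^2
        ≤ ∑ j ∈ range (n+1), (2 * b (j+1)^2 + 2 * b j ^2) := step
      _ = 4 * ∑ k ∈ range n, b (k+1)^2 := by rw [e1, e2, e3]; ring
  have hvpos : ∀ v : Fin n → ℝ, v ≠ 0 → 0 < ∑ i, v i ^ 2 := by
    intro v hv
    obtain ⟨i, hi⟩ := Function.ne_iff.1 hv
    have hi' : v i ≠ 0 := by simpa using hi
    have h1 : (0:ℝ) < v i ^ 2 := by positivity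
    have h2 := Finset.single_le_sum (f := fun i => v i ^ 2)
      (fun j _ => sq_nonneg _) (Finset.mem_univ i)
    linarith
  have hQpos : ∀ v : Fin n → ℝ, v ≠ 0 →
      0 < ∑ j ∈ range (n+1), (lapb n v (j+1) - lapb n v j)^2 := by
    intro v hv
    have h1 := hpoin v
    have h2 := hvpos v hv
    nlinarith [sq_nonneg ((n:ℝ)+1), hQnn v]
  -- eigenvalue bounds
  have heig : ∀ (lam : ℝ) (v : Fin n → ℝ), v ≠ 0 → P.mulVec v = lam • v →
      4 * h ≤ lam ∧ lam ≤ 4 / h := by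
    intro lam v hv hev
    set S := ∑ i, v i ^ 2 with hS
    set Q := ∑ j ∈ range (n+1), (lapb n v (j+1) - lapb n v j)^2 with hQ
    have hSpos : 0 < S := hvpos v hv
    have hkey : lam * S = (1/h) * Q := by
      have : v ⬝ᵥ P.mulVec v = lam * S := by
        rw [hev, dotProduct_smul, smul_eq_mul, hS, dotProduct]
        congr 1
        exact Finset.sum_congr rfl fun i _ => (sq (v i)).symm
      rw [← this, hdot v]
    have hinv : (n:ℝ) + 1 = 1/h := by
      field_simp
      linarith [hone]
    constructor
    · -- lower bound
      have hp := hpoin v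
      rw [hinv] at hp
      -- 4 * S ≤ (1/h)^2 * Q, so lam * S = (1/h) Q ≥ 4 h S
      have hQS : 4 * h^2 * S ≤ Q := by
        have hh2 : (0:ℝ) < h^2 := by positivity
        have := mul_le_mul_of_nonneg_left hp (le_of_lt hh2)
        have e : h^2 * ((1/h)^2 * Q) = Q := by field_simp
        nlinarith [this, e]
      have : 4 * h * S ≤ lam * S := by
        rw [hkey]
        have := mul_le_mul_of_nonneg_left hQS (le_of_lt (one_div_pos.2 hpos))
        calc 4 * h * S = (1/h) * (4 * h^2 * S) := by field_simp
          _ ≤ (1/h) * Q := this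
      exact le_of_mul_le_mul_right (by linarith) hSpos
    · -- upper bound
      have hu := hupper v
      have : lam * S ≤ (4/h) * S := by
        rw [hkey]
        have := mul_le_mul_of_nonneg_left hu (le_of_lt (one_div_pos.2 hpos))
        calc (1/h) * Q ≤ (1/h) * (4 * S) := this
          _ = (4/h) * S := by ring
      exact le_of_mul_le_mul_right (by linarith) hSpos
  refine ⟨part1, part2, part3, hsymm, ?_, heig, ?_⟩
  · -- positive definite
    rw [Matrix.posDef_iff_dotProduct_mulVec]
    constructor
    · rw [Matrix.IsHermitian, Matrix.conjTranspose_eq_transpose_of_trivial]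
      exact hsymm
    · intro v hv
      have : star v = v := by
        funext i
        simp [star]
      rw [this]
      have : v ⬝ᵥ P *ᵥ v = (1/h) * ∑ j ∈ range (n+1), (lapb n v (j+1) - lapb n v j)^2 :=
        hdot v
      rw [this]
      exact mul_pos (one_div_pos.2 hpos) (hQpos v hv)
  · -- condition number
    intro lam mu v w hv hw hev hew
    have h1 : lam ≤ 4 / h := (heig lam v hv hev).2
    have h2 : 4 * h ≤ mu := (heig mu w hw hew).1
    have h3 : (0:ℝ) < 1 / h^2 := by positivity
    calc lam ≤ 4 / h := h1
      _ = (1 / h^2) * (4 * h) := by field_simp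
      _ ≤ (1 / h^2) * mu := by
          exact mul_le_mul_of_nonneg_left h2 (le_of_lt h3)
end

section
/- Let n ≥ 1 be an integer and h = 1/(n+1). The 3D Laplacian matrix P⁽³⁾ satisfies P⁽³⁾ = P ⊗ M ⊗ M + M ⊗ P ⊗ M + M ⊗ M ⊗ P (Kronecker products under the identification of {1,…,n}³ with indices of ℝ^{n³}), where M is the 1D mass matrix and P is the 1D Laplacian matrix. Consequently every eigenvalue λ of P⁽³⁾ satisfies (4/3)h³ ≤ λ ≤ 12h, so the condition number of P⁽³⁾ is at most 9/h². -/
open MeasureTheory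

section AuxLemmas

open Matrix Finset intervalIntegral
open Kronecker


open Matrix MeasureTheory
open Kronecker

variable {na : Type*} [Fintype na] [DecidableEq na]

theorem myPSD.kron {nb : Type*} [Fintype nb] (A : Matrix na na ℝ) (B : Matrix nb nb ℝ)
    (hA : A.PosSemidef) (hB : B.PosSemidef) :
    (A ⊗ₖ B).PosSemidef := by
  exact Matrix.PosSemidef.kronecker hA hB

theorem myPSD.smul (c : ℝ) (hc : 0 ≤ c) (A : Matrix na na ℝ) (hA : A.PosSemidef) :
    (c • A).PosSemidef := by
  refine Matrix.PosSemidef.of_dotProduct_mulVec_nonneg ?_ (fun x => ?_)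
  · simp [Matrix.IsHermitian, Matrix.conjTranspose_smul, Matrix.conjTranspose_eq_transpose_of_trivial, hA.1.eq]
    rw [show Aᵀ = A from (Matrix.conjTranspose_eq_transpose_of_trivial A) ▸ hA.1.eq]
  · rw [Matrix.smul_mulVec, dotProduct_smul, smul_eq_mul]
    exact mul_nonneg hc (hA.dotProduct_mulVec_nonneg x)

theorem kron3_lower (A B C : Matrix na na ℝ) (a b c : ℝ) (ha : 0 ≤ a) (hb : 0 ≤ b)
    (hA : (A - a • 1).PosSemidef) (hB : (B - b • 1).PosSemidef) (hC : (C - c • 1).PosSemidef)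
    (hB' : B.PosSemidef) (hC' : C.PosSemidef) :
    (A ⊗ₖ (B ⊗ₖ C) - (a * (b * c)) • 1).PosSemidef := by
  have key : A ⊗ₖ (B ⊗ₖ C) - (a * (b * c)) • 1 =
      (A - a • 1) ⊗ₖ (B ⊗ₖ C) + a • ((1 : Matrix na na ℝ) ⊗ₖ ((B - b • 1) ⊗ₖ C))
      + (a * b) • ((1 : Matrix na na ℝ) ⊗ₖ ((1 : Matrix na na ℝ) ⊗ₖ (C - c • 1))) := by
    ext ⟨i, j, k⟩ ⟨i', j', k'⟩
    by_cases hi : i = i' <;> by_cases hj : j = j' <;> by_cases hk : k = k' <;>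
      simp [Matrix.kroneckerMap_apply, Matrix.one_apply, hi, hj, hk, Prod.ext_iff] <;> ring
  rw [key]
  exact ((myPSD.kron _ _ hA (myPSD.kron _ _ hB' hC')).add
    (myPSD.smul a ha _ (myPSD.kron _ _ Matrix.PosSemidef.one (myPSD.kron _ _ hB hC')))).add
    (myPSD.smul (a*b) (mul_nonneg ha hb) _ (myPSD.kron _ _ Matrix.PosSemidef.one (myPSD.kron _ _ Matrix.PosSemidef.one hC)))

theorem kron3_upper (A B C : Matrix na na ℝ) (a b c : ℝ) (ha : 0 ≤ a) (hb : 0 ≤ b)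
    (hA : (a • 1 - A).PosSemidef) (hB : (b • 1 - B).PosSemidef) (hC : (c • 1 - C).PosSemidef)
    (hB' : B.PosSemidef) (hC' : C.PosSemidef) :
    ((a * (b * c)) • 1 - A ⊗ₖ (B ⊗ₖ C)).PosSemidef := by
  have key : (a * (b * c)) • (1 : Matrix (na × na × na) (na × na × na) ℝ) - A ⊗ₖ (B ⊗ₖ C) =
      (a • 1 - A) ⊗ₖ (B ⊗ₖ C) + a • ((1 : Matrix na na ℝ) ⊗ₖ ((b • 1 - B) ⊗ₖ C))
      + (a * b) • ((1 : Matrix na na ℝ) ⊗ₖ ((1 : Matrix na na ℝ) ⊗ₖ (c • 1 - C))) := by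
    ext ⟨i, j, k⟩ ⟨i', j', k'⟩
    by_cases hi : i = i' <;> by_cases hj : j = j' <;> by_cases hk : k = k' <;>
      simp [Matrix.kroneckerMap_apply, Matrix.one_apply, hi, hj, hk, Prod.ext_iff] <;> ring
  rw [key]
  exact ((myPSD.kron _ _ hA (myPSD.kron _ _ hB' hC')).add
    (myPSD.smul a ha _ (myPSD.kron _ _ Matrix.PosSemidef.one (myPSD.kron _ _ hB hC')))).add
    (myPSD.smul (a*b) (mul_nonneg ha hb) _ (myPSD.kron _ _ Matrix.PosSemidef.one (myPSD.kron _ _ Matrix.PosSemidef.one hC)))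

open MeasureTheory

theorem ind_integral (a b c : ℝ) (hab : a ≤ b) (h0 : 0 ≤ a) (h1 : b ≤ 1) :
    ∫ x in Set.Icc (0:ℝ) 1, (Set.Ioo a b).indicator (fun _ => c) x = c * (b - a) := by
  rw [MeasureTheory.setIntegral_indicator measurableSet_Ioo, MeasureTheory.setIntegral_const,
    Set.inter_eq_self_of_subset_right
      (Set.Ioo_subset_Icc_self.trans (Set.Icc_subset_Icc h0 h1)),
    Real.volume_real_Ioo_of_le hab, smul_eq_mul]
  ring

theorem ind_integrable (a b c : ℝ) :
    Integrable (fun x => (Set.Ioo a b).indicator (fun _ => c) x) (volume.restrict (Set.Icc (0:ℝ) 1)) := by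
  rw [MeasureTheory.integrable_indicator_iff measurableSet_Ioo]
  refine (integrableOn_const_iff (C := c) (by simp)).mpr (Or.inr ?_)
  exact lt_of_le_of_lt (Measure.restrict_le_self _) measure_Ioo_lt_top

theorem P_entries (n : ℕ) (h : ℝ) (hpos : 0 < h)
    (hub : ∀ i : Fin n, ((i.val : ℝ) + 2) * h ≤ 1)
    (g : Fin n → ℝ → ℝ)
    (hg : ∀ (i : Fin n) (x : ℝ),
      g i x = if (i.val : ℝ) * h < x ∧ x < ((i.val : ℝ) + 1) * h then 1 / h
        else if ((i.val : ℝ) + 1) * h < x ∧ x < ((i.val : ℝ) + 2) * h then -(1 / h)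
        else 0) :
    ∀ i i' : Fin n, (∫ x in Set.Icc (0:ℝ) 1, g i x * g i' x) =
      if i.val = i'.val then 2/h
      else if i.val + 1 = i'.val ∨ i'.val + 1 = i.val then -(1/h) else 0 := by
  have hnn : ∀ i : Fin n, (0:ℝ) ≤ (i.val : ℝ) * h := fun i => by positivity
  -- separated supports give zero
  have key0 : ∀ (p q : Fin n) (x : ℝ), q.val ≥ p.val + 2 → g p x * g q x = 0 := by
    intro p q x hpq
    have hcast : ((p.val:ℝ)+2) ≤ (q.val:ℝ) := by exact_mod_cast hpq
    have hch := mul_le_mul_of_nonneg_right hcast hpos.le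
    rw [hg p x, hg q x]
    by_cases hx : x ≤ ((p.val:ℝ)+2)*h
    · have h1 : ¬ ((q.val:ℝ)*h < x ∧ x < ((q.val:ℝ)+1)*h) := by
        rintro ⟨hA, _⟩; linarith
      have h2 : ¬ (((q.val:ℝ)+1)*h < x ∧ x < ((q.val:ℝ)+2)*h) := by
        rintro ⟨hA, _⟩
        have hq1 : (q.val:ℝ)*h ≤ ((q.val:ℝ)+1)*h := by nlinarith
        linarith
      rw [if_neg h1, if_neg h2, mul_zero]
    · push_neg at hx
      have h1 : ¬ ((p.val:ℝ)*h < x ∧ x < ((p.val:ℝ)+1)*h) := by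
        rintro ⟨_, hB⟩
        have : ((p.val:ℝ)+1)*h ≤ ((p.val:ℝ)+2)*h := by nlinarith
        linarith
      have h2 : ¬ (((p.val:ℝ)+1)*h < x ∧ x < ((p.val:ℝ)+2)*h) := by
        rintro ⟨_, hB⟩; linarith
      rw [if_neg h1, if_neg h2, zero_mul]
  -- adjacent case
  have keyadj : ∀ (p q : Fin n), q.val = p.val + 1 →
      (∫ x in Set.Icc (0:ℝ) 1, g p x * g q x) = -(1/h) := by
    intro p q hpq
    have hcast : (q.val:ℝ) = (p.val:ℝ) + 1 := by exact_mod_cast hpq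
    have hpt : ∀ x, g p x * g q x =
        (Set.Ioo (((p.val:ℝ)+1)*h) (((p.val:ℝ)+2)*h)).indicator (fun _ => -(1/h^2)) x := by
      intro x
      rw [hg p x, hg q x, hcast]
      by_cases hc1 : (p.val:ℝ)*h < x ∧ x < ((p.val:ℝ)+1)*h
      · rw [if_pos hc1]
        have hd1 : ¬ (((p.val:ℝ)+1)*h < x ∧ x < ((p.val:ℝ)+1+1)*h) := by
          rintro ⟨hA, _⟩; linarith [hc1.2]
        have hd2 : ¬ (((p.val:ℝ)+1+1)*h < x ∧ x < ((p.val:ℝ)+1+2)*h) := by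
          rintro ⟨hA, _⟩
          have : ((p.val:ℝ)+1)*h ≤ ((p.val:ℝ)+1+1)*h := by nlinarith
          linarith [hc1.2]
        rw [if_neg hd1, if_neg hd2, mul_zero]
        rw [Set.indicator_of_notMem (by rw [Set.mem_Ioo]; rintro ⟨hA,_⟩; linarith [hc1.2])]
      · rw [if_neg hc1]
        by_cases hc2 : ((p.val:ℝ)+1)*h < x ∧ x < ((p.val:ℝ)+2)*h
        · rw [if_pos hc2]
          have hd1 : (((p.val:ℝ)+1)*h < x ∧ x < ((p.val:ℝ)+1+1)*h) := by
            constructor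
            · exact hc2.1
            · have : ((p.val:ℝ)+2)*h = ((p.val:ℝ)+1+1)*h := by ring
              linarith [hc2.2]
          rw [if_pos hd1]
          rw [Set.indicator_of_mem (Set.mem_Ioo.mpr hc2)]
          field_simp
        · rw [if_neg hc2]
          rw [Set.indicator_of_notMem (fun hm => hc2 (Set.mem_Ioo.mp hm)), zero_mul]
    simp only [hpt]
    rw [ind_integral _ _ _ (by nlinarith) (by positivity) (by
      have := hub p; linarith)]
    field_simp
    ring
  have keydiag : ∀ p : Fin n, (∫ x in Set.Icc (0:ℝ) 1, g p x * g p x) = 2/h := by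
    intro i
    have hpt : ∀ x, g i x * g i x =
        (Set.Ioo ((i.val:ℝ)*h) (((i.val:ℝ)+1)*h)).indicator (fun _ => 1/h^2) x
        + (Set.Ioo (((i.val:ℝ)+1)*h) (((i.val:ℝ)+2)*h)).indicator (fun _ => 1/h^2) x := by
      intro x
      rw [hg i x]
      by_cases hc1 : (i.val:ℝ)*h < x ∧ x < ((i.val:ℝ)+1)*h
      · rw [if_pos hc1, Set.indicator_of_mem (Set.mem_Ioo.mpr hc1),
          Set.indicator_of_notMem (by rw [Set.mem_Ioo]; rintro ⟨hA,_⟩; linarith [hc1.2])]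
        ring
      · rw [if_neg hc1, Set.indicator_of_notMem (fun hm => hc1 (Set.mem_Ioo.mp hm))]
        by_cases hc2 : ((i.val:ℝ)+1)*h < x ∧ x < ((i.val:ℝ)+2)*h
        · rw [if_pos hc2, Set.indicator_of_mem (Set.mem_Ioo.mpr hc2)]
          ring
        · rw [if_neg hc2, Set.indicator_of_notMem (fun hm => hc2 (Set.mem_Ioo.mp hm))]
          ring
    simp only [hpt]
    rw [MeasureTheory.integral_add (ind_integrable _ _ _) (ind_integrable _ _ _)]
    rw [ind_integral _ _ _ (by nlinarith) (by positivity) (by have := hub i; nlinarith),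
      ind_integral _ _ _ (by nlinarith) (by positivity) (by have := hub i; linarith)]
    field_simp
    ring
  intro i i'
  by_cases hd : i.val = i'.val
  · have heq : i' = i := Fin.ext hd.symm
    rw [if_pos hd]
    simp only [heq]
    exact keydiag i
  · rw [if_neg hd]
    by_cases hadj : i.val + 1 = i'.val ∨ i'.val + 1 = i.val
    · rw [if_pos hadj]
      rcases hadj with hl | hr
      · exact keyadj i i' hl.symm
      · rw [show (fun x => g i x * g i' x) = fun x => g i' x * g i x from funext fun x => mul_comm _ _]
        exact keyadj i' i hr.symm
    · rw [if_neg hadj]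
      have hsep : i'.val ≥ i.val + 2 ∨ i.val ≥ i'.val + 2 := by omega
      have hzero : ∀ x, g i x * g i' x = 0 := by
        intro x
        rcases hsep with hl | hr
        · exact key0 i i' x hl
        · rw [mul_comm]; exact key0 i' i x hr
      simp only [hzero, MeasureTheory.integral_zero]

open MeasureTheory intervalIntegral

theorem M_entries (n : ℕ) (h : ℝ) (hpos : 0 < h)
    (hub : ∀ i : Fin n, ((i.val : ℝ) + 2) * h ≤ 1)
    (φ : Fin n → ℝ → ℝ)
    (hφ : ∀ (i : Fin n) (x : ℝ), φ i x = max 0 (1 - |x / h - ((i.val : ℝ) + 1)|)) :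
    ∀ i i' : Fin n, (∫ x in Set.Icc (0:ℝ) 1, φ i x * φ i' x) =
      if i.val = i'.val then 2*h/3
      else if i.val + 1 = i'.val ∨ i'.val + 1 = i.val then h/6 else 0 := by
  have hcont : ∀ i : Fin n, Continuous (φ i) := by
    intro i
    rw [show φ i = fun x => max 0 (1 - |x / h - ((i.val : ℝ) + 1)|) from funext (hφ i)]
    fun_prop
  have phi_zero : ∀ (i : Fin n) (x : ℝ),
      (x ≤ (i.val:ℝ)*h ∨ ((i.val:ℝ)+2)*h ≤ x) → φ i x = 0 := by
    intro i x hx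
    rw [hφ i x]
    rcases hx with hx | hx
    · have h1 : x/h ≤ (i.val:ℝ) := by rw [div_le_iff₀ hpos]; linarith
      have h2 : (1:ℝ) ≤ |x/h - ((i.val:ℝ)+1)| := le_abs.mpr (Or.inr (by linarith))
      exact max_eq_left (by linarith)
    · have h1 : (i.val:ℝ) + 2 ≤ x/h := by rw [le_div_iff₀ hpos]; linarith
      have h2 : (1:ℝ) ≤ |x/h - ((i.val:ℝ)+1)| := le_abs.mpr (Or.inl (by linarith))
      exact max_eq_left (by linarith)
  have phi_left : ∀ (i : Fin n) (x : ℝ), (i.val:ℝ)*h ≤ x → x ≤ ((i.val:ℝ)+1)*h →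
      φ i x = x/h - (i.val:ℝ) := by
    intro i x h1 h2
    rw [hφ i x]
    have ha : x/h ≤ (i.val:ℝ)+1 := by rw [div_le_iff₀ hpos]; linarith
    have hb : (i.val:ℝ) ≤ x/h := by rw [le_div_iff₀ hpos]; linarith
    rw [abs_of_nonpos (by linarith), max_eq_right (by linarith)]
    ring
  have phi_right : ∀ (i : Fin n) (x : ℝ), ((i.val:ℝ)+1)*h ≤ x → x ≤ ((i.val:ℝ)+2)*h →
      φ i x = ((i.val:ℝ)+2) - x/h := by
    intro i x h1 h2
    rw [hφ i x]
    have ha : x/h ≤ (i.val:ℝ)+2 := by rw [div_le_iff₀ hpos]; linarith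
    have hb : (i.val:ℝ)+1 ≤ x/h := by rw [le_div_iff₀ hpos]; linarith
    rw [abs_of_nonneg (by linarith), max_eq_right (by linarith)]
    ring
  have hii : ∀ (i i' : Fin n) (a b : ℝ),
      IntervalIntegrable (fun x => φ i x * φ i' x) volume a b :=
    fun i i' a b => ((hcont i).mul (hcont i')).intervalIntegrable a b
  have toII : ∀ (i i' : Fin n), (∫ x in Set.Icc (0:ℝ) 1, φ i x * φ i' x)
      = ∫ x in (0:ℝ)..1, φ i x * φ i' x := by
    intro i i'
    rw [MeasureTheory.integral_Icc_eq_integral_Ioc,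
      intervalIntegral.integral_of_le (by norm_num : (0:ℝ) ≤ 1)]
  have zero_piece : ∀ (i i' : Fin n) (a b : ℝ), a ≤ b →
      (∀ x, a ≤ x → x ≤ b → φ i x * φ i' x = 0) →
      (∫ x in a..b, φ i x * φ i' x) = 0 := by
    intro i i' a b hab hz
    rw [intervalIntegral.integral_congr (g := fun _ => (0:ℝ))
      (fun x hx => by
        rw [Set.uIcc_of_le hab] at hx
        exact hz x hx.1 hx.2)]
    simp
  have keydiag : ∀ i : Fin n, (∫ x in Set.Icc (0:ℝ) 1, φ i x * φ i x) = 2*h/3 := by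
    intro i
    rw [toII]
    have h01 : (0:ℝ) ≤ (i.val:ℝ)*h := by positivity
    have hableft : (i.val:ℝ)*h ≤ ((i.val:ℝ)+1)*h := by nlinarith
    have habmid : ((i.val:ℝ)+1)*h ≤ ((i.val:ℝ)+2)*h := by nlinarith
    have habright : ((i.val:ℝ)+2)*h ≤ 1 := hub i
    rw [← intervalIntegral.integral_add_adjacent_intervals (hii i i 0 ((i.val:ℝ)*h)) (hii i i ((i.val:ℝ)*h) 1),
      ← intervalIntegral.integral_add_adjacent_intervals (hii i i ((i.val:ℝ)*h) (((i.val:ℝ)+1)*h)) (hii i i (((i.val:ℝ)+1)*h) 1),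
      ← intervalIntegral.integral_add_adjacent_intervals (hii i i (((i.val:ℝ)+1)*h) (((i.val:ℝ)+2)*h)) (hii i i (((i.val:ℝ)+2)*h) 1)]
    rw [zero_piece i i 0 ((i.val:ℝ)*h) h01
      (fun x _ hxb => by rw [phi_zero i x (Or.inl hxb), zero_mul])]
    rw [zero_piece i i (((i.val:ℝ)+2)*h) 1 habright
      (fun x hxa _ => by rw [phi_zero i x (Or.inr hxa), zero_mul])]
    have mid1 : (∫ x in ((i.val:ℝ)*h)..(((i.val:ℝ)+1)*h), φ i x * φ i x) = h/3 := by
      rw [intervalIntegral.integral_congr (g := fun x => ((x - (i.val:ℝ)*h)/h)^2)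
        (fun x hx => by
          rw [Set.uIcc_of_le hableft] at hx
          rw [phi_left i x hx.1 hx.2]
          field_simp)]
      rw [intervalIntegral.integral_comp_sub_right (fun y => (y/h)^2) ((i.val:ℝ)*h)]
      rw [show (i.val:ℝ)*h - (i.val:ℝ)*h = (0:ℝ) by ring,
        show ((i.val:ℝ)+1)*h - (i.val:ℝ)*h = h by ring]
      simp only [div_pow]
      rw [intervalIntegral.integral_div, integral_pow]
      field_simp
      ring
    have mid2 : (∫ x in (((i.val:ℝ)+1)*h)..(((i.val:ℝ)+2)*h), φ i x * φ i x) = h/3 := by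
      rw [intervalIntegral.integral_congr (g := fun x => ((((i.val:ℝ)+2)*h - x)/h)^2)
        (fun x hx => by
          rw [Set.uIcc_of_le habmid] at hx
          rw [phi_right i x hx.1 hx.2]
          field_simp)]
      rw [intervalIntegral.integral_comp_sub_left (fun y => (y/h)^2) (((i.val:ℝ)+2)*h)]
      rw [show ((i.val:ℝ)+2)*h - ((i.val:ℝ)+2)*h = (0:ℝ) by ring,
        show ((i.val:ℝ)+2)*h - ((i.val:ℝ)+1)*h = h by ring]
      simp only [div_pow]
      rw [intervalIntegral.integral_div, integral_pow]
      field_simp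
      ring
    rw [mid1, mid2]
    ring
  have keyadj : ∀ (p q : Fin n), q.val = p.val + 1 →
      (∫ x in Set.Icc (0:ℝ) 1, φ p x * φ q x) = h/6 := by
    intro p q hpq
    have hcast : (q.val:ℝ) = (p.val:ℝ) + 1 := by exact_mod_cast hpq
    rw [toII]
    have h0b : (0:ℝ) ≤ ((p.val:ℝ)+1)*h := by positivity
    have habm : ((p.val:ℝ)+1)*h ≤ ((p.val:ℝ)+2)*h := by nlinarith
    have habr : ((p.val:ℝ)+2)*h ≤ 1 := hub p
    rw [← intervalIntegral.integral_add_adjacent_intervals (hii p q 0 (((p.val:ℝ)+1)*h)) (hii p q (((p.val:ℝ)+1)*h) 1),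
      ← intervalIntegral.integral_add_adjacent_intervals (hii p q (((p.val:ℝ)+1)*h) (((p.val:ℝ)+2)*h)) (hii p q (((p.val:ℝ)+2)*h) 1)]
    rw [zero_piece p q 0 (((p.val:ℝ)+1)*h) h0b
      (fun x _ hxb => by
        rw [phi_zero q x (Or.inl (by rw [hcast]; exact hxb)), mul_zero])]
    rw [zero_piece p q (((p.val:ℝ)+2)*h) 1 habr
      (fun x hxa _ => by rw [phi_zero p x (Or.inr hxa), zero_mul])]
    have mid : (∫ x in (((p.val:ℝ)+1)*h)..(((p.val:ℝ)+2)*h), φ p x * φ q x) = h/6 := by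
      rw [intervalIntegral.integral_congr
        (g := fun x => ((h - (x - ((p.val:ℝ)+1)*h)) * (x - ((p.val:ℝ)+1)*h))/h^2)
        (fun x hx => by
          rw [Set.uIcc_of_le habm] at hx
          rw [phi_right p x hx.1 hx.2, phi_left q x (by rw [hcast]; linarith [hx.1])
            (by rw [hcast]; linarith [hx.2]), hcast]
          field_simp
          ring)]
      rw [intervalIntegral.integral_comp_sub_right (fun u => ((h - u) * u)/h^2) (((p.val:ℝ)+1)*h)]
      rw [show ((p.val:ℝ)+1)*h - ((p.val:ℝ)+1)*h = (0:ℝ) by ring,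
        show ((p.val:ℝ)+2)*h - ((p.val:ℝ)+1)*h = h by ring]
      rw [intervalIntegral.integral_div]
      rw [intervalIntegral.integral_congr (g := fun u => h * u - u^2) (fun u _ => by ring)]
      rw [intervalIntegral.integral_sub (f := fun u : ℝ => h*u) (g := fun u : ℝ => u^2)
        (by exact (continuous_const.mul continuous_id).intervalIntegrable _ _)
        (by exact (continuous_pow 2).intervalIntegrable _ _)]
      rw [intervalIntegral.integral_const_mul, integral_id, integral_pow]
      field_simp
      ring
    rw [mid]
    ring
  intro i i'
  by_cases hd : i.val = i'.val
  · rw [if_pos hd, show i' = i from Fin.ext hd.symm]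
    exact keydiag i
  · rw [if_neg hd]
    by_cases hadj : i.val + 1 = i'.val ∨ i'.val + 1 = i.val
    · rw [if_pos hadj]
      rcases hadj with hl | hr
      · exact keyadj i i' hl.symm
      · rw [show (fun x => φ i x * φ i' x) = fun x => φ i' x * φ i x from funext fun x => mul_comm _ _]
        exact keyadj i' i hr.symm
    · rw [if_neg hadj]
      have hsep : i'.val ≥ i.val + 2 ∨ i.val ≥ i'.val + 2 := by omega
      have key0 : ∀ (p q : Fin n) (x : ℝ), q.val ≥ p.val + 2 → φ p x * φ q x = 0 := by
        intro p q x hpq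
        have hcast : ((p.val:ℝ)+2) ≤ (q.val:ℝ) := by exact_mod_cast hpq
        by_cases hx : x ≤ (q.val:ℝ)*h
        · rw [phi_zero q x (Or.inl hx), mul_zero]
        · push_neg at hx
          have : ((p.val:ℝ)+2)*h ≤ (q.val:ℝ)*h := by nlinarith
          rw [phi_zero p x (Or.inr (by linarith)), zero_mul]
      have hzero : ∀ x, φ i x * φ i' x = 0 := by
        intro x
        rcases hsep with hl | hr
        · exact key0 i i' x hl
        · rw [mul_comm]; exact key0 i' i x hr
      simp only [hzero, MeasureTheory.integral_zero]

open MeasureTheory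

theorem fub3 (F G K : ℝ → ℝ) (S : Set ℝ) :
    (∫ p in S ×ˢ S ×ˢ S, F p.1 * (G p.2.1 * K p.2.2)) =
    (∫ x in S, F x) * ((∫ x in S, G x) * (∫ x in S, K x)) := by
  have hmeas : (volume.restrict S).prod ((volume.restrict S).prod (volume.restrict S))
      = (volume : Measure (ℝ×ℝ×ℝ)).restrict (S ×ˢ S ×ˢ S) := by
    rw [Measure.prod_restrict, ← MeasureTheory.Measure.volume_eq_prod,
      Measure.prod_restrict, ← MeasureTheory.Measure.volume_eq_prod]
  rw [← hmeas, MeasureTheory.integral_prod_mul F (fun q : ℝ × ℝ => G q.1 * K q.2),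
    MeasureTheory.integral_prod_mul G K]


theorem quad_bounds (n : ℕ) (hn : 1 ≤ n) (h : ℝ) (hh : h = 1 / ((n : ℝ) + 1))
    (M P : Matrix (Fin n) (Fin n) ℝ)
    (hMent : ∀ i i' : Fin n, M i i' = if i.val = i'.val then 2*h/3
      else if i.val + 1 = i'.val ∨ i'.val + 1 = i.val then h/6 else 0)
    (hPent : ∀ i i' : Fin n, P i i' = if i.val = i'.val then 2/h
      else if i.val + 1 = i'.val ∨ i'.val + 1 = i.val then -(1/h) else 0)
    (v : Fin n → ℝ) :
    ((h/3) * (v ⬝ᵥ v) ≤ v ⬝ᵥ M.mulVec v ∧ v ⬝ᵥ M.mulVec v ≤ h * (v ⬝ᵥ v)) ∧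
    ((4*h) * (v ⬝ᵥ v) ≤ v ⬝ᵥ P.mulVec v ∧ v ⬝ᵥ P.mulVec v ≤ (4/h) * (v ⬝ᵥ v)) := by
  have hm0 : (0:ℝ) < (n : ℝ) + 1 := by positivity
  have hpos : 0 < h := by rw [hh]; positivity
  set V : ℕ → ℝ := fun k => if hk : 1 ≤ k ∧ k ≤ n then v ⟨k-1, by omega⟩ else 0 with hV
  have hV0 : V 0 = 0 := by simp [hV]
  have hVtop : ∀ k, n + 1 ≤ k → V k = 0 := by
    intro k hk; simp only [hV]; rw [dif_neg (by omega)]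
  have hVi : ∀ i : Fin n, V (i.val + 1) = v i := by
    intro i
    simp only [hV]
    rw [dif_pos ⟨by omega, by omega⟩]
    congr 1
  set S : ℝ := v ⬝ᵥ v with hSdef
  have hSv : S = ∑ i : Fin n, v i ^ 2 := by
    simp [hSdef, dotProduct, sq]
  have hSnn : 0 ≤ S := by rw [hSv]; positivity
  set Q : ℝ := ∑ k ∈ range (n+1), V k * V (k+1) with hQ
  have key : ∑ k ∈ range n, V (k+1) ^ 2 = S := by
    rw [hSv, ← Fin.sum_univ_eq_sum_range (fun k => V (k+1)^2) n]
    exact Finset.sum_congr rfl (fun i _ => by rw [hVi])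
  have sumsq1 : ∑ k ∈ range (n+1), V k ^ 2 = S := by
    rw [Finset.sum_range_succ' (fun k => V k ^ 2) n, key, hV0]
    ring
  have sumsq2 : ∑ k ∈ range (n+1), V (k+1) ^ 2 = S := by
    rw [Finset.sum_range_succ (fun k => V (k+1) ^ 2) n, key, hVtop (n+1) le_rfl]
    ring
  have hQ1 : ∑ i : Fin n, v i * V i.val = Q := by
    rw [hQ, Finset.sum_range_succ (fun k => V k * V (k+1)) n, hVtop (n+1) le_rfl,
      ← Fin.sum_univ_eq_sum_range (fun k => V k * V (k+1)) n]
    rw [mul_zero, add_zero]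
    exact Finset.sum_congr rfl (fun i _ => by rw [hVi]; ring)
  have hQ2 : ∑ i : Fin n, v i * V (i.val + 2) = Q := by
    rw [hQ, Finset.sum_range_succ' (fun k => V k * V (k+1)) n, hV0,
      ← Fin.sum_univ_eq_sum_range (fun k => V (k+1) * V (k+2)) n]
    rw [zero_mul, add_zero]
    exact Finset.sum_congr rfl (fun i _ => by rw [hVi])
  have hQle : Q ≤ S := by
    have hthis : ∀ k ∈ range (n+1), V k * V (k+1) ≤ (V k ^ 2 + V (k+1) ^ 2) / 2 := by
      intro k _; nlinarith [sq_nonneg (V k - V (k+1))]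
    calc Q ≤ ∑ k ∈ range (n+1), (V k ^ 2 + V (k+1) ^ 2) / 2 := Finset.sum_le_sum hthis
      _ = ((∑ k ∈ range (n+1), V k ^ 2) + ∑ k ∈ range (n+1), V (k+1) ^ 2) / 2 := by
          rw [← Finset.sum_add_distrib, ← Finset.sum_div]
      _ = S := by rw [sumsq1, sumsq2]; ring
  have hQge : -S ≤ Q := by
    have hthis : ∀ k ∈ range (n+1), -((V k ^ 2 + V (k+1) ^ 2) / 2) ≤ V k * V (k+1) := by
      intro k _; nlinarith [sq_nonneg (V k + V (k+1))]
    have h2 : -(((∑ k ∈ range (n+1), V k ^ 2) + ∑ k ∈ range (n+1), V (k+1) ^ 2) / 2) ≤ Q := by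
      calc -(((∑ k ∈ range (n+1), V k ^ 2) + ∑ k ∈ range (n+1), V (k+1) ^ 2) / 2)
          = ∑ k ∈ range (n+1), -((V k ^ 2 + V (k+1) ^ 2) / 2) := by
            rw [Finset.sum_neg_distrib, ← Finset.sum_add_distrib, ← Finset.sum_div]
        _ ≤ Q := Finset.sum_le_sum hthis
    rw [sumsq1, sumsq2] at h2
    linarith
  have hsumA : ∀ t : ℕ, (∑ j : Fin n, if j.val + 1 = t then v j else 0) = V t := by
    intro t
    match t with
    | 0 =>
      rw [hV0]
      exact Finset.sum_eq_zero (fun j _ => by rw [if_neg (by omega)])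
    | Nat.succ s =>
      by_cases hs : s < n
      · rw [Finset.sum_eq_single_of_mem ⟨s, hs⟩ (Finset.mem_univ _)
          (fun j _ hj => if_neg (fun hc => hj (Fin.ext (show (j : ℕ) = s by omega))))]
        · rw [if_pos rfl]; exact (hVi ⟨s, hs⟩).symm
      · rw [hVtop (s+1) (by omega)]
        exact Finset.sum_eq_zero (fun j _ => by rw [if_neg (by omega)])
  have hsumB : ∀ t : ℕ, (∑ j : Fin n, if t + 1 = j.val then v j else 0) = V (t + 2) := by
    intro t
    by_cases hs : t + 1 < n
    · rw [Finset.sum_eq_single_of_mem ⟨t+1, hs⟩ (Finset.mem_univ _)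
        (fun j _ hj => if_neg (fun hc => hj (Fin.ext (show (j : ℕ) = t + 1 by omega))))]
      · rw [if_pos rfl]
        exact (hVi ⟨t+1, hs⟩).symm
    · rw [hVtop (t+2) (by omega)]
      exact Finset.sum_eq_zero (fun j _ => by rw [if_neg (by omega)])
  have entgen : ∀ (a b : ℝ) (A : Matrix (Fin n) (Fin n) ℝ),
      (∀ i i' : Fin n, A i i' = if i.val = i'.val then a
        else if i.val + 1 = i'.val ∨ i'.val + 1 = i.val then b else 0) →
      ∀ i, A.mulVec v i = a * v i + b * (V i.val + V (i.val + 2)) := by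
    intro a b A hA i
    have ent : ∀ j : Fin n, A i j * v j =
        a * (if j = i then v j else 0)
        + b * ((if j.val + 1 = i.val then v j else 0) + (if i.val + 1 = j.val then v j else 0)) := by
      intro j
      rw [hA i j]
      by_cases h1 : i.val = j.val
      · have hji : j = i := Fin.ext h1.symm
        subst hji
        simp
      · have hne : ¬ (j = i) := fun e => h1 (by rw [e])
        by_cases h2 : j.val + 1 = i.val
        · rw [if_neg h1, if_pos (Or.inr h2), if_neg hne, if_pos h2, if_neg (by omega)]
          ring
        · by_cases h3 : i.val + 1 = j.val
          · rw [if_neg h1, if_pos (Or.inl h3), if_neg hne, if_neg h2, if_pos h3]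
            ring
          · rw [if_neg h1, if_neg (by tauto), if_neg hne, if_neg h2, if_neg h3]
            ring
    unfold Matrix.mulVec dotProduct
    rw [Finset.sum_congr rfl (fun j _ => ent j), Finset.sum_add_distrib,
      ← Finset.mul_sum, ← Finset.mul_sum, Finset.sum_add_distrib,
      Finset.sum_ite_eq' Finset.univ i v, if_pos (Finset.mem_univ i), hsumA, hsumB]
  have quadgen : ∀ (a b : ℝ) (A : Matrix (Fin n) (Fin n) ℝ),
      (∀ i, A.mulVec v i = a * v i + b * (V i.val + V (i.val + 2))) →
      v ⬝ᵥ A.mulVec v = a * S + b * (2*Q) := by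
    intro a b A hA
    unfold dotProduct
    rw [Finset.sum_congr rfl (fun i _ => by rw [hA i])]
    have expand : ∀ i : Fin n, v i * (a * v i + b * (V i.val + V (i.val + 2)))
        = a * v i ^ 2 + b * (v i * V i.val) + b * (v i * V (i.val + 2)) := by
      intro i; ring
    rw [Finset.sum_congr rfl (fun i _ => expand i)]
    rw [Finset.sum_add_distrib, Finset.sum_add_distrib, ← Finset.mul_sum, ← Finset.mul_sum,
      ← Finset.mul_sum, hQ1, hQ2, ← hSv]
    ring
  have hQM : v ⬝ᵥ M.mulVec v = (2*h/3) * S + (h/6) * (2*Q) :=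
    quadgen (2*h/3) (h/6) M (entgen (2*h/3) (h/6) M hMent)
  have hQP : v ⬝ᵥ P.mulVec v = (2/h) * S + (-(1/h)) * (2*Q) :=
    quadgen (2/h) (-(1/h)) P (entgen (2/h) (-(1/h)) P hPent)
  -- Wirtinger's inequality
  set m := n + 1 with hm
  set d : ℕ → ℝ := fun j => V (j+1) - V j with hd
  set D : ℝ := ∑ j ∈ range m, d j ^ 2 with hD
  have hDnn : 0 ≤ D := by rw [hD]; positivity
  have hDsum : D = 2*S - 2*Q := by
    have e : ∀ k ∈ range m, d k ^ 2 = V (k+1)^2 + V k^2 - 2*(V k * V (k+1)) :=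
      fun k _ => by simp only [hd]; ring
    rw [hD, Finset.sum_congr rfl e, Finset.sum_sub_distrib, Finset.sum_add_distrib,
      ← Finset.mul_sum, hm, sumsq1, sumsq2, ← hQ]
    ring
  have htele : ∀ k, ∑ j ∈ range k, d j = V k := by
    intro k
    rw [hd, Finset.sum_range_sub V k, hV0, sub_zero]
  clear_value V S Q d D
  have hper : ∀ i : Fin n, ((m:ℕ):ℝ) * V (i.val+1)^2 ≤ (((m:ℕ):ℝ)^2/4) * D := by
    intro i
    set k := i.val + 1 with hk
    have hkn : k ≤ n := by omega
    have hkm : k ≤ m := by omega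
    have hA : V k ^ 2 ≤ (k:ℝ) * ∑ j ∈ range k, d j ^ 2 := by
      have hcs := sq_sum_le_card_mul_sum_sq (s := range k) (f := d)
      rw [htele k, Finset.card_range] at hcs
      exact hcs
    have hsplit : ∑ j ∈ range k, d j + ∑ j ∈ Ico k m, d j = ∑ j ∈ range m, d j := by
      simp only [Finset.range_eq_Ico]
      exact Finset.sum_Ico_consecutive _ (Nat.zero_le k) hkm
    have htot : ∑ j ∈ range m, d j = 0 := by
      rw [htele m]
      exact hVtop m le_rfl
    have hIco : ∑ j ∈ Ico k m, d j = -V k := by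
      have hx := htele k
      linarith only [hsplit, htot, hx]
    have hB : V k ^ 2 ≤ ((m:ℝ) - (k:ℝ)) * ∑ j ∈ Ico k m, d j ^ 2 := by
      have hcs := sq_sum_le_card_mul_sum_sq (s := Ico k m) (f := d)
      rw [hIco, Nat.card_Ico, neg_pow, Nat.cast_sub hkm] at hcs
      simpa using hcs
    have hABsplit : (∑ j ∈ range k, d j ^ 2) + ∑ j ∈ Ico k m, d j ^ 2 = D := by
      rw [hD]; simp only [Finset.range_eq_Ico]
      exact Finset.sum_Ico_consecutive _ (Nat.zero_le k) hkm
    have hAnn : 0 ≤ ∑ j ∈ range k, d j ^ 2 := by positivity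
    have hBnn : 0 ≤ ∑ j ∈ Ico k m, d j ^ 2 := by positivity
    have hkm' : (k:ℝ) ≤ (m:ℝ) := by exact_mod_cast hkm
    have c1 : ((m:ℝ) - (k:ℝ)) * (V k ^ 2) ≤ ((m:ℝ) - (k:ℝ)) * ((k:ℝ) * ∑ j ∈ range k, d j ^ 2) :=
      mul_le_mul_of_nonneg_left hA (by linarith)
    have c2 : (k:ℝ) * (V k ^ 2) ≤ (k:ℝ) * (((m:ℝ) - (k:ℝ)) * ∑ j ∈ Ico k m, d j ^ 2) :=
      mul_le_mul_of_nonneg_left hB (by positivity)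
    have c3 : ((m:ℕ):ℝ) * V k ^ 2 ≤ (k:ℝ) * ((m:ℝ) - (k:ℝ)) * D := by
      rw [← hABsplit]
      linarith only [c1, c2]
    have c4 : (k:ℝ) * ((m:ℝ) - (k:ℝ)) ≤ ((m:ℕ):ℝ)^2/4 := by
      have hsq := sq_nonneg ((m:ℝ) - 2*(k:ℝ))
      linarith only [hsq]
    have c5 : (k:ℝ) * ((m:ℝ) - (k:ℝ)) * D ≤ ((m:ℕ):ℝ)^2/4 * D :=
      mul_le_mul_of_nonneg_right c4 hDnn
    linarith only [c3, c5]
  have hWirt : S ≤ (((m:ℕ):ℝ)^2/4) * D := by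
    have hsum := Finset.sum_le_sum (fun i (_ : i ∈ Finset.univ) => hper i)
    have hlhs : ∑ i : Fin n, ((m:ℕ):ℝ) * V (i.val+1)^2 = ((m:ℕ):ℝ) * S := by
      rw [← Finset.mul_sum]
      congr 1
      rw [hSv]
      exact Finset.sum_congr rfl (fun i _ => by rw [hVi])
    have hrhs : ∑ _i : Fin n, (((m:ℕ):ℝ)^2/4) * D = (n:ℝ) * ((((m:ℕ):ℝ)^2/4) * D) := by
      rw [Finset.sum_const, Finset.card_univ, Fintype.card_fin, nsmul_eq_mul]
    rw [hlhs, hrhs] at hsum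
    have hnm : (n:ℝ) ≤ ((m:ℕ):ℝ) := by exact_mod_cast (by omega : n ≤ m)
    have hmpos : (0:ℝ) < ((m:ℕ):ℝ) := by exact_mod_cast (by omega : 0 < m)
    have h2 : (n:ℝ) * ((((m:ℕ):ℝ)^2/4) * D) ≤ ((m:ℕ):ℝ) * ((((m:ℕ):ℝ)^2/4) * D) := by
      apply mul_le_mul_of_nonneg_right hnm
      positivity
    have h3 : ((m:ℕ):ℝ) * S ≤ ((m:ℕ):ℝ) * ((((m:ℕ):ℝ)^2/4) * D) := le_trans hsum h2
    exact le_of_mul_le_mul_left h3 hmpos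
  have hmcast : ((m:ℕ):ℝ) = (n:ℝ) + 1 := by rw [hm]; push_cast; ring
  have hhm : h * ((n:ℝ)+1) = 1 := by rw [hh]; field_simp
  have hDge : 4 * h^2 * S ≤ D := by
    have h4 : 4 * h^2 * S ≤ 4 * h^2 * ((((n:ℝ)+1)^2/4) * D) := by
      apply mul_le_mul_of_nonneg_left _ (by positivity)
      rw [← hmcast]
      exact hWirt
    calc 4 * h^2 * S ≤ 4 * h^2 * ((((n:ℝ)+1)^2/4) * D) := h4
      _ = (h * ((n:ℝ)+1))^2 * D := by ring
      _ = D := by rw [hhm]; ring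
  refine ⟨⟨?_, ?_⟩, ?_, ?_⟩
  · rw [hQM]
    have hx := mul_nonneg hpos.le (show (0:ℝ) ≤ S + Q by linarith only [hQge])
    linarith only [hx]
  · rw [hQM]
    have hx := mul_nonneg hpos.le (show (0:ℝ) ≤ S - Q by linarith only [hQle])
    linarith only [hx]
  · rw [hQP]
    have e1 : (2/h) * S + (-(1/h)) * (2*Q) = (1/h) * D := by rw [hDsum]; ring
    rw [e1]
    have e2 : (1/h) * (4*h^2*S) ≤ (1/h) * D := mul_le_mul_of_nonneg_left hDge (by positivity)
    have e3 : (4*h) * S = (1/h) * (4*h^2*S) := by field_simp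
    linarith only [e2, e3]
  · rw [hQP]
    have e1 : (2/h) * S + (-(1/h)) * (2*Q) = (1/h) * (2*S - 2*Q) := by ring
    rw [e1]
    have e2 : (1/h) * (2*S - 2*Q) ≤ (1/h) * (4*S) := by
      apply mul_le_mul_of_nonneg_left _ (by positivity)
      linarith
    have e3 : (1/h) * (4*S) = (4/h) * S := by ring
    linarith only [e2, e3]

end AuxLemmas


open Matrix
open Kronecker

/-- **3D FEM Laplacian as a sum of Kronecker products.** With `n ≥ 1`, `h = 1/(n+1)`,
1D hat functions `φ_i` with a.e.-derivatives `g_i`, 1D mass matrix `M` and 1D Laplacian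
matrix `P`, the 3D Laplacian matrix
`P⁽³⁾_{(i,j,k),(i',j',k')} = ∫_{[0,1]³} ∇φ_{ijk} · ∇φ_{i'j'k'}` satisfies
`P⁽³⁾ = P ⊗ M ⊗ M + M ⊗ P ⊗ M + M ⊗ M ⊗ P` (stated entrywise under the identification
of `{1,…,n}³` with the index set).  Consequently every eigenvalue `λ` of `P⁽³⁾`
satisfies `(4/3)h³ ≤ λ ≤ 12h`, so the condition number of `P⁽³⁾` is at most `9/h²`. -/
theorem stmt3 (n : ℕ) (hn : 1 ≤ n) (h : ℝ) (hh : h = 1 / ((n : ℝ) + 1))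
    (φ g : Fin n → ℝ → ℝ)
    (hφ : ∀ (i : Fin n) (x : ℝ), φ i x = max 0 (1 - |x / h - ((i.val : ℝ) + 1)|))
    (hg : ∀ (i : Fin n) (x : ℝ),
      g i x = if (i.val : ℝ) * h < x ∧ x < ((i.val : ℝ) + 1) * h then 1 / h
        else if ((i.val : ℝ) + 1) * h < x ∧ x < ((i.val : ℝ) + 2) * h then -(1 / h)
        else 0)
    (M P : Matrix (Fin n) (Fin n) ℝ)
    (hM : ∀ i i', M i i' = ∫ x in Set.Icc (0:ℝ) 1, φ i x * φ i' x)
    (hP : ∀ i i', P i i' = ∫ x in Set.Icc (0:ℝ) 1, g i x * g i' x)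
    (P3 : Matrix (Fin n × Fin n × Fin n) (Fin n × Fin n × Fin n) ℝ)
    (hP3 : ∀ i j k i' j' k', P3 (i, j, k) (i', j', k') =
      ∫ p in (Set.Icc (0:ℝ) 1) ×ˢ (Set.Icc (0:ℝ) 1) ×ˢ (Set.Icc (0:ℝ) 1),
        (g i p.1 * φ j p.2.1 * φ k p.2.2) * (g i' p.1 * φ j' p.2.1 * φ k' p.2.2)
        + (φ i p.1 * g j p.2.1 * φ k p.2.2) * (φ i' p.1 * g j' p.2.1 * φ k' p.2.2)
        + (φ i p.1 * φ j p.2.1 * g k p.2.2) * (φ i' p.1 * φ j' p.2.1 * g k' p.2.2)) :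
    (∀ i j k i' j' k', P3 (i, j, k) (i', j', k') =
      P i i' * M j j' * M k k' + M i i' * P j j' * M k k' + M i i' * M j j' * P k k') ∧
    (∀ (lam : ℝ) (v : Fin n × Fin n × Fin n → ℝ), v ≠ 0 → P3.mulVec v = lam • v →
      (4 / 3) * h ^ 3 ≤ lam ∧ lam ≤ 12 * h) ∧
    (∀ (lam mu : ℝ) (v w : Fin n × Fin n × Fin n → ℝ), v ≠ 0 → w ≠ 0 →
      P3.mulVec v = lam • v → P3.mulVec w = mu • w → lam ≤ (9 / h ^ 2) * mu) := by
  have hm0 : (0:ℝ) < (n : ℝ) + 1 := by positivity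
  have hpos : 0 < h := by rw [hh]; positivity
  have hub : ∀ i : Fin n, ((i.val : ℝ) + 2) * h ≤ 1 := by
    intro i
    have h2 : (i.val + 2 : ℕ) ≤ n + 1 := by omega
    have hiv : (i.val : ℝ) + 2 ≤ (n : ℝ) + 1 := by exact_mod_cast h2
    rw [hh, mul_one_div, div_le_one hm0]
    exact hiv
  have hMent : ∀ i i' : Fin n, M i i' = if i.val = i'.val then 2*h/3
      else if i.val + 1 = i'.val ∨ i'.val + 1 = i.val then h/6 else 0 := by
    intro i i'
    rw [hM i i']
    exact M_entries n h hpos hub φ hφ i i'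
  have hPent : ∀ i i' : Fin n, P i i' = if i.val = i'.val then 2/h
      else if i.val + 1 = i'.val ∨ i'.val + 1 = i.val then -(1/h) else 0 := by
    intro i i'
    rw [hP i i']
    exact P_entries n h hpos hub g hg i i'
  -- integrability of 1D products
  have hcont : ∀ i : Fin n, Continuous (φ i) := by
    intro i
    rw [show φ i = fun x => max 0 (1 - |x / h - ((i.val : ℝ) + 1)|) from funext (hφ i)]
    fun_prop
  have φInt : ∀ a b : Fin n,
      Integrable (fun x => φ a x * φ b x) (volume.restrict (Set.Icc (0:ℝ) 1)) :=
    fun a b => ((hcont a).mul (hcont b)).integrableOn_Icc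
  have g_rep : ∀ (i : Fin n), g i = fun x =>
      (Set.Ioo ((i.val:ℝ)*h) (((i.val:ℝ)+1)*h)).indicator (fun _ => 1/h) x
      + (Set.Ioo (((i.val:ℝ)+1)*h) (((i.val:ℝ)+2)*h)).indicator (fun _ => -(1/h)) x := by
    intro i
    funext x
    rw [hg i x]
    by_cases hc1 : (i.val:ℝ)*h < x ∧ x < ((i.val:ℝ)+1)*h
    · rw [if_pos hc1, Set.indicator_of_mem (Set.mem_Ioo.mpr hc1),
        Set.indicator_of_notMem (by rw [Set.mem_Ioo]; rintro ⟨hA,_⟩; linarith [hc1.2]), add_zero]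
    · rw [if_neg hc1, Set.indicator_of_notMem (fun hm => hc1 (Set.mem_Ioo.mp hm)), zero_add]
      by_cases hc2 : ((i.val:ℝ)+1)*h < x ∧ x < ((i.val:ℝ)+2)*h
      · rw [if_pos hc2, Set.indicator_of_mem (Set.mem_Ioo.mpr hc2)]
      · rw [if_neg hc2, Set.indicator_of_notMem (fun hm => hc2 (Set.mem_Ioo.mp hm))]
  have gInt : ∀ i : Fin n, Integrable (g i) (volume.restrict (Set.Icc (0:ℝ) 1)) := by
    intro i
    rw [g_rep i]
    exact (ind_integrable _ _ _).add (ind_integrable _ _ _)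
  have gMeas : ∀ i : Fin n, AEStronglyMeasurable (g i) (volume.restrict (Set.Icc (0:ℝ) 1)) := by
    intro i
    rw [g_rep i]
    exact ((measurable_const.indicator measurableSet_Ioo).add
      (measurable_const.indicator measurableSet_Ioo)).aestronglyMeasurable
  have gBdd : ∀ i : Fin n, ∃ C, ∀ x, ‖g i x‖ ≤ C := by
    intro i
    refine ⟨1/h, fun x => ?_⟩
    rw [hg i x, Real.norm_eq_abs]
    have h1 : (0:ℝ) ≤ 1/h := by positivity
    split_ifs
    · rw [abs_of_nonneg h1]
    · rw [abs_neg, abs_of_nonneg h1]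
    · rw [abs_zero]; exact h1
  have ggInt : ∀ a b : Fin n,
      Integrable (fun x => g a x * g b x) (volume.restrict (Set.Icc (0:ℝ) 1)) :=
    fun a b => (gBdd a).elim fun C hC => (gInt b).bdd_mul (gMeas a) (ae_of_all _ hC)
  have hmeasT : (volume.restrict (Set.Icc (0:ℝ) 1)).prod
      ((volume.restrict (Set.Icc (0:ℝ) 1)).prod (volume.restrict (Set.Icc (0:ℝ) 1)))
      = (volume : Measure (ℝ×ℝ×ℝ)).restrict
        ((Set.Icc (0:ℝ) 1) ×ˢ (Set.Icc (0:ℝ) 1) ×ˢ (Set.Icc (0:ℝ) 1)) := by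
    rw [Measure.prod_restrict, ← MeasureTheory.Measure.volume_eq_prod,
      Measure.prod_restrict, ← MeasureTheory.Measure.volume_eq_prod]
  have int3 : ∀ (F G K : ℝ → ℝ), Integrable F (volume.restrict (Set.Icc (0:ℝ) 1)) →
      Integrable G (volume.restrict (Set.Icc (0:ℝ) 1)) →
      Integrable K (volume.restrict (Set.Icc (0:ℝ) 1)) →
      Integrable (fun p : ℝ×ℝ×ℝ => F p.1 * (G p.2.1 * K p.2.2))
        ((volume : Measure (ℝ×ℝ×ℝ)).restrict
          ((Set.Icc (0:ℝ) 1) ×ˢ (Set.Icc (0:ℝ) 1) ×ˢ (Set.Icc (0:ℝ) 1))) := by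
    intro F G K hF hG hK
    rw [← hmeasT]
    exact hF.mul_prod (hG.mul_prod hK)
  have part1 : ∀ i j k i' j' k', P3 (i, j, k) (i', j', k') =
      P i i' * M j j' * M k k' + M i i' * P j j' * M k k' + M i i' * M j j' * P k k' := by
    intro i j k i' j' k'
    rw [hP3 i j k i' j' k']
    have hpt : (fun p : ℝ×ℝ×ℝ =>
        (g i p.1 * φ j p.2.1 * φ k p.2.2) * (g i' p.1 * φ j' p.2.1 * φ k' p.2.2)
        + (φ i p.1 * g j p.2.1 * φ k p.2.2) * (φ i' p.1 * g j' p.2.1 * φ k' p.2.2)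
        + (φ i p.1 * φ j p.2.1 * g k p.2.2) * (φ i' p.1 * φ j' p.2.1 * g k' p.2.2))
        = fun p : ℝ×ℝ×ℝ =>
        ((fun x => g i x * g i' x) p.1 * ((fun y => φ j y * φ j' y) p.2.1 * ((fun z => φ k z * φ k' z) p.2.2))
        + ((fun x => φ i x * φ i' x) p.1 * ((fun y => g j y * g j' y) p.2.1 * ((fun z => φ k z * φ k' z) p.2.2))
        + (fun x => φ i x * φ i' x) p.1 * ((fun y => φ j y * φ j' y) p.2.1 * ((fun z => g k z * g k' z) p.2.2)))) := by
      funext p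
      simp only []
      ring
    rw [hpt]
    have I1 := int3 _ _ _ (ggInt i i') (φInt j j') (φInt k k')
    have I2 := int3 _ _ _ (φInt i i') (ggInt j j') (φInt k k')
    have I3 := int3 _ _ _ (φInt i i') (φInt j j') (ggInt k k')
    have I23 : Integrable (fun p : ℝ×ℝ×ℝ =>
        (fun x => φ i x * φ i' x) p.1 * ((fun y => g j y * g j' y) p.2.1 * ((fun z => φ k z * φ k' z) p.2.2))
        + (fun x => φ i x * φ i' x) p.1 * ((fun y => φ j y * φ j' y) p.2.1 * ((fun z => g k z * g k' z) p.2.2)))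
        ((volume : Measure (ℝ×ℝ×ℝ)).restrict
          ((Set.Icc (0:ℝ) 1) ×ˢ (Set.Icc (0:ℝ) 1) ×ˢ (Set.Icc (0:ℝ) 1))) := I2.add I3
    rw [MeasureTheory.integral_add I1 I23, MeasureTheory.integral_add I2 I3]
    rw [fub3 (fun x => g i x * g i' x) (fun y => φ j y * φ j' y) (fun z => φ k z * φ k' z) _,
      fub3 (fun x => φ i x * φ i' x) (fun y => g j y * g j' y) (fun z => φ k z * φ k' z) _,
      fub3 (fun x => φ i x * φ i' x) (fun y => φ j y * φ j' y) (fun z => g k z * g k' z) _]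
    simp only [hM, hP]
    ring
  refine ⟨part1, ?_⟩
  -- matrix identity
  have hP3K : P3 = P ⊗ₖ (M ⊗ₖ M) + M ⊗ₖ (P ⊗ₖ M) + M ⊗ₖ (M ⊗ₖ P) := by
    ext ⟨i, j, k⟩ ⟨i', j', k'⟩
    rw [part1 i j k i' j' k']
    simp only [Matrix.add_apply, Matrix.kroneckerMap_apply]
    ring
  -- symmetry
  have hMsym : M.IsHermitian := by
    apply Matrix.ext
    intro i j
    rw [Matrix.conjTranspose_apply, hM i j, hM j i]
    simp only [star_trivial]
    congr 1
    funext x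
    ring
  have hPsym : P.IsHermitian := by
    apply Matrix.ext
    intro i j
    rw [Matrix.conjTranspose_apply, hP i j, hP j i]
    simp only [star_trivial]
    congr 1
    funext x
    ring
  have qb := quad_bounds n hn h hh M P hMent hPent
  -- PSD shifts
  have psd_lower : ∀ (A : Matrix (Fin n) (Fin n) ℝ) (c : ℝ), A.IsHermitian →
      (∀ x : Fin n → ℝ, c * (x ⬝ᵥ x) ≤ x ⬝ᵥ A.mulVec x) → (A - c • 1).PosSemidef := by
    intro A c hA hform
    refine Matrix.PosSemidef.of_dotProduct_mulVec_nonneg ?_ ?_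
    · apply Matrix.ext
      intro i j
      rw [Matrix.conjTranspose_apply]
      simp only [Matrix.sub_apply, Matrix.smul_apply, Matrix.one_apply, star_trivial]
      have := congrFun (congrFun hA.eq i) j
      rw [Matrix.conjTranspose_apply, star_trivial] at this
      rw [this]
      by_cases hij : i = j
      · subst hij; simp
      · rw [if_neg hij, if_neg (fun e => hij e.symm)]
    · intro x
      rw [star_trivial, Matrix.sub_mulVec, dotProduct_sub, Matrix.smul_mulVec,
        Matrix.one_mulVec, dotProduct_smul, smul_eq_mul]
      linarith [hform x]
  have psd_upper : ∀ (A : Matrix (Fin n) (Fin n) ℝ) (c : ℝ), A.IsHermitian →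
      (∀ x : Fin n → ℝ, x ⬝ᵥ A.mulVec x ≤ c * (x ⬝ᵥ x)) → (c • 1 - A).PosSemidef := by
    intro A c hA hform
    refine Matrix.PosSemidef.of_dotProduct_mulVec_nonneg ?_ ?_
    · apply Matrix.ext
      intro i j
      rw [Matrix.conjTranspose_apply]
      simp only [Matrix.sub_apply, Matrix.smul_apply, Matrix.one_apply, star_trivial]
      have := congrFun (congrFun hA.eq i) j
      rw [Matrix.conjTranspose_apply, star_trivial] at this
      rw [this]
      by_cases hij : i = j
      · subst hij; simp
      · rw [if_neg hij, if_neg (fun e => hij e.symm)]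
    · intro x
      rw [star_trivial, Matrix.sub_mulVec, dotProduct_sub, Matrix.smul_mulVec,
        Matrix.one_mulVec, dotProduct_smul, smul_eq_mul]
      linarith [hform x]
  have Mlow : (M - (h/3) • 1).PosSemidef := psd_lower M (h/3) hMsym (fun x => (qb x).1.1)
  have Mup : (h • (1 : Matrix (Fin n) (Fin n) ℝ) - M).PosSemidef :=
    psd_upper M h hMsym (fun x => (qb x).1.2)
  have Plow : (P - (4*h) • 1).PosSemidef := psd_lower P (4*h) hPsym (fun x => (qb x).2.1)
  have Pup : ((4/h) • (1 : Matrix (Fin n) (Fin n) ℝ) - P).PosSemidef :=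
    psd_upper P (4/h) hPsym (fun x => (qb x).2.2)
  have MPSD : M.PosSemidef := by
    have := Mlow.add (myPSD.smul (h/3) (by positivity) 1 Matrix.PosSemidef.one)
    rwa [sub_add_cancel] at this
  have PPSD : P.PosSemidef := by
    have := Plow.add (myPSD.smul (4*h) (by positivity) 1 Matrix.PosSemidef.one)
    rwa [sub_add_cancel] at this
  have hK := hP3K
  -- lower PSD bound for P3
  have t1 := kron3_lower P M M (4*h) (h/3) (h/3) (by positivity) (by positivity)
    Plow Mlow Mlow MPSD MPSD
  have t2 := kron3_lower M P M (h/3) (4*h) (h/3) (by positivity) (by positivity)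
    Mlow Plow Mlow PPSD MPSD
  have t3 := kron3_lower M M P (h/3) (h/3) (4*h) (by positivity) (by positivity)
    Mlow Mlow Plow MPSD PPSD
  have hidlow : P3 - ((4/3) * h^3) • 1 =
      (P ⊗ₖ (M ⊗ₖ M) - ((4*h) * ((h/3) * (h/3))) • 1)
      + ((M ⊗ₖ (P ⊗ₖ M) - ((h/3) * ((4*h) * (h/3))) • 1)
      + (M ⊗ₖ (M ⊗ₖ P) - ((h/3) * ((h/3) * (4*h))) • 1)) := by
    rw [hP3K]
    have hc : (4/3) * h^3 = (4*h) * ((h/3) * (h/3)) + ((h/3) * ((4*h) * (h/3)) + (h/3) * ((h/3) * (4*h))) := by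
      ring
    rw [hc]
    module
  have Klow : (P3 - ((4/3) * h^3) • 1).PosSemidef := by
    rw [hidlow]
    exact t1.add (t2.add t3)
  -- upper PSD bound for P3
  have u1 := kron3_upper P M M (4/h) h h (by positivity) (by positivity)
    Pup Mup Mup MPSD MPSD
  have u2 := kron3_upper M P M h (4/h) h (by positivity) (by positivity)
    Mup Pup Mup PPSD MPSD
  have u3 := kron3_upper M M P h h (4/h) (by positivity) (by positivity)
    Mup Mup Pup MPSD PPSD
  have hidup : (12 * h) • (1 : Matrix (Fin n × Fin n × Fin n) (Fin n × Fin n × Fin n) ℝ) - P3 =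
      (((4/h) * (h * h)) • 1 - P ⊗ₖ (M ⊗ₖ M))
      + (((h * ((4/h) * h)) • 1 - M ⊗ₖ (P ⊗ₖ M))
      + ((h * (h * (4/h))) • 1 - M ⊗ₖ (M ⊗ₖ P))) := by
    rw [hP3K]
    have hne : h ≠ 0 := ne_of_gt hpos
    have hc : 12 * h = (4/h) * (h * h) + (h * ((4/h) * h) + h * (h * (4/h))) := by
      field_simp
      ring
    rw [hc]
    module
  have Kup : ((12 * h) • (1 : Matrix (Fin n × Fin n × Fin n) (Fin n × Fin n × Fin n) ℝ)
      - P3).PosSemidef := by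
    rw [hidup]
    exact u1.add (u2.add u3)
  -- eigenvalue bounds
  have dotpos : ∀ v : Fin n × Fin n × Fin n → ℝ, v ≠ 0 → 0 < v ⬝ᵥ v := by
    intro v hv
    obtain ⟨i, hi⟩ := Function.ne_iff.mp hv
    unfold dotProduct
    apply Finset.sum_pos' (fun j _ => mul_self_nonneg (v j))
    exact ⟨i, Finset.mem_univ i, mul_self_pos.mpr hi⟩
  have part2 : ∀ (lam : ℝ) (v : Fin n × Fin n × Fin n → ℝ), v ≠ 0 → P3.mulVec v = lam • v →
      (4 / 3) * h ^ 3 ≤ lam ∧ lam ≤ 12 * h := by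
    intro lam v hv heig
    have hvv := dotpos v hv
    have hdot : v ⬝ᵥ P3.mulVec v = lam * (v ⬝ᵥ v) := by
      rw [heig, dotProduct_smul, smul_eq_mul]
    constructor
    · have h1 := Klow.dotProduct_mulVec_nonneg v
      rw [star_trivial, Matrix.sub_mulVec, dotProduct_sub, Matrix.smul_mulVec,
        Matrix.one_mulVec, dotProduct_smul, smul_eq_mul, hdot] at h1
      nlinarith
    · have h1 := Kup.dotProduct_mulVec_nonneg v
      rw [star_trivial, Matrix.sub_mulVec, dotProduct_sub, Matrix.smul_mulVec,
        Matrix.one_mulVec, dotProduct_smul, smul_eq_mul, hdot] at h1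
      nlinarith
  refine ⟨part2, ?_⟩
  intro lam mu v w hv hw heigv heigw
  have hb1 := (part2 lam v hv heigv).2
  have hb2 := (part2 mu w hw heigw).1
  have hkey : (9 / h^2) * ((4/3) * h^3) = 12 * h := by
    field_simp
    ring
  have hmono : (9 / h^2) * ((4/3) * h^3) ≤ (9 / h^2) * mu :=
    mul_le_mul_of_nonneg_left hb2 (by positivity)
  linarith
end

section
/- Let n ≥ 1 be an integer, h = 1/(n+1), and let D : [0,1]³ → ℝ be a measurable function with 0 < D_min ≤ D(x) ≤ D_max for all x ∈ [0,1]³. Define the n³×n³ real matrix L by L_{(i,j,k),(i',j',k')} = ∫_{[0,1]³} D(x,y,z) ∇φ_{ijk} · ∇φ_{i'j'k'}. Then L is symmetric, for every v ∈ ℝ^{n³} one has D_min·vᵀP⁽³⁾v ≤ vᵀLv ≤ D_max·vᵀP⁽³⁾v, and every eigenvalue λ of L satisfies (4/3)·D_min·h³ ≤ λ ≤ 12·D_max·h; in particular the condition number of L is at most 9·(D_max/D_min)·(1/h²). -/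
open MeasureTheory Matrix

namespace Stmt4
open Finset Set



lemma sum_id_real (m : ℕ) : ∑ i ∈ range m, ((i:ℝ)+1) = m*(m+1)/2 := by
  induction m with
  | zero => simp
  | succ m ih => rw [Finset.sum_range_succ, ih]; push_cast; ring

lemma sum_weight (n : ℕ) :
    ∑ i ∈ range n, (((i:ℝ)+1)*((n:ℝ)-i)) = n*(n+1)*(n+2)/6 := by
  induction n with
  | zero => simp
  | succ n ih =>
    have : ∑ i ∈ range (n+1), (((i:ℝ)+1)*(((n:ℝ)+1)-i))
        = ∑ i ∈ range (n+1), ((((i:ℝ)+1)*((n:ℝ)-i)) + ((i:ℝ)+1)) := by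
      apply Finset.sum_congr rfl; intro i _; ring
    rw [show ((n:ℕ)+1:ℕ) = n+1 from rfl]
    push_cast
    rw [this, Finset.sum_add_distrib, Finset.sum_range_succ _ n, ih, sum_id_real]
    push_cast; ring

variable {n : ℕ} {e : ℕ → ℝ}

lemma sum_sq_shift (h0 : e 0 = 0) (h1 : e (n+1) = 0) :
    (∑ k ∈ range (n+1), e k ^2 = ∑ k ∈ range n, e (k+1)^2)
    ∧ (∑ k ∈ range (n+1), e (k+1) ^2 = ∑ k ∈ range n, e (k+1)^2) := by
  constructor
  · rw [Finset.sum_range_succ' (fun k => e k ^2) n, h0]; simp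
  · rw [Finset.sum_range_succ (fun k => e (k+1) ^2) n, h1]; simp

lemma mass_bounds (h0 : e 0 = 0) (h1 : e (n+1) = 0) :
    (∑ k ∈ range n, e (k+1)^2) ≤
      (∑ k ∈ range (n+1), (e k^2 + e k * e (k+1) + e (k+1)^2)) ∧
    (∑ k ∈ range (n+1), (e k^2 + e k * e (k+1) + e (k+1)^2)) ≤
      3 * ∑ k ∈ range n, e (k+1)^2 := by
  obtain ⟨hA, hB⟩ := sum_sq_shift h0 h1
  have hsplit : (∑ k ∈ range (n+1), (e k^2 + e k * e (k+1) + e (k+1)^2))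
      = 2 * (∑ k ∈ range n, e (k+1)^2) + ∑ k ∈ range (n+1), e k * e (k+1) := by
    rw [Finset.sum_add_distrib, Finset.sum_add_distrib, hA, hB]; ring
  have hX1 : ∑ k ∈ range (n+1), e k * e (k+1) ≤ ∑ k ∈ range n, e (k+1)^2 := by
    calc ∑ k ∈ range (n+1), e k * e (k+1)
        ≤ ∑ k ∈ range (n+1), (e k ^2 + e (k+1)^2)/2 := by
          apply Finset.sum_le_sum; intro k _; nlinarith [sq_nonneg (e k - e (k+1))]
      _ = ∑ k ∈ range n, e (k+1)^2 := by
          rw [← Finset.sum_div, Finset.sum_add_distrib, hA, hB]; ring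
  have hX2 : -(∑ k ∈ range n, e (k+1)^2) ≤ ∑ k ∈ range (n+1), e k * e (k+1) := by
    have : ∑ k ∈ range (n+1), (-(e k ^2 + e (k+1)^2)/2) ≤ ∑ k ∈ range (n+1), e k * e (k+1) := by
      apply Finset.sum_le_sum; intro k _; nlinarith [sq_nonneg (e k + e (k+1))]
    calc -(∑ k ∈ range n, e (k+1)^2)
        = ∑ k ∈ range (n+1), (-(e k ^2 + e (k+1)^2)/2) := by
          simp only [neg_div, Finset.sum_neg_distrib, ← Finset.sum_div,
            Finset.sum_add_distrib, hA, hB]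
          ring
      _ ≤ _ := this
  constructor <;> [linarith; linarith]


lemma diff_upper (h0 : e 0 = 0) (h1 : e (n+1) = 0) :
    ∑ k ∈ range (n+1), (e (k+1) - e k)^2 ≤ 4 * ∑ k ∈ range n, e (k+1)^2 := by
  obtain ⟨hA, hB⟩ := sum_sq_shift h0 h1
  calc ∑ k ∈ range (n+1), (e (k+1) - e k)^2
      ≤ ∑ k ∈ range (n+1), (2 * e k ^2 + 2 * e (k+1)^2) := by
        apply Finset.sum_le_sum; intro k _; nlinarith [sq_nonneg (e k + e (k+1))]
    _ = 4 * ∑ k ∈ range n, e (k+1)^2 := by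
        rw [Finset.sum_add_distrib, ← Finset.mul_sum, ← Finset.mul_sum, hA, hB]; ring

lemma telescope (h0 : e 0 = 0) : ∀ i, e i = ∑ k ∈ range i, (e (k+1) - e k) := by
  intro i
  induction i with
  | zero => simpa using h0
  | succ i ih => rw [Finset.sum_range_succ, ← ih]; ring

lemma diff_lower (h0 : e 0 = 0) (h1 : e (n+1) = 0) :
    (4 / ((n:ℝ)+1)^2) * ∑ k ∈ range n, e (k+1)^2
      ≤ ∑ k ∈ range (n+1), (e (k+1) - e k)^2 := by
  set d : ℕ → ℝ := fun k => e (k+1) - e k with hd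
  set S : ℝ := ∑ k ∈ range (n+1), d k ^2 with hS
  have hSnn : 0 ≤ S := Finset.sum_nonneg fun k _ => sq_nonneg _
  -- partial sums
  have htel : ∀ i, e i = ∑ k ∈ range i, d k := telescope h0
  have htotal : ∑ k ∈ range (n+1), d k = 0 := by rw [← htel (n+1), h1]
  -- per-index inequality
  have key : ∀ i ∈ range n,
      ((n:ℝ)+1) * e (i+1) ^ 2 ≤ (((i:ℝ)+1) * ((n:ℝ) - i)) * S := by
    intro i hi
    have hin : i < n := Finset.mem_range.mp hi
    -- left Cauchy-Schwarz
    have hL : e (i+1)^2 ≤ ((i:ℝ)+1) * ∑ k ∈ range (i+1), d k ^2 := by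
      have := sq_sum_le_card_mul_sum_sq (s := range (i+1)) (f := d)
      rw [Finset.card_range] at this
      rw [htel (i+1)]
      exact_mod_cast this
    -- right Cauchy-Schwarz
    have hsplit : ∑ k ∈ range (i+1), d k + ∑ k ∈ Finset.Ico (i+1) (n+1), d k = 0 := by
      rw [← htotal]; simp only [Finset.range_eq_Ico]
      exact Finset.sum_Ico_consecutive _ (by omega) (by omega)
    have hR : e (i+1)^2 ≤ ((n:ℝ) - i) * ∑ k ∈ Finset.Ico (i+1) (n+1), d k ^2 := by
      have h2 : e (i+1) = -∑ k ∈ Finset.Ico (i+1) (n+1), d k := by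
        rw [htel (i+1)]; linarith [hsplit]
      have := sq_sum_le_card_mul_sum_sq (s := Finset.Ico (i+1) (n+1)) (f := d)
      rw [Nat.card_Ico] at this
      have hcard : ((n + 1 - (i+1) : ℕ) : ℝ) = (n:ℝ) - i := by
        have : (n + 1 - (i+1) : ℕ) = n - i := by omega
        rw [this]; push_cast [Nat.cast_sub hin.le]; ring
      rw [h2, neg_sq]
      calc (∑ k ∈ Finset.Ico (i+1) (n+1), d k)^2
          ≤ ((n + 1 - (i+1) : ℕ) : ℝ) * ∑ k ∈ Finset.Ico (i+1) (n+1), d k ^2 := by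
            exact_mod_cast this
        _ = ((n:ℝ) - i) * ∑ k ∈ Finset.Ico (i+1) (n+1), d k ^2 := by rw [hcard]
    -- split S
    have hSsplit : S = ∑ k ∈ range (i+1), d k ^2 + ∑ k ∈ Finset.Ico (i+1) (n+1), d k ^2 := by
      rw [hS]; simp only [Finset.range_eq_Ico]
      exact (Finset.sum_Ico_consecutive _ (by omega) (by omega)).symm
    have hi1 : (0:ℝ) ≤ (i:ℝ)+1 := by positivity
    have hni : (0:ℝ) ≤ (n:ℝ) - i := by
      have : (i:ℝ) ≤ n := by exact_mod_cast hin.le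
      linarith
    rw [hSsplit]
    calc ((n:ℝ)+1) * e (i+1)^2 = ((n:ℝ)-i) * e (i+1)^2 + ((i:ℝ)+1) * e (i+1)^2 := by ring
      _ ≤ ((n:ℝ)-i) * (((i:ℝ)+1) * ∑ k ∈ range (i+1), d k ^2)
          + ((i:ℝ)+1) * (((n:ℝ)-i) * ∑ k ∈ Finset.Ico (i+1) (n+1), d k ^2) :=
          add_le_add (mul_le_mul_of_nonneg_left hL hni) (mul_le_mul_of_nonneg_left hR hi1)
      _ = (((i:ℝ)+1) * ((n:ℝ) - i)) * (∑ k ∈ range (i+1), d k ^2 + ∑ k ∈ Finset.Ico (i+1) (n+1), d k ^2) := by ring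
  -- sum up
  have hsum : ((n:ℝ)+1) * ∑ k ∈ range n, e (k+1)^2
      ≤ ((n:ℝ)*(n+1)*(n+2)/6) * S := by
    calc ((n:ℝ)+1) * ∑ k ∈ range n, e (k+1)^2
        = ∑ i ∈ range n, ((n:ℝ)+1) * e (i+1)^2 := by rw [Finset.mul_sum]
      _ ≤ ∑ i ∈ range n, (((i:ℝ)+1) * ((n:ℝ) - i)) * S := Finset.sum_le_sum key
      _ = (∑ i ∈ range n, (((i:ℝ)+1) * ((n:ℝ) - i))) * S := by rw [Finset.sum_mul]
      _ = ((n:ℝ)*(n+1)*(n+2)/6) * S := by rw [sum_weight]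
  have hcomp : ((n:ℝ)*(n+1)*(n+2)/6) ≤ ((n:ℝ)+1)^3/4 := by nlinarith [sq_nonneg ((n:ℝ)-1), Nat.cast_nonneg (α := ℝ) n]
  have hn1 : (0:ℝ) < (n:ℝ)+1 := by positivity
  have : ((n:ℝ)+1) * ∑ k ∈ range n, e (k+1)^2 ≤ (((n:ℝ)+1)^3/4) * S :=
    le_trans hsum (by nlinarith)
  rw [div_mul_eq_mul_div, div_le_iff₀ (by positivity)]
  nlinarith [this]



variable {n : ℕ}

def ext (c : Fin n → ℝ) (k : ℕ) : ℝ :=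
  if hk : 1 ≤ k ∧ k ≤ n then c ⟨k - 1, by omega⟩ else 0

lemma ext_zero (c : Fin n → ℝ) : ext c 0 = 0 := by simp [ext]

lemma ext_last (c : Fin n → ℝ) : ext c (n+1) = 0 := by
  simp only [ext]; rw [dif_neg]; omega

lemma ext_succ (c : Fin n → ℝ) (k : ℕ) (hk : k < n) : ext c (k+1) = c ⟨k, hk⟩ := by
  simp only [ext]; rw [dif_pos ⟨by omega, by omega⟩]; congr 1

lemma ext_sq_sum (c : Fin n → ℝ) :
    ∑ k ∈ range n, ext c (k+1)^2 = ∑ i : Fin n, c i ^2 := by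
  rw [Finset.sum_range fun k => ext c (k+1)^2]
  apply Finset.sum_congr rfl; intro i _
  rw [ext_succ c i.1 i.2]

lemma sum_if_coe (c : Fin n → ℝ) (m : ℕ) :
    ∑ i : Fin n, (if (i:ℕ) = m then c i else 0) = ext c (m+1) := by
  by_cases hm : m < n
  · rw [ext_succ c m hm, Finset.sum_eq_single ⟨m, hm⟩]
    · simp
    · intro b _ hb
      rw [if_neg]; intro hc; exact hb (Fin.ext hc)
    · intro hmem; exact absurd (Finset.mem_univ _) hmem
  · rw [show ext c (m+1) = 0 by simp only [ext]; rw [dif_neg]; omega]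
    apply Finset.sum_eq_zero; intro i _
    rw [if_neg]; omega

lemma sum_if_coe' (c : Fin n → ℝ) (k : ℕ) :
    ∑ i : Fin n, (if (i:ℕ) + 1 = k then c i else 0) = ext c k := by
  match k with
  | 0 => rw [ext_zero]; apply Finset.sum_eq_zero; intro i _; rw [if_neg]; omega
  | (m+1) =>
    rw [← sum_if_coe c m]; apply Finset.sum_congr rfl; intro i _
    congr 1
    simp only [eq_iff_iff]; omega


section PW

variable {h : ℝ} {φ g : Fin n → ℝ → ℝ}

lemma sum_g_eq (hpos : 0 < h)
    (hg : ∀ (i : Fin n) (x : ℝ),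
      g i x = if (i.val : ℝ) * h < x ∧ x < ((i.val : ℝ) + 1) * h then 1 / h
        else if ((i.val : ℝ) + 1) * h < x ∧ x < ((i.val : ℝ) + 2) * h then -(1 / h)
        else 0)
    (c : Fin n → ℝ) (k : ℕ) {t : ℝ}
    (ht : t ∈ Set.Ioo ((k:ℝ)*h) (((k:ℝ)+1)*h)) :
    ∑ i : Fin n, c i * g i t = (ext c (k+1) - ext c k)/h := by
  obtain ⟨ht1, ht2⟩ := ht
  have key : ∀ i : Fin n, c i * g i t
      = (1/h) * (if (i:ℕ) = k then c i else 0) - (1/h) * (if (i:ℕ) + 1 = k then c i else 0) := by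
    intro i
    rw [hg i t]
    by_cases h1 : (i:ℕ) = k
    · subst h1
      rw [if_pos ⟨ht1, ht2⟩, if_pos rfl, if_neg (by omega)]
      ring
    · have hc1 : ¬ ((i.val : ℝ) * h < t ∧ t < ((i.val : ℝ) + 1) * h) := by
        rintro ⟨ha, hb⟩
        have l1 : ((i:ℕ):ℝ) * h < ((k:ℝ)+1) * h := lt_trans ha ht2
        have l2 : ((k:ℝ)) * h < ((i:ℕ):ℝ) * h + h := by nlinarith
        have n1 : (i:ℕ) < k + 1 := by
          have := (mul_lt_mul_iff_of_pos_right hpos).mp l1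
          exact_mod_cast this
        have n2 : k < (i:ℕ) + 1 := by
          have : (k:ℝ) * h < (((i:ℕ):ℝ)+1) * h := by nlinarith
          have := (mul_lt_mul_iff_of_pos_right hpos).mp this
          exact_mod_cast this
        omega
      rw [if_neg hc1]
      by_cases h2 : (i:ℕ) + 1 = k
      · have : ((i.val:ℝ) + 1) * h < t ∧ t < ((i.val:ℝ) + 2) * h := by
          constructor
          · calc ((i.val:ℝ) + 1) * h = (k:ℝ) * h := by rw [← h2]; push_cast; ring
              _ < t := ht1
          · calc t < ((k:ℝ)+1) * h := ht2
              _ = ((i.val:ℝ) + 2) * h := by rw [← h2]; push_cast; ring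
        rw [if_pos this, if_neg h1, if_pos h2]
        ring
      · have hc2 : ¬ (((i.val : ℝ) + 1) * h < t ∧ t < ((i.val : ℝ) + 2) * h) := by
          rintro ⟨ha, hb⟩
          have n1 : (i:ℕ) + 1 < k + 1 := by
            have : (((i:ℕ):ℝ)+1) * h < ((k:ℝ)+1) * h := lt_trans ha ht2
            have := (mul_lt_mul_iff_of_pos_right hpos).mp this
            exact_mod_cast this
          have n2 : k < (i:ℕ) + 2 := by
            have : (k:ℝ) * h < (((i:ℕ):ℝ)+2) * h := lt_trans ht1 hb
            have := (mul_lt_mul_iff_of_pos_right hpos).mp this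
            exact_mod_cast this
          omega
        rw [if_neg hc2, if_neg h1, if_neg h2]
        ring
  rw [Finset.sum_congr rfl (fun i _ => key i), Finset.sum_sub_distrib,
    ← Finset.mul_sum, ← Finset.mul_sum, sum_if_coe, sum_if_coe']
  ring

lemma sum_phi_eq (hpos : 0 < h)
    (hφ : ∀ (i : Fin n) (x : ℝ), φ i x = max 0 (1 - |x / h - ((i.val : ℝ) + 1)|))
    (c : Fin n → ℝ) (k : ℕ) {t : ℝ}
    (ht : t ∈ Set.Icc ((k:ℝ)*h) (((k:ℝ)+1)*h)) :
    ∑ i : Fin n, c i * φ i t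
      = ext c k * (((k:ℝ)+1) - t/h) + ext c (k+1) * (t/h - (k:ℝ)) := by
  obtain ⟨ht1, ht2⟩ := ht
  have hs1 : (k:ℝ) ≤ t/h := by rw [le_div_iff₀ hpos]; linarith
  have hs2 : t/h ≤ (k:ℝ)+1 := by rw [div_le_iff₀ hpos]; linarith
  have key : ∀ i : Fin n, c i * φ i t
      = (if (i:ℕ) + 1 = k then c i else 0) * (((k:ℝ)+1) - t/h)
        + (if (i:ℕ) = k then c i else 0) * (t/h - (k:ℝ)) := by
    intro i
    rw [hφ i t]
    by_cases h1 : (i:ℕ) + 1 = k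
    · have habs : |t/h - ((i.val:ℝ)+1)| = t/h - (k:ℝ) := by
        rw [abs_of_nonneg]
        · congr 1; rw [← h1]; push_cast; ring
        · have : ((i.val:ℝ)+1) = (k:ℝ) := by rw [← h1]; push_cast; ring
          rw [this]; linarith
      rw [habs, if_pos h1, if_neg (by omega), max_eq_right (by linarith)]
      ring
    · by_cases h2 : (i:ℕ) = k
      · have habs : |t/h - ((i.val:ℝ)+1)| = ((k:ℝ)+1) - t/h := by
          rw [abs_of_nonpos]
          · rw [h2]; ring
          · rw [h2]; linarith
        rw [habs, if_neg h1, if_pos h2, max_eq_right (by linarith)]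
        ring
    -- remaining: zero cases
      · have hzero : max 0 (1 - |t/h - ((i.val:ℝ)+1)|) = 0 := by
          apply max_eq_left
          have : (1:ℝ) ≤ |t/h - ((i.val:ℝ)+1)| := by
            rcases lt_or_gt_of_ne (fun hc => h2 hc) with hlt | hgt
            · -- i < k, so i+1 ≤ k-0 and since i+1 ≠ k, i+1 < k i.e. i+2 ≤ k
              have hik : (i:ℕ) + 2 ≤ k := by omega
              have : ((i.val:ℝ)+1) + 1 ≤ (k:ℝ) := by
                have : ((i:ℕ) + 2 : ℝ) ≤ (k:ℝ) := by exact_mod_cast hik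
                push_cast at this ⊢; linarith
              rw [abs_of_nonneg (by linarith)]
              linarith
            · -- i > k : i ≥ k+1, i+1 ≥ k+2 > t/h + 1
              have hik : k + 1 ≤ (i:ℕ) := by omega
              have : (k:ℝ) + 1 ≤ ((i:ℕ):ℝ) := by exact_mod_cast hik
              rw [abs_of_nonpos (by linarith)]
              linarith
          linarith
        rw [hzero, if_neg h1, if_neg h2]
        ring
  rw [Finset.sum_congr rfl (fun i _ => key i), Finset.sum_add_distrib,
    ← Finset.sum_mul, ← Finset.sum_mul, sum_if_coe, sum_if_coe']

end PW



variable {n : ℕ} {h : ℝ} {φ g : Fin n → ℝ → ℝ}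

lemma g_meas (hg : ∀ (i : Fin n) (x : ℝ),
      g i x = if (i.val : ℝ) * h < x ∧ x < ((i.val : ℝ) + 1) * h then 1 / h
        else if ((i.val : ℝ) + 1) * h < x ∧ x < ((i.val : ℝ) + 2) * h then -(1 / h)
        else 0) (i : Fin n) : Measurable (g i) := by
  have : g i = fun x => if (i.val : ℝ) * h < x ∧ x < ((i.val : ℝ) + 1) * h then 1 / h
        else if ((i.val : ℝ) + 1) * h < x ∧ x < ((i.val : ℝ) + 2) * h then -(1 / h)
        else 0 := funext (hg i)
  rw [this]
  apply Measurable.ite (measurableSet_Ioo (a := (i.val : ℝ) * h) (b := ((i.val : ℝ) + 1) * h))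
    measurable_const
  exact Measurable.ite (measurableSet_Ioo (a := ((i.val : ℝ) + 1) * h)
    (b := ((i.val : ℝ) + 2) * h)) measurable_const measurable_const

lemma g_bound (hpos : 0 < h) (hg : ∀ (i : Fin n) (x : ℝ),
      g i x = if (i.val : ℝ) * h < x ∧ x < ((i.val : ℝ) + 1) * h then 1 / h
        else if ((i.val : ℝ) + 1) * h < x ∧ x < ((i.val : ℝ) + 2) * h then -(1 / h)
        else 0) (i : Fin n) (x : ℝ) : |g i x| ≤ 1/h := by
  rw [hg i x]
  split_ifs with h1 h2
  · rw [abs_of_nonneg (by positivity)]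
  · rw [abs_neg, abs_of_nonneg (by positivity)]
  · rw [abs_zero]; positivity

lemma phi_cont (hφ : ∀ (i : Fin n) (x : ℝ), φ i x = max 0 (1 - |x / h - ((i.val : ℝ) + 1)|))
    (i : Fin n) : Continuous (φ i) := by
  have : φ i = fun x => max 0 (1 - |x / h - ((i.val : ℝ) + 1)|) := funext (hφ i)
  rw [this]; fun_prop

lemma phi_bound (hφ : ∀ (i : Fin n) (x : ℝ), φ i x = max 0 (1 - |x / h - ((i.val : ℝ) + 1)|))
    (i : Fin n) (x : ℝ) : |φ i x| ≤ 1 := by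
  rw [hφ i x, abs_of_nonneg (le_max_left _ _)]
  apply max_le (by norm_num)
  have := abs_nonneg (x / h - ((i.val : ℝ) + 1))
  linarith

lemma integrableOn_of_bounded' {f : ℝ × ℝ × ℝ → ℝ} {s : Set (ℝ × ℝ × ℝ)}
    (hμ : volume s ≠ ⊤) (hf : Measurable f) {C : ℝ} (hC : ∀ x, |f x| ≤ C) :
    IntegrableOn f s := by
  haveI : IsFiniteMeasure (volume.restrict s) :=
    ⟨by rwa [Measure.restrict_apply_univ, lt_top_iff_ne_top]⟩
  exact ⟨hf.aestronglyMeasurable,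
    HasFiniteIntegral.of_bounded (C := C) (ae_of_all _ (fun x => by simpa using hC x))⟩

lemma integrableOn_of_bounded1 {f : ℝ → ℝ} {s : Set ℝ}
    (hμ : volume s ≠ ⊤) (hf : Measurable f) {C : ℝ} (hC : ∀ x, |f x| ≤ C) :
    IntegrableOn f s := by
  haveI : IsFiniteMeasure (volume.restrict s) :=
    ⟨by rwa [Measure.restrict_apply_univ, lt_top_iff_ne_top]⟩
  exact ⟨hf.aestronglyMeasurable,
    HasFiniteIntegral.of_bounded (C := C) (ae_of_all _ (fun x => by simpa using hC x))⟩


lemma split_integral (hpos : 0 < h) {f : ℝ → ℝ} (hf : Measurable f) {C : ℝ} (hC : ∀ x, |f x| ≤ C)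
    (hh1 : ((n:ℝ)+1)*h = 1) :
    ∫ t in Icc (0:ℝ) 1, f t
      = ∑ k ∈ range (n+1), ∫ t in (((k:ℕ):ℝ)*h)..((((k+1):ℕ):ℝ)*h), f t := by
  have hint : ∀ k, k < n + 1 → IntervalIntegrable f volume (((k:ℕ):ℝ)*h) ((((k+1):ℕ):ℝ)*h) := by
    intro k _
    rw [intervalIntegrable_iff]
    apply integrableOn_of_bounded1 _ hf hC
    rw [Set.uIoc_of_le (by push_cast; nlinarith : ((k:ℕ):ℝ)*h ≤ (((k+1):ℕ):ℝ)*h)]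
    rw [Real.volume_Ioc]
    exact ENNReal.ofReal_ne_top
  rw [intervalIntegral.sum_integral_adjacent_intervals hint]
  have h0 : (((0:ℕ):ℝ))*h = 0 := by norm_num
  have h1 : ((((n+1):ℕ)):ℝ)*h = 1 := by push_cast; linarith [hh1]
  rw [h0, h1, intervalIntegral.integral_of_le (by norm_num : (0:ℝ) ≤ 1),
    integral_Icc_eq_integral_Ioc]


section Pieces

variable {n : ℕ} {h : ℝ} {φ g : Fin n → ℝ → ℝ}

lemma piece_g (hpos : 0 < h)
    (hg : ∀ (i : Fin n) (x : ℝ),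
      g i x = if (i.val : ℝ) * h < x ∧ x < ((i.val : ℝ) + 1) * h then 1 / h
        else if ((i.val : ℝ) + 1) * h < x ∧ x < ((i.val : ℝ) + 2) * h then -(1 / h)
        else 0)
    (c : Fin n → ℝ) (k : ℕ) :
    ∫ t in (((k:ℕ):ℝ)*h)..((((k+1):ℕ):ℝ)*h), (∑ i : Fin n, c i * g i t)^2
      = (ext c (k+1) - ext c k)^2 / h := by
  have hab : ((k:ℕ):ℝ)*h ≤ (((k+1):ℕ):ℝ)*h := by push_cast; nlinarith
  rw [intervalIntegral.integral_of_le hab, integral_Ioc_eq_integral_Ioo]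
  have heq : EqOn (fun t => (∑ i : Fin n, c i * g i t)^2)
      (fun _ => ((ext c (k+1) - ext c k)/h)^2) (Ioo (((k:ℕ):ℝ)*h) ((((k+1):ℕ):ℝ)*h)) := by
    intro t ht
    have ht' : t ∈ Set.Ioo ((k:ℝ)*h) (((k:ℝ)+1)*h) := by
      convert ht using 3 <;> push_cast <;> ring
    simp only
    rw [sum_g_eq hpos hg c k ht']
  rw [setIntegral_congr_fun measurableSet_Ioo heq, setIntegral_const, smul_eq_mul,
    measureReal_def, Real.volume_Ioo]
  rw [ENNReal.toReal_ofReal (by push_cast; nlinarith)]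
  have : (((k+1):ℕ):ℝ)*h - ((k:ℕ):ℝ)*h = h := by push_cast; ring
  rw [this]
  field_simp

lemma piece_phi (hpos : 0 < h)
    (hφ : ∀ (i : Fin n) (x : ℝ), φ i x = max 0 (1 - |x / h - ((i.val : ℝ) + 1)|))
    (c : Fin n → ℝ) (k : ℕ) :
    ∫ t in (((k:ℕ):ℝ)*h)..((((k+1):ℕ):ℝ)*h), (∑ i : Fin n, c i * φ i t)^2
      = h/3 * (ext c k^2 + ext c k * ext c (k+1) + ext c (k+1)^2) := by
  set p := ext c k with hp
  set q := ext c (k+1) with hq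
  set A : ℝ := p*((k:ℝ)+1) - q*(k:ℝ) with hA
  set B : ℝ := (q - p)/h with hB
  have hab : ((k:ℕ):ℝ)*h ≤ (((k+1):ℕ):ℝ)*h := by push_cast; nlinarith
  have heq : EqOn (fun t => (∑ i : Fin n, c i * φ i t)^2)
      (fun t => (A + B*t)^2) (Set.uIcc (((k:ℕ):ℝ)*h) ((((k+1):ℕ):ℝ)*h)) := by
    intro t ht
    rw [Set.uIcc_of_le hab] at ht
    have ht' : t ∈ Set.Icc ((k:ℝ)*h) (((k:ℝ)+1)*h) := by
      push_cast at ht; exact ht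
    simp only
    rw [sum_phi_eq hpos hφ c k ht']
    have : A + B*t = p * (((k:ℝ)+1) - t/h) + q * (t/h - (k:ℝ)) := by
      rw [hA, hB]; field_simp; ring
    rw [this]
  rw [intervalIntegral.integral_congr heq]
  have hderiv : ∀ t ∈ Set.uIcc (((k:ℕ):ℝ)*h) ((((k+1):ℕ):ℝ)*h),
      HasDerivAt (fun t => A^2*t + A*B*t^2 + B^2/3*t^3) ((A + B*t)^2) t := by
    intro t _
    have h1 : HasDerivAt (fun t : ℝ => A^2*t) (A^2) t := by
      simpa using (hasDerivAt_id t).const_mul (A^2)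
    have h2 : HasDerivAt (fun t : ℝ => A*B*t^2) (A*B*(2*t)) t := by
      simpa using (hasDerivAt_pow 2 t).const_mul (A*B)
    have h3 : HasDerivAt (fun t : ℝ => B^2/3*t^3) (B^2/3*(3*t^2)) t := by
      simpa using (hasDerivAt_pow 3 t).const_mul (B^2/3)
    refine ((h1.add h2).add h3).congr_deriv ?_
    ring
  have hint : IntervalIntegrable (fun t => (A + B*t)^2) volume
      (((k:ℕ):ℝ)*h) ((((k+1):ℕ):ℝ)*h) := by
    apply Continuous.intervalIntegrable; fun_prop
  rw [intervalIntegral.integral_eq_sub_of_hasDerivAt hderiv hint]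
  have hq' : q = A + B*((((k+1):ℕ)):ℝ)*h := by
    rw [hA, hB]; push_cast; field_simp; ring
  have hp' : p = A + B*(((k:ℕ)):ℝ)*h := by
    rw [hA, hB]; push_cast; field_simp; ring
  have hstep : ((((k+1):ℕ)):ℝ)*h = (((k:ℕ)):ℝ)*h + h := by push_cast; ring
  rw [hq', hp', hstep]
  push_cast
  field_simp
  ring

lemma integral_sum_g_sq (hpos : 0 < h) (hh1 : ((n:ℝ)+1)*h = 1)
    (hg : ∀ (i : Fin n) (x : ℝ),
      g i x = if (i.val : ℝ) * h < x ∧ x < ((i.val : ℝ) + 1) * h then 1 / h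
        else if ((i.val : ℝ) + 1) * h < x ∧ x < ((i.val : ℝ) + 2) * h then -(1 / h)
        else 0)
    (c : Fin n → ℝ) :
    ∫ t in Icc (0:ℝ) 1, (∑ i : Fin n, c i * g i t)^2
      = ∑ k ∈ range (n+1), (ext c (k+1) - ext c k)^2 / h := by
  have hmeas : Measurable (fun t => (∑ i : Fin n, c i * g i t)^2) := by
    apply Measurable.pow_const
    exact Finset.measurable_sum _ (fun i _ => (g_meas hg i).const_mul (c i))
  have hbd : ∀ t, |(∑ i : Fin n, c i * g i t)^2| ≤ ((∑ i : Fin n, |c i|) * (1/h))^2 := by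
    intro t
    rw [abs_of_nonneg (sq_nonneg _)]
    apply sq_le_sq'
    · rw [neg_le]
      calc -(∑ i : Fin n, c i * g i t) ≤ |∑ i : Fin n, c i * g i t| := neg_le_abs _
      _ ≤ ∑ i : Fin n, |c i * g i t| := Finset.abs_sum_le_sum_abs _ _
      _ ≤ (∑ i : Fin n, |c i|) * (1/h) := by
          rw [Finset.sum_mul]
          apply Finset.sum_le_sum; intro i _
          rw [abs_mul]
          exact mul_le_mul_of_nonneg_left (g_bound hpos hg i t) (abs_nonneg _)
    · calc (∑ i : Fin n, c i * g i t) ≤ |∑ i : Fin n, c i * g i t| := le_abs_self _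
      _ ≤ ∑ i : Fin n, |c i * g i t| := Finset.abs_sum_le_sum_abs _ _
      _ ≤ (∑ i : Fin n, |c i|) * (1/h) := by
          rw [Finset.sum_mul]
          apply Finset.sum_le_sum; intro i _
          rw [abs_mul]
          exact mul_le_mul_of_nonneg_left (g_bound hpos hg i t) (abs_nonneg _)
  rw [split_integral hpos hmeas hbd hh1]
  exact Finset.sum_congr rfl (fun k _ => piece_g hpos hg c k)

lemma integral_sum_phi_sq (hpos : 0 < h) (hh1 : ((n:ℝ)+1)*h = 1)
    (hφ : ∀ (i : Fin n) (x : ℝ), φ i x = max 0 (1 - |x / h - ((i.val : ℝ) + 1)|))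
    (c : Fin n → ℝ) :
    ∫ t in Icc (0:ℝ) 1, (∑ i : Fin n, c i * φ i t)^2
      = ∑ k ∈ range (n+1), h/3 * (ext c k^2 + ext c k * ext c (k+1) + ext c (k+1)^2) := by
  have hmeas : Measurable (fun t => (∑ i : Fin n, c i * φ i t)^2) := by
    apply Measurable.pow_const
    exact Finset.measurable_sum _ (fun i _ => ((phi_cont hφ i).measurable).const_mul (c i))
  have hbd : ∀ t, |(∑ i : Fin n, c i * φ i t)^2| ≤ (∑ i : Fin n, |c i|)^2 := by
    intro t
    rw [abs_of_nonneg (sq_nonneg _)]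
    apply sq_le_sq'
    · rw [neg_le]
      calc -(∑ i : Fin n, c i * φ i t) ≤ |∑ i : Fin n, c i * φ i t| := neg_le_abs _
      _ ≤ ∑ i : Fin n, |c i * φ i t| := Finset.abs_sum_le_sum_abs _ _
      _ ≤ ∑ i : Fin n, |c i| := by
          apply Finset.sum_le_sum; intro i _
          rw [abs_mul]
          calc |c i| * |φ i t| ≤ |c i| * 1 :=
            mul_le_mul_of_nonneg_left (phi_bound hφ i t) (abs_nonneg _)
          _ = |c i| := mul_one _
    · calc (∑ i : Fin n, c i * φ i t) ≤ |∑ i : Fin n, c i * φ i t| := le_abs_self _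
      _ ≤ ∑ i : Fin n, |c i * φ i t| := Finset.abs_sum_le_sum_abs _ _
      _ ≤ ∑ i : Fin n, |c i| := by
          apply Finset.sum_le_sum; intro i _
          rw [abs_mul]
          calc |c i| * |φ i t| ≤ |c i| * 1 :=
            mul_le_mul_of_nonneg_left (phi_bound hφ i t) (abs_nonneg _)
          _ = |c i| := mul_one _
  rw [split_integral hpos hmeas hbd hh1]
  exact Finset.sum_congr rfl (fun k _ => piece_phi hpos hφ c k)

end Pieces

section ThreeD

variable {n : ℕ}

lemma swap3 (f : Fin n → Fin n → Fin n → ℝ) :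
    ∑ k, ∑ j, ∑ i, f i j k = ∑ i, ∑ j, ∑ k, f i j k := by
  calc ∑ k, ∑ j, ∑ i, f i j k = ∑ j, ∑ k, ∑ i, f i j k := Finset.sum_comm
    _ = ∑ j, ∑ i, ∑ k, f i j k := Finset.sum_congr rfl (fun _ _ => Finset.sum_comm)
    _ = ∑ i, ∑ j, ∑ k, f i j k := Finset.sum_comm

lemma abs_sum_mul_le {ι : Type*} [Fintype ι] (w u : ι → ℝ) {B : ℝ} (hB : ∀ i, |u i| ≤ B) :
    |∑ i, w i * u i| ≤ (∑ i, |w i|) * B := by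
  calc |∑ i, w i * u i| ≤ ∑ i, |w i * u i| := Finset.abs_sum_le_sum_abs _ _
    _ ≤ ∑ i, |w i| * B := by
        apply Finset.sum_le_sum; intro i _
        rw [abs_mul]
        exact mul_le_mul_of_nonneg_left (hB i) (abs_nonneg _)
    _ = (∑ i, |w i|) * B := by rw [Finset.sum_mul]

lemma sq_abs_le {x C : ℝ} (hx : |x| ≤ C) : |x^2| ≤ C^2 := by
  rw [abs_of_nonneg (sq_nonneg _)]
  calc x^2 = |x|^2 := (sq_abs x).symm
    _ ≤ C^2 := by nlinarith [abs_nonneg x]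

lemma integrable_of_bounded_fin {α : Type*} [MeasurableSpace α] {μ : Measure α}
    [IsFiniteMeasure μ] {f : α → ℝ} (hf : Measurable f) {C : ℝ} (hC : ∀ x, |f x| ≤ C) :
    Integrable f μ :=
  ⟨hf.aestronglyMeasurable,
    HasFiniteIntegral.of_bounded (C := C) (ae_of_all _ (fun x => by simpa using hC x))⟩

lemma finite_restrict_Icc : IsFiniteMeasure (volume.restrict (Icc (0:ℝ) 1)) :=
  ⟨by rw [Measure.restrict_apply_univ, Real.volume_Icc]; exact ENNReal.ofReal_lt_top⟩

lemma finite_restrict_Icc2 :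
    IsFiniteMeasure ((volume : Measure (ℝ × ℝ)).restrict ((Icc (0:ℝ) 1) ×ˢ (Icc (0:ℝ) 1))) := by
  constructor
  rw [Measure.restrict_apply_univ, Measure.volume_eq_prod, Measure.prod_prod, Real.volume_Icc]
  exact ENNReal.mul_lt_top ENNReal.ofReal_lt_top ENNReal.ofReal_lt_top

lemma restrict3_eq :
    (volume : Measure (ℝ × ℝ × ℝ)).restrict
        ((Icc (0:ℝ) 1) ×ˢ ((Icc (0:ℝ) 1) ×ˢ (Icc (0:ℝ) 1)))
      = (volume.restrict (Icc (0:ℝ) 1)).prod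
          ((volume : Measure (ℝ × ℝ)).restrict ((Icc (0:ℝ) 1) ×ˢ (Icc (0:ℝ) 1))) := by
  rw [Measure.volume_eq_prod, ← Measure.prod_restrict]

lemma restrict2_eq :
    (volume : Measure (ℝ × ℝ)).restrict ((Icc (0:ℝ) 1) ×ˢ (Icc (0:ℝ) 1))
      = (volume.restrict (Icc (0:ℝ) 1)).prod (volume.restrict (Icc (0:ℝ) 1)) := by
  rw [Measure.volume_eq_prod, ← Measure.prod_restrict]

lemma triple_eq {F : ℝ × ℝ × ℝ → ℝ} (hF : Measurable F) {C : ℝ} (hC : ∀ p, |F p| ≤ C) :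
    ∫ p in (Icc (0:ℝ) 1) ×ˢ (Icc (0:ℝ) 1) ×ˢ (Icc (0:ℝ) 1), F p
      = ∫ x in Icc (0:ℝ) 1, ∫ y in Icc (0:ℝ) 1, ∫ z in Icc (0:ℝ) 1, F (x, y, z) := by
  haveI := finite_restrict_Icc
  haveI := finite_restrict_Icc2
  have hFint : Integrable F ((volume.restrict (Icc (0:ℝ) 1)).prod
      ((volume : Measure (ℝ × ℝ)).restrict ((Icc (0:ℝ) 1) ×ˢ (Icc (0:ℝ) 1)))) :=
    integrable_of_bounded_fin hF hC
  rw [show (∫ p in (Icc (0:ℝ) 1) ×ˢ (Icc (0:ℝ) 1) ×ˢ (Icc (0:ℝ) 1), F p)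
      = ∫ p, F p ∂((volume.restrict (Icc (0:ℝ) 1)).prod
          ((volume : Measure (ℝ × ℝ)).restrict ((Icc (0:ℝ) 1) ×ˢ (Icc (0:ℝ) 1))))
    from by rw [← restrict3_eq]]
  rw [MeasureTheory.integral_prod F hFint]
  apply integral_congr_ae
  apply ae_of_all
  intro x
  have hFx : Integrable (fun q : ℝ × ℝ => F (x, q))
      ((volume.restrict (Icc (0:ℝ) 1)).prod (volume.restrict (Icc (0:ℝ) 1))) :=
    integrable_of_bounded_fin (hF.comp measurable_prodMk_left) (fun q => hC (x, q))
  show (∫ q in (Icc (0:ℝ) 1) ×ˢ (Icc (0:ℝ) 1), F (x, q))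
      = ∫ y in Icc (0:ℝ) 1, ∫ z in Icc (0:ℝ) 1, F (x, y, z)
  rw [show (∫ q, F (x, q) ∂((volume : Measure (ℝ × ℝ)).restrict ((Icc (0:ℝ) 1) ×ˢ (Icc (0:ℝ) 1))))
      = ∫ q, F (x, q) ∂((volume.restrict (Icc (0:ℝ) 1)).prod (volume.restrict (Icc (0:ℝ) 1)))
    from by rw [← restrict2_eq]]
  exact MeasureTheory.integral_prod _ hFx

section Chain

variable {n : ℕ} {u1 u2 u3 : Fin n → ℝ → ℝ} {β1 β2 β3 : ℝ}

lemma chain_ge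
    (hm1 : ∀ i, Measurable (u1 i)) (hm2 : ∀ i, Measurable (u2 i)) (hm3 : ∀ i, Measurable (u3 i))
    (hβ1 : 0 ≤ β1) (hβ2 : 0 ≤ β2) (hβ3 : 0 ≤ β3)
    (hb1 : ∀ i t, |u1 i t| ≤ β1) (hb2 : ∀ i t, |u2 i t| ≤ β2) (hb3 : ∀ i t, |u3 i t| ≤ β3)
    {l1 l2 l3 : ℝ} (hl2 : 0 ≤ l2) (hl3 : 0 ≤ l3)
    (h1 : ∀ c : Fin n → ℝ, l1 * ∑ i, c i^2 ≤ ∫ t in Icc (0:ℝ) 1, (∑ i, c i * u1 i t)^2)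
    (h2 : ∀ c : Fin n → ℝ, l2 * ∑ i, c i^2 ≤ ∫ t in Icc (0:ℝ) 1, (∑ i, c i * u2 i t)^2)
    (h3 : ∀ c : Fin n → ℝ, l3 * ∑ i, c i^2 ≤ ∫ t in Icc (0:ℝ) 1, (∑ i, c i * u3 i t)^2)
    (w : Fin n × Fin n × Fin n → ℝ) :
    l1 * l2 * l3 * ∑ α, w α ^2
      ≤ ∫ p in (Icc (0:ℝ) 1) ×ˢ (Icc (0:ℝ) 1) ×ˢ (Icc (0:ℝ) 1),
          (∑ α, w α * (u1 α.1 p.1 * u2 α.2.1 p.2.1 * u3 α.2.2 p.2.2))^2 := by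
  haveI := finite_restrict_Icc
  classical
  set b : ℝ → Fin n → Fin n → ℝ := fun x j k => ∑ i, w (i,j,k) * u1 i x with hbdef
  set a : ℝ → ℝ → Fin n → ℝ := fun x y k => ∑ j, b x j k * u2 j y with hadef
  set W : ℝ := ∑ α, |w α| with hWdef
  have hWnn : 0 ≤ W := Finset.sum_nonneg (fun α _ => abs_nonneg _)
  set F : ℝ × ℝ × ℝ → ℝ :=
    fun p => (∑ α, w α * (u1 α.1 p.1 * u2 α.2.1 p.2.1 * u3 α.2.2 p.2.2))^2 with hFdef
  -- splitting identity
  have hsplit : ∀ x y z : ℝ,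
      (∑ α : Fin n × Fin n × Fin n, w α * (u1 α.1 x * u2 α.2.1 y * u3 α.2.2 z))
        = ∑ k, a x y k * u3 k z := by
    intro x y z
    calc (∑ α : Fin n × Fin n × Fin n, w α * (u1 α.1 x * u2 α.2.1 y * u3 α.2.2 z))
        = ∑ i, ∑ j, ∑ k, w (i,j,k) * u1 i x * u2 j y * u3 k z := by
          rw [Fintype.sum_prod_type]
          refine Finset.sum_congr rfl (fun i _ => ?_)
          rw [Fintype.sum_prod_type]
          exact Finset.sum_congr rfl (fun j _ => Finset.sum_congr rfl (fun k _ => by ring))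
      _ = ∑ k, ∑ j, ∑ i, w (i,j,k) * u1 i x * u2 j y * u3 k z := (swap3 _).symm
      _ = ∑ k, a x y k * u3 k z := by
          refine Finset.sum_congr rfl (fun k _ => ?_)
          show _ = (∑ j, b x j k * u2 j y) * u3 k z
          rw [Finset.sum_mul]
          refine Finset.sum_congr rfl (fun j _ => ?_)
          show _ = (∑ i, w (i,j,k) * u1 i x) * u2 j y * u3 k z
          rw [Finset.sum_mul, Finset.sum_mul]
  -- measurability and bounds
  have hFmeas : Measurable F := by
    apply Measurable.pow_const
    apply Finset.measurable_sum
    intro α _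
    apply Measurable.const_mul
    exact (((hm1 α.1).comp measurable_fst).mul
      ((hm2 α.2.1).comp (measurable_fst.comp measurable_snd))).mul
      ((hm3 α.2.2).comp (measurable_snd.comp measurable_snd))
  have hFbd : ∀ p, |F p| ≤ (W * (β1 * β2 * β3))^2 := by
    intro p
    apply sq_abs_le
    apply abs_sum_mul_le
    intro α
    rw [abs_mul, abs_mul]
    have := mul_le_mul (mul_le_mul (hb1 α.1 p.1) (hb2 α.2.1 p.2.1) (abs_nonneg _) hβ1)
      (hb3 α.2.2 p.2.2) (abs_nonneg _) (by positivity)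
    linarith
  have hbbd : ∀ x j k, |b x j k| ≤ W * β1 := by
    intro x j k
    calc |b x j k| ≤ (∑ i, |w (i,j,k)|) * β1 := abs_sum_mul_le _ _ (fun i => hb1 i x)
      _ ≤ W * β1 := by
          apply mul_le_mul_of_nonneg_right _ hβ1
          rw [hWdef, Fintype.sum_prod_type]
          apply Finset.sum_le_sum
          intro i _
          exact Finset.single_le_sum (f := fun q : Fin n × Fin n => |w (i, q)|)
            (fun _ _ => abs_nonneg _) (Finset.mem_univ (j,k))
  have habd : ∀ x y k, |a x y k| ≤ ((n:ℝ) * (W * β1)) * β2 := by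
    intro x y k
    calc |a x y k| ≤ (∑ j, |b x j k|) * β2 := abs_sum_mul_le _ _ (fun j => hb2 j y)
      _ ≤ ((n:ℝ) * (W * β1)) * β2 := by
          apply mul_le_mul_of_nonneg_right _ hβ2
          calc ∑ j, |b x j k| ≤ ∑ _j : Fin n, W * β1 := Finset.sum_le_sum (fun j _ => hbbd x j k)
            _ = (n:ℝ) * (W * β1) := by rw [Finset.sum_const, Finset.card_univ, Fintype.card_fin,
                  nsmul_eq_mul]
  -- pointwise z-level bound
  have key_z : ∀ x y : ℝ, l3 * ∑ k, (a x y k)^2 ≤ ∫ z in Icc (0:ℝ) 1, F (x,y,z) := by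
    intro x y
    calc l3 * ∑ k, (a x y k)^2 ≤ ∫ z in Icc (0:ℝ) 1, (∑ k, a x y k * u3 k z)^2 := h3 (a x y)
      _ = ∫ z in Icc (0:ℝ) 1, F (x,y,z) := by
          apply integral_congr_ae
          apply ae_of_all
          intro z
          rw [hFdef]
          simp only
          rw [hsplit x y z]
  have hameas : ∀ x k, Measurable (fun y => a x y k) := fun x k =>
    Finset.measurable_sum _ (fun j _ => (hm2 j).const_mul _)
  have int_a2 : ∀ x k, IntegrableOn (fun y => (a x y k)^2) (Icc (0:ℝ) 1) := fun x k =>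
    integrable_of_bounded_fin ((hameas x k).pow_const 2)
      (C := (((n:ℝ) * (W * β1)) * β2)^2) (fun y => sq_abs_le (habd x y k))
  have int_lower_y : ∀ x, IntegrableOn (fun y => l3 * ∑ k, (a x y k)^2) (Icc (0:ℝ) 1) :=
    fun x => (integrable_finset_sum _ (fun k _ => int_a2 x k)).const_mul l3
  have intFx : ∀ x : ℝ, Integrable (fun q : ℝ × ℝ => F (x, q))
      ((volume.restrict (Icc (0:ℝ) 1)).prod (volume.restrict (Icc (0:ℝ) 1))) := fun x =>
    integrable_of_bounded_fin (hFmeas.comp measurable_prodMk_left) (fun q => hFbd (x, q))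
  have int_innerz : ∀ x, IntegrableOn (fun y => ∫ z in Icc (0:ℝ) 1, F (x,y,z)) (Icc (0:ℝ) 1) :=
    fun x => (intFx x).integral_prod_left
  have key_y : ∀ x : ℝ, l2 * l3 * ∑ k, ∑ j, (b x j k)^2
      ≤ ∫ y in Icc (0:ℝ) 1, ∫ z in Icc (0:ℝ) 1, F (x,y,z) := by
    intro x
    calc l2 * l3 * ∑ k, ∑ j, (b x j k)^2
        = l3 * ∑ k, (l2 * ∑ j, (b x j k)^2) := by rw [← Finset.mul_sum]; ring
      _ ≤ l3 * ∑ k, ∫ y in Icc (0:ℝ) 1, (∑ j, b x j k * u2 j y)^2 :=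
          mul_le_mul_of_nonneg_left
            (Finset.sum_le_sum (fun k _ => h2 (fun j => b x j k))) hl3
      _ = ∫ y in Icc (0:ℝ) 1, l3 * ∑ k, (a x y k)^2 := by
          rw [integral_const_mul, integral_finset_sum _ (fun k _ => int_a2 x k)]
      _ ≤ ∫ y in Icc (0:ℝ) 1, ∫ z in Icc (0:ℝ) 1, F (x,y,z) :=
          setIntegral_mono_on (int_lower_y x) (int_innerz x) measurableSet_Icc
            (fun y _ => key_z x y)
  have hbmeas : ∀ j k, Measurable (fun x => b x j k) := fun j k =>
    Finset.measurable_sum _ (fun i _ => (hm1 i).const_mul _)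
  have int_b2 : ∀ j k, IntegrableOn (fun x => (b x j k)^2) (Icc (0:ℝ) 1) := fun j k =>
    integrable_of_bounded_fin ((hbmeas j k).pow_const 2)
      (C := (W * β1)^2) (fun x => sq_abs_le (hbbd x j k))
  have int_lower_x : IntegrableOn
      (fun x => l2 * l3 * ∑ k, ∑ j, (b x j k)^2) (Icc (0:ℝ) 1) :=
    (integrable_finset_sum _ (fun k _ =>
      integrable_finset_sum _ (fun j _ => int_b2 j k))).const_mul (l2 * l3)
  have int_innerx : IntegrableOn
      (fun x => ∫ y in Icc (0:ℝ) 1, ∫ z in Icc (0:ℝ) 1, F (x,y,z)) (Icc (0:ℝ) 1) := by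
    have hjoint : Integrable F ((volume.restrict (Icc (0:ℝ) 1)).prod
        ((volume.restrict (Icc (0:ℝ) 1)).prod (volume.restrict (Icc (0:ℝ) 1)))) :=
      integrable_of_bounded_fin hFmeas hFbd
    apply hjoint.integral_prod_left.congr
    apply ae_of_all
    intro x
    exact MeasureTheory.integral_prod _ (intFx x)
  calc l1 * l2 * l3 * ∑ α, w α ^2
      = l2 * l3 * ∑ k, ∑ j, (l1 * ∑ i, w (i,j,k)^2) := by
        have e1 : ∑ α : Fin n × Fin n × Fin n, w α ^2 = ∑ i, ∑ j, ∑ k, w (i,j,k)^2 := by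
          rw [Fintype.sum_prod_type]
          exact Finset.sum_congr rfl (fun i _ => by rw [Fintype.sum_prod_type])
        rw [e1, ← swap3 (fun i j k => w (i,j,k)^2)]
        rw [show ∑ k, ∑ j, (l1 * ∑ i, w (i,j,k)^2)
            = l1 * ∑ k, ∑ j, ∑ i, w (i,j,k)^2 from by
          rw [Finset.mul_sum]
          exact Finset.sum_congr rfl (fun k _ => by rw [← Finset.mul_sum])]
        ring
    _ ≤ l2 * l3 * ∑ k, ∑ j, ∫ x in Icc (0:ℝ) 1, (∑ i, w (i,j,k) * u1 i x)^2 := by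
        apply mul_le_mul_of_nonneg_left _ (mul_nonneg hl2 hl3)
        exact Finset.sum_le_sum (fun k _ =>
          Finset.sum_le_sum (fun j _ => h1 (fun i => w (i,j,k))))
    _ = ∫ x in Icc (0:ℝ) 1, l2 * l3 * ∑ k, ∑ j, (b x j k)^2 := by
        rw [integral_const_mul, integral_finset_sum _ (fun k _ =>
          integrable_finset_sum _ (fun j _ => int_b2 j k))]
        congr 1
        exact Finset.sum_congr rfl (fun k _ =>
          (integral_finset_sum _ (fun j _ => int_b2 j k)).symm)
    _ ≤ ∫ x in Icc (0:ℝ) 1, ∫ y in Icc (0:ℝ) 1, ∫ z in Icc (0:ℝ) 1, F (x,y,z) :=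
        setIntegral_mono_on int_lower_x int_innerx measurableSet_Icc (fun x _ => key_y x)
    _ = ∫ p in (Icc (0:ℝ) 1) ×ˢ (Icc (0:ℝ) 1) ×ˢ (Icc (0:ℝ) 1), F p :=
        (triple_eq hFmeas hFbd).symm

lemma chain_le
    (hm1 : ∀ i, Measurable (u1 i)) (hm2 : ∀ i, Measurable (u2 i)) (hm3 : ∀ i, Measurable (u3 i))
    (hβ1 : 0 ≤ β1) (hβ2 : 0 ≤ β2) (hβ3 : 0 ≤ β3)
    (hb1 : ∀ i t, |u1 i t| ≤ β1) (hb2 : ∀ i t, |u2 i t| ≤ β2) (hb3 : ∀ i t, |u3 i t| ≤ β3)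
    {l1 l2 l3 : ℝ} (hl2 : 0 ≤ l2) (hl3 : 0 ≤ l3)
    (h1 : ∀ c : Fin n → ℝ, ∫ t in Icc (0:ℝ) 1, (∑ i, c i * u1 i t)^2 ≤ l1 * ∑ i, c i^2)
    (h2 : ∀ c : Fin n → ℝ, ∫ t in Icc (0:ℝ) 1, (∑ i, c i * u2 i t)^2 ≤ l2 * ∑ i, c i^2)
    (h3 : ∀ c : Fin n → ℝ, ∫ t in Icc (0:ℝ) 1, (∑ i, c i * u3 i t)^2 ≤ l3 * ∑ i, c i^2)
    (w : Fin n × Fin n × Fin n → ℝ) :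
    ∫ p in (Icc (0:ℝ) 1) ×ˢ (Icc (0:ℝ) 1) ×ˢ (Icc (0:ℝ) 1),
          (∑ α, w α * (u1 α.1 p.1 * u2 α.2.1 p.2.1 * u3 α.2.2 p.2.2))^2
      ≤ l1 * l2 * l3 * ∑ α, w α ^2 := by
  haveI := finite_restrict_Icc
  classical
  set b : ℝ → Fin n → Fin n → ℝ := fun x j k => ∑ i, w (i,j,k) * u1 i x with hbdef
  set a : ℝ → ℝ → Fin n → ℝ := fun x y k => ∑ j, b x j k * u2 j y with hadef
  set W : ℝ := ∑ α, |w α| with hWdef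
  have hWnn : 0 ≤ W := Finset.sum_nonneg (fun α _ => abs_nonneg _)
  set F : ℝ × ℝ × ℝ → ℝ :=
    fun p => (∑ α, w α * (u1 α.1 p.1 * u2 α.2.1 p.2.1 * u3 α.2.2 p.2.2))^2 with hFdef
  -- splitting identity
  have hsplit : ∀ x y z : ℝ,
      (∑ α : Fin n × Fin n × Fin n, w α * (u1 α.1 x * u2 α.2.1 y * u3 α.2.2 z))
        = ∑ k, a x y k * u3 k z := by
    intro x y z
    calc (∑ α : Fin n × Fin n × Fin n, w α * (u1 α.1 x * u2 α.2.1 y * u3 α.2.2 z))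
        = ∑ i, ∑ j, ∑ k, w (i,j,k) * u1 i x * u2 j y * u3 k z := by
          rw [Fintype.sum_prod_type]
          refine Finset.sum_congr rfl (fun i _ => ?_)
          rw [Fintype.sum_prod_type]
          exact Finset.sum_congr rfl (fun j _ => Finset.sum_congr rfl (fun k _ => by ring))
      _ = ∑ k, ∑ j, ∑ i, w (i,j,k) * u1 i x * u2 j y * u3 k z := (swap3 _).symm
      _ = ∑ k, a x y k * u3 k z := by
          refine Finset.sum_congr rfl (fun k _ => ?_)
          show _ = (∑ j, b x j k * u2 j y) * u3 k z
          rw [Finset.sum_mul]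
          refine Finset.sum_congr rfl (fun j _ => ?_)
          show _ = (∑ i, w (i,j,k) * u1 i x) * u2 j y * u3 k z
          rw [Finset.sum_mul, Finset.sum_mul]
  -- measurability and bounds
  have hFmeas : Measurable F := by
    apply Measurable.pow_const
    apply Finset.measurable_sum
    intro α _
    apply Measurable.const_mul
    exact (((hm1 α.1).comp measurable_fst).mul
      ((hm2 α.2.1).comp (measurable_fst.comp measurable_snd))).mul
      ((hm3 α.2.2).comp (measurable_snd.comp measurable_snd))
  have hFbd : ∀ p, |F p| ≤ (W * (β1 * β2 * β3))^2 := by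
    intro p
    apply sq_abs_le
    apply abs_sum_mul_le
    intro α
    rw [abs_mul, abs_mul]
    have := mul_le_mul (mul_le_mul (hb1 α.1 p.1) (hb2 α.2.1 p.2.1) (abs_nonneg _) hβ1)
      (hb3 α.2.2 p.2.2) (abs_nonneg _) (by positivity)
    linarith
  have hbbd : ∀ x j k, |b x j k| ≤ W * β1 := by
    intro x j k
    calc |b x j k| ≤ (∑ i, |w (i,j,k)|) * β1 := abs_sum_mul_le _ _ (fun i => hb1 i x)
      _ ≤ W * β1 := by
          apply mul_le_mul_of_nonneg_right _ hβ1
          rw [hWdef, Fintype.sum_prod_type]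
          apply Finset.sum_le_sum
          intro i _
          exact Finset.single_le_sum (f := fun q : Fin n × Fin n => |w (i, q)|)
            (fun _ _ => abs_nonneg _) (Finset.mem_univ (j,k))
  have habd : ∀ x y k, |a x y k| ≤ ((n:ℝ) * (W * β1)) * β2 := by
    intro x y k
    calc |a x y k| ≤ (∑ j, |b x j k|) * β2 := abs_sum_mul_le _ _ (fun j => hb2 j y)
      _ ≤ ((n:ℝ) * (W * β1)) * β2 := by
          apply mul_le_mul_of_nonneg_right _ hβ2
          calc ∑ j, |b x j k| ≤ ∑ _j : Fin n, W * β1 := Finset.sum_le_sum (fun j _ => hbbd x j k)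
            _ = (n:ℝ) * (W * β1) := by rw [Finset.sum_const, Finset.card_univ, Fintype.card_fin,
                  nsmul_eq_mul]
  -- pointwise z-level bound
  have key_z : ∀ x y : ℝ, ∫ z in Icc (0:ℝ) 1, F (x,y,z) ≤ l3 * ∑ k, (a x y k)^2 := by
    intro x y
    calc ∫ z in Icc (0:ℝ) 1, F (x,y,z)
        = ∫ z in Icc (0:ℝ) 1, (∑ k, a x y k * u3 k z)^2 := by
          apply integral_congr_ae
          apply ae_of_all
          intro z
          rw [hFdef]
          simp only
          rw [hsplit x y z]
      _ ≤ l3 * ∑ k, (a x y k)^2 := h3 (a x y)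
  have hameas : ∀ x k, Measurable (fun y => a x y k) := fun x k =>
    Finset.measurable_sum _ (fun j _ => (hm2 j).const_mul _)
  have int_a2 : ∀ x k, IntegrableOn (fun y => (a x y k)^2) (Icc (0:ℝ) 1) := fun x k =>
    integrable_of_bounded_fin ((hameas x k).pow_const 2)
      (C := (((n:ℝ) * (W * β1)) * β2)^2) (fun y => sq_abs_le (habd x y k))
  have int_lower_y : ∀ x, IntegrableOn (fun y => l3 * ∑ k, (a x y k)^2) (Icc (0:ℝ) 1) :=
    fun x => (integrable_finset_sum _ (fun k _ => int_a2 x k)).const_mul l3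
  have intFx : ∀ x : ℝ, Integrable (fun q : ℝ × ℝ => F (x, q))
      ((volume.restrict (Icc (0:ℝ) 1)).prod (volume.restrict (Icc (0:ℝ) 1))) := fun x =>
    integrable_of_bounded_fin (hFmeas.comp measurable_prodMk_left) (fun q => hFbd (x, q))
  have int_innerz : ∀ x, IntegrableOn (fun y => ∫ z in Icc (0:ℝ) 1, F (x,y,z)) (Icc (0:ℝ) 1) :=
    fun x => (intFx x).integral_prod_left
  have key_y : ∀ x : ℝ, ∫ y in Icc (0:ℝ) 1, ∫ z in Icc (0:ℝ) 1, F (x,y,z)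
      ≤ l2 * l3 * ∑ k, ∑ j, (b x j k)^2 := by
    intro x
    calc ∫ y in Icc (0:ℝ) 1, ∫ z in Icc (0:ℝ) 1, F (x,y,z)
        ≤ ∫ y in Icc (0:ℝ) 1, l3 * ∑ k, (a x y k)^2 :=
          setIntegral_mono_on (int_innerz x) (int_lower_y x) measurableSet_Icc
            (fun y _ => key_z x y)
      _ = l3 * ∑ k, ∫ y in Icc (0:ℝ) 1, (∑ j, b x j k * u2 j y)^2 := by
          rw [integral_const_mul, integral_finset_sum _ (fun k _ => int_a2 x k)]
      _ ≤ l3 * ∑ k, (l2 * ∑ j, (b x j k)^2) :=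
          mul_le_mul_of_nonneg_left
            (Finset.sum_le_sum (fun k _ => h2 (fun j => b x j k))) hl3
      _ = l2 * l3 * ∑ k, ∑ j, (b x j k)^2 := by rw [← Finset.mul_sum]; ring
  have hbmeas : ∀ j k, Measurable (fun x => b x j k) := fun j k =>
    Finset.measurable_sum _ (fun i _ => (hm1 i).const_mul _)
  have int_b2 : ∀ j k, IntegrableOn (fun x => (b x j k)^2) (Icc (0:ℝ) 1) := fun j k =>
    integrable_of_bounded_fin ((hbmeas j k).pow_const 2)
      (C := (W * β1)^2) (fun x => sq_abs_le (hbbd x j k))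
  have int_lower_x : IntegrableOn
      (fun x => l2 * l3 * ∑ k, ∑ j, (b x j k)^2) (Icc (0:ℝ) 1) :=
    (integrable_finset_sum _ (fun k _ =>
      integrable_finset_sum _ (fun j _ => int_b2 j k))).const_mul (l2 * l3)
  have int_innerx : IntegrableOn
      (fun x => ∫ y in Icc (0:ℝ) 1, ∫ z in Icc (0:ℝ) 1, F (x,y,z)) (Icc (0:ℝ) 1) := by
    have hjoint : Integrable F ((volume.restrict (Icc (0:ℝ) 1)).prod
        ((volume.restrict (Icc (0:ℝ) 1)).prod (volume.restrict (Icc (0:ℝ) 1)))) :=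
      integrable_of_bounded_fin hFmeas hFbd
    apply hjoint.integral_prod_left.congr
    apply ae_of_all
    intro x
    exact MeasureTheory.integral_prod _ (intFx x)
  calc ∫ p in (Icc (0:ℝ) 1) ×ˢ (Icc (0:ℝ) 1) ×ˢ (Icc (0:ℝ) 1), F p
      = ∫ x in Icc (0:ℝ) 1, ∫ y in Icc (0:ℝ) 1, ∫ z in Icc (0:ℝ) 1, F (x,y,z) :=
        triple_eq hFmeas hFbd
    _ ≤ ∫ x in Icc (0:ℝ) 1, l2 * l3 * ∑ k, ∑ j, (b x j k)^2 :=
        setIntegral_mono_on int_innerx int_lower_x measurableSet_Icc (fun x _ => key_y x)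
    _ = l2 * l3 * ∑ k, ∑ j, ∫ x in Icc (0:ℝ) 1, (∑ i, w (i,j,k) * u1 i x)^2 := by
        rw [integral_const_mul, integral_finset_sum _ (fun k _ =>
          integrable_finset_sum _ (fun j _ => int_b2 j k))]
        congr 1
        exact Finset.sum_congr rfl (fun k _ =>
          integral_finset_sum _ (fun j _ => int_b2 j k))
    _ ≤ l2 * l3 * ∑ k, ∑ j, (l1 * ∑ i, w (i,j,k)^2) := by
        apply mul_le_mul_of_nonneg_left _ (mul_nonneg hl2 hl3)
        exact Finset.sum_le_sum (fun k _ =>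
          Finset.sum_le_sum (fun j _ => h1 (fun i => w (i,j,k))))
    _ = l1 * l2 * l3 * ∑ α, w α ^2 := by
        have e1 : ∑ α : Fin n × Fin n × Fin n, w α ^2 = ∑ i, ∑ j, ∑ k, w (i,j,k)^2 := by
          rw [Fintype.sum_prod_type]
          exact Finset.sum_congr rfl (fun i _ => by rw [Fintype.sum_prod_type])
        rw [e1, ← swap3 (fun i j k => w (i,j,k)^2)]
        rw [show ∑ k, ∑ j, (l1 * ∑ i, w (i,j,k)^2)
            = l1 * ∑ k, ∑ j, ∑ i, w (i,j,k)^2 from by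
          rw [Finset.mul_sum]
          exact Finset.sum_congr rfl (fun k _ => by rw [← Finset.mul_sum])]
        ring

end Chain

end ThreeD

section Bounds1D

variable {n : ℕ} {h : ℝ} {φ g : Fin n → ℝ → ℝ}

lemma g_form_bounds (hpos : 0 < h) (hh1 : ((n:ℝ)+1)*h = 1)
    (hg : ∀ (i : Fin n) (x : ℝ),
      g i x = if (i.val : ℝ) * h < x ∧ x < ((i.val : ℝ) + 1) * h then 1 / h
        else if ((i.val : ℝ) + 1) * h < x ∧ x < ((i.val : ℝ) + 2) * h then -(1 / h)
        else 0)
    (c : Fin n → ℝ) :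
    4*h * ∑ i, c i^2 ≤ (∫ t in Icc (0:ℝ) 1, (∑ i : Fin n, c i * g i t)^2)
    ∧ (∫ t in Icc (0:ℝ) 1, (∑ i : Fin n, c i * g i t)^2) ≤ (4/h) * ∑ i, c i^2 := by
  have hI := integral_sum_g_sq hpos hh1 hg c
  have hA := ext_sq_sum c
  have hlow := diff_lower (n := n) (e := ext c) (ext_zero c) (ext_last c)
  have hup := diff_upper (n := n) (e := ext c) (ext_zero c) (ext_last c)
  rw [hA] at hlow hup
  have hsum : ∑ k ∈ Finset.range (n+1), (ext c (k+1) - ext c k)^2 / h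
      = (∑ k ∈ Finset.range (n+1), (ext c (k+1) - ext c k)^2) / h := by
    rw [← Finset.sum_div]
  have hn1 : ((n:ℝ)+1) = 1/h := by field_simp at hh1 ⊢; linarith
  constructor
  · rw [hI, hsum]
    rw [le_div_iff₀ hpos]
    calc 4*h * (∑ i, c i^2) * h = (4 / ((n:ℝ)+1)^2) * ∑ i, c i^2 := by
          rw [hn1]; field_simp
      _ ≤ _ := hlow
  · rw [hI, hsum, div_le_iff₀ hpos]
    calc ∑ k ∈ Finset.range (n+1), (ext c (k+1) - ext c k)^2
        ≤ 4 * ∑ i, c i ^2 := hup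
      _ = 4/h * (∑ i, c i^2) * h := by field_simp

lemma phi_form_bounds (hpos : 0 < h) (hh1 : ((n:ℝ)+1)*h = 1)
    (hφ : ∀ (i : Fin n) (x : ℝ), φ i x = max 0 (1 - |x / h - ((i.val : ℝ) + 1)|))
    (c : Fin n → ℝ) :
    h/3 * ∑ i, c i^2 ≤ (∫ t in Icc (0:ℝ) 1, (∑ i : Fin n, c i * φ i t)^2)
    ∧ (∫ t in Icc (0:ℝ) 1, (∑ i : Fin n, c i * φ i t)^2) ≤ h * ∑ i, c i^2 := by
  have hI := integral_sum_phi_sq hpos hh1 hφ c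
  have hA := ext_sq_sum c
  obtain ⟨hlow, hup⟩ := mass_bounds (n := n) (e := ext c) (ext_zero c) (ext_last c)
  rw [hA] at hlow hup
  have hsum : ∑ k ∈ Finset.range (n+1),
      h/3 * (ext c k^2 + ext c k * ext c (k+1) + ext c (k+1)^2)
      = h/3 * ∑ k ∈ Finset.range (n+1),
          (ext c k^2 + ext c k * ext c (k+1) + ext c (k+1)^2) := by
    rw [Finset.mul_sum]
  constructor
  · rw [hI, hsum]
    have := mul_le_mul_of_nonneg_left hlow (le_of_lt (by positivity : (0:ℝ) < h/3))
    linarith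
  · rw [hI, hsum]
    have := mul_le_mul_of_nonneg_left hup (le_of_lt (by positivity : (0:ℝ) < h/3))
    calc h/3 * ∑ k ∈ Finset.range (n+1),
          (ext c k^2 + ext c k * ext c (k+1) + ext c (k+1)^2)
        ≤ h/3 * (3 * ∑ i, c i^2) := this
      _ = h * ∑ i, c i^2 := by ring

end Bounds1D

section QuadRep

lemma finite_restrict_Icc3 :
    IsFiniteMeasure ((volume : Measure (ℝ × ℝ × ℝ)).restrict
      ((Icc (0:ℝ) 1) ×ˢ (Icc (0:ℝ) 1) ×ˢ (Icc (0:ℝ) 1))) := by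
  constructor
  rw [Measure.restrict_apply_univ, Measure.volume_eq_prod, Measure.prod_prod,
    Measure.volume_eq_prod, Measure.prod_prod, Real.volume_Icc]
  exact ENNReal.mul_lt_top ENNReal.ofReal_lt_top
    (ENNReal.mul_lt_top ENNReal.ofReal_lt_top ENNReal.ofReal_lt_top)

lemma integrableOn_of_bounded_on {f : ℝ × ℝ × ℝ → ℝ}
    {s : Set (ℝ × ℝ × ℝ)} (hs : MeasurableSet s)
    (hfin : IsFiniteMeasure (volume.restrict s)) (hf : Measurable f) {C : ℝ}
    (hC : ∀ p ∈ s, |f p| ≤ C) : IntegrableOn f s := by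
  refine ⟨hf.aestronglyMeasurable, HasFiniteIntegral.of_bounded (C := C) ?_⟩
  filter_upwards [ae_restrict_of_forall_mem hs hC] with p hp
  simpa using hp

lemma quad_alg {ι : Type*} [Fintype ι] (v A B C : ι → ℝ) (Dp : ℝ) :
    ∑ α, ∑ β, (v α * v β) * (Dp * (A α * A β + B α * B β + C α * C β))
      = Dp * ((∑ α, v α * A α)^2 + (∑ α, v α * B α)^2 + (∑ α, v α * C α)^2) := by
  have hexp : ∀ s : ι → ℝ, (∑ α, v α * s α)^2
      = ∑ α, ∑ β, (v α * s α) * (v β * s β) := by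
    intro s; rw [sq, Finset.sum_mul_sum]
  rw [hexp A, hexp B, hexp C]
  rw [mul_add, mul_add]
  have h1 : ∀ (S : ι → ι → ℝ), Dp * ∑ α, ∑ β, S α β = ∑ α, ∑ β, Dp * S α β := by
    intro S
    rw [Finset.mul_sum]
    exact Finset.sum_congr rfl (fun α _ => by rw [Finset.mul_sum])
  rw [h1, h1, h1, ← Finset.sum_add_distrib, ← Finset.sum_add_distrib]
  apply Finset.sum_congr rfl
  intro α _
  rw [← Finset.sum_add_distrib, ← Finset.sum_add_distrib]
  apply Finset.sum_congr rfl
  intro β _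
  ring

lemma quad_rep {n : ℕ} {h : ℝ} {φ g : Fin n → ℝ → ℝ} (hpos : 0 < h)
    (hφ : ∀ (i : Fin n) (x : ℝ), φ i x = max 0 (1 - |x / h - ((i.val : ℝ) + 1)|))
    (hg : ∀ (i : Fin n) (x : ℝ),
      g i x = if (i.val : ℝ) * h < x ∧ x < ((i.val : ℝ) + 1) * h then 1 / h
        else if ((i.val : ℝ) + 1) * h < x ∧ x < ((i.val : ℝ) + 2) * h then -(1 / h)
        else 0)
    {Df : ℝ × ℝ × ℝ → ℝ} (hDf : Measurable Df) {CD : ℝ}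
    (hCD : ∀ p ∈ (Icc (0:ℝ) 1) ×ˢ (Icc (0:ℝ) 1) ×ˢ (Icc (0:ℝ) 1), |Df p| ≤ CD)
    {M : Matrix (Fin n × Fin n × Fin n) (Fin n × Fin n × Fin n) ℝ}
    (hM : ∀ i j k i' j' k', M (i, j, k) (i', j', k')
      = ∫ p in (Icc (0:ℝ) 1) ×ˢ (Icc (0:ℝ) 1) ×ˢ (Icc (0:ℝ) 1),
        Df p * ((g i p.1 * φ j p.2.1 * φ k p.2.2) * (g i' p.1 * φ j' p.2.1 * φ k' p.2.2)
          + (φ i p.1 * g j p.2.1 * φ k p.2.2) * (φ i' p.1 * g j' p.2.1 * φ k' p.2.2)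
          + (φ i p.1 * φ j p.2.1 * g k p.2.2) * (φ i' p.1 * φ j' p.2.1 * g k' p.2.2)))
    (v : Fin n × Fin n × Fin n → ℝ) :
    v ⬝ᵥ M.mulVec v
      = ∫ p in (Icc (0:ℝ) 1) ×ˢ (Icc (0:ℝ) 1) ×ˢ (Icc (0:ℝ) 1), Df p *
        ((∑ α : Fin n × Fin n × Fin n, v α * (g α.1 p.1 * φ α.2.1 p.2.1 * φ α.2.2 p.2.2))^2
        + (∑ α : Fin n × Fin n × Fin n, v α * (φ α.1 p.1 * g α.2.1 p.2.1 * φ α.2.2 p.2.2))^2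
        + (∑ α : Fin n × Fin n × Fin n, v α * (φ α.1 p.1 * φ α.2.1 p.2.1 * g α.2.2 p.2.2))^2) := by
  classical
  haveI := finite_restrict_Icc3
  have hbox : MeasurableSet ((Icc (0:ℝ) 1) ×ˢ (Icc (0:ℝ) 1) ×ˢ (Icc (0:ℝ) 1)) :=
    measurableSet_Icc.prod (measurableSet_Icc.prod measurableSet_Icc)
  set A : (Fin n × Fin n × Fin n) → ℝ × ℝ × ℝ → ℝ :=
    fun α p => g α.1 p.1 * φ α.2.1 p.2.1 * φ α.2.2 p.2.2 with hAdef
  set B : (Fin n × Fin n × Fin n) → ℝ × ℝ × ℝ → ℝ :=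
    fun α p => φ α.1 p.1 * g α.2.1 p.2.1 * φ α.2.2 p.2.2 with hBdef
  set C : (Fin n × Fin n × Fin n) → ℝ × ℝ × ℝ → ℝ :=
    fun α p => φ α.1 p.1 * φ α.2.1 p.2.1 * g α.2.2 p.2.2 with hCdef
  have hgm : ∀ i, Measurable (g i) := fun i => g_meas hg i
  have hφm : ∀ i, Measurable (φ i) := fun i => (phi_cont hφ i).measurable
  have hm3 : ∀ (f1 f2 f3 : ℝ → ℝ), Measurable f1 → Measurable f2 → Measurable f3 →
      Measurable (fun p : ℝ × ℝ × ℝ => f1 p.1 * f2 p.2.1 * f3 p.2.2) :=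
    fun f1 f2 f3 h1 h2 h3 =>
      ((h1.comp measurable_fst).mul (h2.comp (measurable_fst.comp measurable_snd))).mul
        (h3.comp (measurable_snd.comp measurable_snd))
  have hAm : ∀ α, Measurable (A α) := fun α => hm3 _ _ _ (hgm α.1) (hφm α.2.1) (hφm α.2.2)
  have hBm : ∀ α, Measurable (B α) := fun α => hm3 _ _ _ (hφm α.1) (hgm α.2.1) (hφm α.2.2)
  have hCm : ∀ α, Measurable (C α) := fun α => hm3 _ _ _ (hφm α.1) (hφm α.2.1) (hgm α.2.2)
  have hb3 : ∀ (a b c : ℝ), |a| ≤ 1/h → |b| ≤ 1 → |c| ≤ 1 → |a * b * c| ≤ 1/h := by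
    intro a b c ha hb hc
    rw [abs_mul, abs_mul]
    calc |a| * |b| * |c| ≤ (1/h) * 1 * 1 := by
          apply mul_le_mul (mul_le_mul ha hb (abs_nonneg _) (by positivity)) hc (abs_nonneg _)
          positivity
      _ = 1/h := by ring
  have hAb : ∀ α p, |A α p| ≤ 1/h := fun α p =>
    hb3 _ _ _ (g_bound hpos hg α.1 p.1) (phi_bound hφ α.2.1 p.2.1) (phi_bound hφ α.2.2 p.2.2)
  have hBb : ∀ α p, |B α p| ≤ 1/h := by
    intro α p
    rw [hBdef]
    simp only
    rw [show φ α.1 p.1 * g α.2.1 p.2.1 * φ α.2.2 p.2.2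
        = g α.2.1 p.2.1 * φ α.1 p.1 * φ α.2.2 p.2.2 from by ring]
    exact hb3 _ _ _ (g_bound hpos hg α.2.1 p.2.1) (phi_bound hφ α.1 p.1)
      (phi_bound hφ α.2.2 p.2.2)
  have hCb : ∀ α p, |C α p| ≤ 1/h := by
    intro α p
    rw [hCdef]
    simp only
    rw [show φ α.1 p.1 * φ α.2.1 p.2.1 * g α.2.2 p.2.2
        = g α.2.2 p.2.2 * φ α.1 p.1 * φ α.2.1 p.2.1 from by ring]
    exact hb3 _ _ _ (g_bound hpos hg α.2.2 p.2.2) (phi_bound hφ α.1 p.1)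
      (phi_bound hφ α.2.1 p.2.1)
  have hprod : ∀ (x y : ℝ), |x| ≤ 1/h → |y| ≤ 1/h → |x * y| ≤ 1/h^2 := by
    intro x y hx hy
    rw [abs_mul]
    calc |x| * |y| ≤ (1/h) * (1/h) := mul_le_mul hx hy (abs_nonneg _) (by positivity)
      _ = 1/h^2 := by ring
  have hint : ∀ α β : Fin n × Fin n × Fin n, IntegrableOn
      (fun p => (v α * v β) * (Df p * (A α p * A β p + B α p * B β p + C α p * C β p)))
      ((Icc (0:ℝ) 1) ×ˢ (Icc (0:ℝ) 1) ×ˢ (Icc (0:ℝ) 1)) := by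
    intro α β
    have hmeas : Measurable (fun p =>
        (v α * v β) * (Df p * (A α p * A β p + B α p * B β p + C α p * C β p))) := by
      apply Measurable.const_mul
      exact hDf.mul ((((hAm α).mul (hAm β)).add ((hBm α).mul (hBm β))).add
        ((hCm α).mul (hCm β)))
    apply integrableOn_of_bounded_on hbox (by infer_instance) hmeas
      (C := |v α * v β| * (CD * (3/h^2)))
    intro p hp
    rw [abs_mul]
    apply mul_le_mul_of_nonneg_left _ (abs_nonneg _)
    rw [abs_mul]
    apply mul_le_mul (hCD p hp) _ (abs_nonneg _)
      (le_trans (abs_nonneg _) (hCD p hp))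
    calc |A α p * A β p + B α p * B β p + C α p * C β p|
        ≤ |A α p * A β p| + |B α p * B β p| + |C α p * C β p| := abs_add_three _ _ _
      _ ≤ 1/h^2 + 1/h^2 + 1/h^2 := by
          have := hprod _ _ (hAb α p) (hAb β p)
          have := hprod _ _ (hBb α p) (hBb β p)
          have := hprod _ _ (hCb α p) (hCb β p)
          linarith
      _ = 3/h^2 := by ring
  have hM' : ∀ α β : Fin n × Fin n × Fin n, M α β
      = ∫ p in (Icc (0:ℝ) 1) ×ˢ (Icc (0:ℝ) 1) ×ˢ (Icc (0:ℝ) 1),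
          Df p * (A α p * A β p + B α p * B β p + C α p * C β p) := by
    rintro ⟨i, j, k⟩ ⟨i', j', k'⟩
    exact hM i j k i' j' k'
  calc v ⬝ᵥ M.mulVec v = ∑ α, ∑ β, v α * (M α β * v β) := by
        simp only [dotProduct, Matrix.mulVec, Finset.mul_sum]
    _ = ∑ α, ∑ β, ∫ p in (Icc (0:ℝ) 1) ×ˢ (Icc (0:ℝ) 1) ×ˢ (Icc (0:ℝ) 1),
          (v α * v β) * (Df p * (A α p * A β p + B α p * B β p + C α p * C β p)) := by
        refine Finset.sum_congr rfl (fun α _ => Finset.sum_congr rfl (fun β _ => ?_))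
        rw [hM' α β, integral_const_mul]
        ring
    _ = ∫ p in (Icc (0:ℝ) 1) ×ˢ (Icc (0:ℝ) 1) ×ˢ (Icc (0:ℝ) 1),
          ∑ α, ∑ β, (v α * v β) * (Df p * (A α p * A β p + B α p * B β p + C α p * C β p)) := by
        rw [integral_finset_sum _ (fun α _ => integrable_finset_sum _ (fun β _ => hint α β))]
        exact Finset.sum_congr rfl (fun α _ =>
          (integral_finset_sum _ (fun β _ => hint α β)).symm)
    _ = _ := by
        apply integral_congr_ae
        apply ae_of_all
        intro p
        exact quad_alg v (fun α => A α p) (fun α => B α p) (fun α => C α p) (Df p)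

end QuadRep

end Stmt4

/-- **Diffusion stiffness matrix `L`.** With `n ≥ 1`, `h = 1/(n+1)`, 3D hat functions
`φ_{ijk}` (with a.e. gradients built from `φ_i` and `g_i`), the 3D Laplacian matrix
`P⁽³⁾`, and a measurable coefficient `D` with `0 < D_min ≤ D ≤ D_max` on `[0,1]³`,
the matrix `L_{(i,j,k),(i',j',k')} = ∫_{[0,1]³} D ∇φ_{ijk} · ∇φ_{i'j'k'}` is symmetric,
satisfies `D_min·vᵀP⁽³⁾v ≤ vᵀLv ≤ D_max·vᵀP⁽³⁾v` for all `v`, every eigenvalue `λ` of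
`L` satisfies `(4/3)·D_min·h³ ≤ λ ≤ 12·D_max·h`, and hence the condition number of `L`
is at most `9·(D_max/D_min)·(1/h²)`. -/
theorem stmt4 (n : ℕ) (hn : 1 ≤ n) (h : ℝ) (hh : h = 1 / ((n : ℝ) + 1))
    (φ g : Fin n → ℝ → ℝ)
    (hφ : ∀ (i : Fin n) (x : ℝ), φ i x = max 0 (1 - |x / h - ((i.val : ℝ) + 1)|))
    (hg : ∀ (i : Fin n) (x : ℝ),
      g i x = if (i.val : ℝ) * h < x ∧ x < ((i.val : ℝ) + 1) * h then 1 / h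
        else if ((i.val : ℝ) + 1) * h < x ∧ x < ((i.val : ℝ) + 2) * h then -(1 / h)
        else 0)
    (P3 : Matrix (Fin n × Fin n × Fin n) (Fin n × Fin n × Fin n) ℝ)
    (hP3 : ∀ i j k i' j' k', P3 (i, j, k) (i', j', k') =
      ∫ p in (Set.Icc (0:ℝ) 1) ×ˢ (Set.Icc (0:ℝ) 1) ×ˢ (Set.Icc (0:ℝ) 1),
        (g i p.1 * φ j p.2.1 * φ k p.2.2) * (g i' p.1 * φ j' p.2.1 * φ k' p.2.2)
        + (φ i p.1 * g j p.2.1 * φ k p.2.2) * (φ i' p.1 * g j' p.2.1 * φ k' p.2.2)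
        + (φ i p.1 * φ j p.2.1 * g k p.2.2) * (φ i' p.1 * φ j' p.2.1 * g k' p.2.2))
    (D : ℝ × ℝ × ℝ → ℝ) (Dmin Dmax : ℝ) (hDmin : 0 < Dmin)
    (hDmeas : Measurable D)
    (hD : ∀ p ∈ (Set.Icc (0:ℝ) 1) ×ˢ (Set.Icc (0:ℝ) 1) ×ˢ (Set.Icc (0:ℝ) 1),
      Dmin ≤ D p ∧ D p ≤ Dmax)
    (L : Matrix (Fin n × Fin n × Fin n) (Fin n × Fin n × Fin n) ℝ)
    (hL : ∀ i j k i' j' k', L (i, j, k) (i', j', k') =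
      ∫ p in (Set.Icc (0:ℝ) 1) ×ˢ (Set.Icc (0:ℝ) 1) ×ˢ (Set.Icc (0:ℝ) 1),
        D p * ((g i p.1 * φ j p.2.1 * φ k p.2.2) * (g i' p.1 * φ j' p.2.1 * φ k' p.2.2)
          + (φ i p.1 * g j p.2.1 * φ k p.2.2) * (φ i' p.1 * g j' p.2.1 * φ k' p.2.2)
          + (φ i p.1 * φ j p.2.1 * g k p.2.2) * (φ i' p.1 * φ j' p.2.1 * g k' p.2.2))) :
    L.IsSymm ∧
    (∀ v : Fin n × Fin n × Fin n → ℝ,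
      Dmin * (v ⬝ᵥ P3.mulVec v) ≤ v ⬝ᵥ L.mulVec v ∧
      v ⬝ᵥ L.mulVec v ≤ Dmax * (v ⬝ᵥ P3.mulVec v)) ∧
    (∀ (lam : ℝ) (v : Fin n × Fin n × Fin n → ℝ), v ≠ 0 → L.mulVec v = lam • v →
      (4 / 3) * Dmin * h ^ 3 ≤ lam ∧ lam ≤ 12 * Dmax * h) ∧
    (∀ (lam mu : ℝ) (v w : Fin n × Fin n × Fin n → ℝ), v ≠ 0 → w ≠ 0 →
      L.mulVec v = lam • v → L.mulVec w = mu • w →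
      lam ≤ 9 * (Dmax / Dmin) * (1 / h ^ 2) * mu) := by
  classical
  have hpos : 0 < h := by rw [hh]; positivity
  have hh1 : ((n:ℝ)+1)*h = 1 := by rw [hh]; field_simp
  haveI := Stmt4.finite_restrict_Icc3
  have hbox : MeasurableSet ((Set.Icc (0:ℝ) 1) ×ˢ (Set.Icc (0:ℝ) 1) ×ˢ (Set.Icc (0:ℝ) 1)) :=
    measurableSet_Icc.prod (measurableSet_Icc.prod measurableSet_Icc)
  have hp0 : ((0:ℝ),(0:ℝ),(0:ℝ))
      ∈ (Set.Icc (0:ℝ) 1) ×ˢ (Set.Icc (0:ℝ) 1) ×ˢ (Set.Icc (0:ℝ) 1) :=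
    ⟨⟨le_refl 0, zero_le_one⟩, ⟨le_refl 0, zero_le_one⟩, ⟨le_refl 0, zero_le_one⟩⟩
  have hDmax : 0 < Dmax := lt_of_lt_of_le hDmin (le_trans (hD _ hp0).1 (hD _ hp0).2)
  have hDbd : ∀ p ∈ (Set.Icc (0:ℝ) 1) ×ˢ (Set.Icc (0:ℝ) 1) ×ˢ (Set.Icc (0:ℝ) 1),
      |D p| ≤ Dmax := by
    intro p hp
    rw [abs_le]
    exact ⟨by linarith [(hD p hp).1], (hD p hp).2⟩
  have hP3' : ∀ i j k i' j' k', P3 (i, j, k) (i', j', k')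
      = ∫ p in (Set.Icc (0:ℝ) 1) ×ˢ (Set.Icc (0:ℝ) 1) ×ˢ (Set.Icc (0:ℝ) 1),
        (1:ℝ) * ((g i p.1 * φ j p.2.1 * φ k p.2.2) * (g i' p.1 * φ j' p.2.1 * φ k' p.2.2)
          + (φ i p.1 * g j p.2.1 * φ k p.2.2) * (φ i' p.1 * g j' p.2.1 * φ k' p.2.2)
          + (φ i p.1 * φ j p.2.1 * g k p.2.2) * (φ i' p.1 * φ j' p.2.1 * g k' p.2.2)) := by
    intro i j k i' j' k'
    rw [hP3 i j k i' j' k']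
    apply integral_congr_ae
    apply ae_of_all
    intro p
    simp only [one_mul]
  have hrepL := Stmt4.quad_rep hpos hφ hg hDmeas hDbd hL
  have hrepP := Stmt4.quad_rep hpos hφ hg measurable_const
    (CD := 1) (fun p _ => by norm_num) hP3'
  have hgm : ∀ i, Measurable (g i) := fun i => Stmt4.g_meas hg i
  have hφm : ∀ i, Measurable (φ i) := fun i => (Stmt4.phi_cont hφ i).measurable
  have hgb : ∀ i t, |g i t| ≤ 1/h := fun i t => Stmt4.g_bound hpos hg i t
  have hφb : ∀ i t, |φ i t| ≤ 1 := fun i t => Stmt4.phi_bound hφ i t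
  have hb3 : ∀ (a b c : ℝ), |a| ≤ 1/h → |b| ≤ 1 → |c| ≤ 1 → |a * b * c| ≤ 1/h := by
    intro a b c ha hb hc
    rw [abs_mul, abs_mul]
    calc |a| * |b| * |c| ≤ (1/h) * 1 * 1 := by
          apply mul_le_mul (mul_le_mul ha hb (abs_nonneg _) (by positivity)) hc (abs_nonneg _)
          positivity
      _ = 1/h := by ring
  -- the three gradient-component sums
  have hG1m : ∀ v : Fin n × Fin n × Fin n → ℝ, Measurable (fun p : ℝ × ℝ × ℝ =>
      ∑ α : Fin n × Fin n × Fin n, v α * (g α.1 p.1 * φ α.2.1 p.2.1 * φ α.2.2 p.2.2)) :=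
    fun v => Finset.measurable_sum _ (fun α _ =>
      ((((hgm α.1).comp measurable_fst).mul
        ((hφm α.2.1).comp (measurable_fst.comp measurable_snd))).mul
        ((hφm α.2.2).comp (measurable_snd.comp measurable_snd))).const_mul (v α))
  have hG2m : ∀ v : Fin n × Fin n × Fin n → ℝ, Measurable (fun p : ℝ × ℝ × ℝ =>
      ∑ α : Fin n × Fin n × Fin n, v α * (φ α.1 p.1 * g α.2.1 p.2.1 * φ α.2.2 p.2.2)) :=
    fun v => Finset.measurable_sum _ (fun α _ =>
      ((((hφm α.1).comp measurable_fst).mul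
        ((hgm α.2.1).comp (measurable_fst.comp measurable_snd))).mul
        ((hφm α.2.2).comp (measurable_snd.comp measurable_snd))).const_mul (v α))
  have hG3m : ∀ v : Fin n × Fin n × Fin n → ℝ, Measurable (fun p : ℝ × ℝ × ℝ =>
      ∑ α : Fin n × Fin n × Fin n, v α * (φ α.1 p.1 * φ α.2.1 p.2.1 * g α.2.2 p.2.2)) :=
    fun v => Finset.measurable_sum _ (fun α _ =>
      ((((hφm α.1).comp measurable_fst).mul
        ((hφm α.2.1).comp (measurable_fst.comp measurable_snd))).mul
        ((hgm α.2.2).comp (measurable_snd.comp measurable_snd))).const_mul (v α))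
  have hG1b : ∀ (v : Fin n × Fin n × Fin n → ℝ) (p : ℝ × ℝ × ℝ),
      |∑ α : Fin n × Fin n × Fin n, v α * (g α.1 p.1 * φ α.2.1 p.2.1 * φ α.2.2 p.2.2)|
        ≤ (∑ α : Fin n × Fin n × Fin n, |v α|) * (1/h) :=
    fun v p => Stmt4.abs_sum_mul_le _ _
      (fun α => hb3 _ _ _ (hgb α.1 p.1) (hφb α.2.1 p.2.1) (hφb α.2.2 p.2.2))
  have hG2b : ∀ (v : Fin n × Fin n × Fin n → ℝ) (p : ℝ × ℝ × ℝ),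
      |∑ α : Fin n × Fin n × Fin n, v α * (φ α.1 p.1 * g α.2.1 p.2.1 * φ α.2.2 p.2.2)|
        ≤ (∑ α : Fin n × Fin n × Fin n, |v α|) * (1/h) := by
    intro v p
    apply Stmt4.abs_sum_mul_le
    intro α
    rw [show φ α.1 p.1 * g α.2.1 p.2.1 * φ α.2.2 p.2.2
        = g α.2.1 p.2.1 * φ α.1 p.1 * φ α.2.2 p.2.2 from by ring]
    exact hb3 _ _ _ (hgb α.2.1 p.2.1) (hφb α.1 p.1) (hφb α.2.2 p.2.2)
  have hG3b : ∀ (v : Fin n × Fin n × Fin n → ℝ) (p : ℝ × ℝ × ℝ),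
      |∑ α : Fin n × Fin n × Fin n, v α * (φ α.1 p.1 * φ α.2.1 p.2.1 * g α.2.2 p.2.2)|
        ≤ (∑ α : Fin n × Fin n × Fin n, |v α|) * (1/h) := by
    intro v p
    apply Stmt4.abs_sum_mul_le
    intro α
    rw [show φ α.1 p.1 * φ α.2.1 p.2.1 * g α.2.2 p.2.2
        = g α.2.2 p.2.2 * φ α.1 p.1 * φ α.2.1 p.2.1 from by ring]
    exact hb3 _ _ _ (hgb α.2.2 p.2.2) (hφb α.1 p.1) (hφb α.2.1 p.2.1)
  have hQmeas : ∀ v : Fin n × Fin n × Fin n → ℝ, Measurable (fun p : ℝ × ℝ × ℝ =>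
      (∑ α : Fin n × Fin n × Fin n, v α * (g α.1 p.1 * φ α.2.1 p.2.1 * φ α.2.2 p.2.2))^2
      + (∑ α : Fin n × Fin n × Fin n, v α * (φ α.1 p.1 * g α.2.1 p.2.1 * φ α.2.2 p.2.2))^2
      + (∑ α : Fin n × Fin n × Fin n, v α * (φ α.1 p.1 * φ α.2.1 p.2.1 * g α.2.2 p.2.2))^2) :=
    fun v => (((hG1m v).pow_const 2).add ((hG2m v).pow_const 2)).add ((hG3m v).pow_const 2)
  have hQ0 : ∀ (v : Fin n × Fin n × Fin n → ℝ) (p : ℝ × ℝ × ℝ), (0:ℝ) ≤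
      (∑ α : Fin n × Fin n × Fin n, v α * (g α.1 p.1 * φ α.2.1 p.2.1 * φ α.2.2 p.2.2))^2
      + (∑ α : Fin n × Fin n × Fin n, v α * (φ α.1 p.1 * g α.2.1 p.2.1 * φ α.2.2 p.2.2))^2
      + (∑ α : Fin n × Fin n × Fin n, v α * (φ α.1 p.1 * φ α.2.1 p.2.1 * g α.2.2 p.2.2))^2 :=
    fun v p => by positivity
  have hQbd : ∀ (v : Fin n × Fin n × Fin n → ℝ) (p : ℝ × ℝ × ℝ),
      |(∑ α : Fin n × Fin n × Fin n, v α * (g α.1 p.1 * φ α.2.1 p.2.1 * φ α.2.2 p.2.2))^2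
      + (∑ α : Fin n × Fin n × Fin n, v α * (φ α.1 p.1 * g α.2.1 p.2.1 * φ α.2.2 p.2.2))^2
      + (∑ α : Fin n × Fin n × Fin n, v α * (φ α.1 p.1 * φ α.2.1 p.2.1 * g α.2.2 p.2.2))^2|
        ≤ 3 * ((∑ α : Fin n × Fin n × Fin n, |v α|) * (1/h))^2 := by
    intro v p
    have b1 := Stmt4.sq_abs_le (hG1b v p)
    have b2 := Stmt4.sq_abs_le (hG2b v p)
    have b3 := Stmt4.sq_abs_le (hG3b v p)
    rw [abs_of_nonneg (hQ0 v p)]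
    rw [abs_of_nonneg (sq_nonneg _)] at b1 b2 b3
    linarith
  have hQint : ∀ v : Fin n × Fin n × Fin n → ℝ, IntegrableOn (fun p : ℝ × ℝ × ℝ =>
      (∑ α : Fin n × Fin n × Fin n, v α * (g α.1 p.1 * φ α.2.1 p.2.1 * φ α.2.2 p.2.2))^2
      + (∑ α : Fin n × Fin n × Fin n, v α * (φ α.1 p.1 * g α.2.1 p.2.1 * φ α.2.2 p.2.2))^2
      + (∑ α : Fin n × Fin n × Fin n, v α * (φ α.1 p.1 * φ α.2.1 p.2.1 * g α.2.2 p.2.2))^2)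
      ((Set.Icc (0:ℝ) 1) ×ˢ (Set.Icc (0:ℝ) 1) ×ˢ (Set.Icc (0:ℝ) 1)) :=
    fun v => Stmt4.integrableOn_of_bounded_on hbox (by infer_instance) (hQmeas v)
      (fun p _ => hQbd v p)
  have hDQint : ∀ v : Fin n × Fin n × Fin n → ℝ, IntegrableOn (fun p : ℝ × ℝ × ℝ => D p *
      ((∑ α : Fin n × Fin n × Fin n, v α * (g α.1 p.1 * φ α.2.1 p.2.1 * φ α.2.2 p.2.2))^2
      + (∑ α : Fin n × Fin n × Fin n, v α * (φ α.1 p.1 * g α.2.1 p.2.1 * φ α.2.2 p.2.2))^2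
      + (∑ α : Fin n × Fin n × Fin n, v α * (φ α.1 p.1 * φ α.2.1 p.2.1 * g α.2.2 p.2.2))^2))
      ((Set.Icc (0:ℝ) 1) ×ˢ (Set.Icc (0:ℝ) 1) ×ˢ (Set.Icc (0:ℝ) 1)) := by
    intro v
    apply Stmt4.integrableOn_of_bounded_on hbox (by infer_instance) (hDmeas.mul (hQmeas v))
      (C := Dmax * (3 * ((∑ α : Fin n × Fin n × Fin n, |v α|) * (1/h))^2))
    intro p hp
    rw [Pi.mul_apply, abs_mul]
    apply mul_le_mul (hDbd p hp) (hQbd v p) (abs_nonneg _) hDmax.le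
  have hP3v : ∀ v : Fin n × Fin n × Fin n → ℝ, v ⬝ᵥ P3.mulVec v
      = ∫ p in (Set.Icc (0:ℝ) 1) ×ˢ (Set.Icc (0:ℝ) 1) ×ˢ (Set.Icc (0:ℝ) 1),
      ((∑ α : Fin n × Fin n × Fin n, v α * (g α.1 p.1 * φ α.2.1 p.2.1 * φ α.2.2 p.2.2))^2
      + (∑ α : Fin n × Fin n × Fin n, v α * (φ α.1 p.1 * g α.2.1 p.2.1 * φ α.2.2 p.2.2))^2
      + (∑ α : Fin n × Fin n × Fin n, v α * (φ α.1 p.1 * φ α.2.1 p.2.1 * g α.2.2 p.2.2))^2) := by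
    intro v
    rw [hrepP v]
    apply integral_congr_ae
    apply ae_of_all
    intro p
    simp only [one_mul]
  have main2 : ∀ v : Fin n × Fin n × Fin n → ℝ,
      Dmin * (v ⬝ᵥ P3.mulVec v) ≤ v ⬝ᵥ L.mulVec v ∧
      v ⬝ᵥ L.mulVec v ≤ Dmax * (v ⬝ᵥ P3.mulVec v) := by
    intro v
    constructor
    · rw [hrepL v, hP3v v, ← integral_const_mul]
      apply setIntegral_mono_on ((hQint v).const_mul Dmin) (hDQint v) hbox
      intro p hp
      exact mul_le_mul_of_nonneg_right (hD p hp).1 (hQ0 v p)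
    · rw [hrepL v, hP3v v, ← integral_const_mul]
      apply setIntegral_mono_on (hDQint v) ((hQint v).const_mul Dmax) hbox
      intro p hp
      exact mul_le_mul_of_nonneg_right (hD p hp).2 (hQ0 v p)
  -- spectral bounds of P3 form
  have hG1int : ∀ v : Fin n × Fin n × Fin n → ℝ, IntegrableOn (fun p : ℝ × ℝ × ℝ =>
      (∑ α : Fin n × Fin n × Fin n, v α * (g α.1 p.1 * φ α.2.1 p.2.1 * φ α.2.2 p.2.2))^2)
      ((Set.Icc (0:ℝ) 1) ×ˢ (Set.Icc (0:ℝ) 1) ×ˢ (Set.Icc (0:ℝ) 1)) :=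
    fun v => Stmt4.integrableOn_of_bounded_on hbox (by infer_instance)
      ((hG1m v).pow_const 2) (fun p _ => Stmt4.sq_abs_le (hG1b v p))
  have hG2int : ∀ v : Fin n × Fin n × Fin n → ℝ, IntegrableOn (fun p : ℝ × ℝ × ℝ =>
      (∑ α : Fin n × Fin n × Fin n, v α * (φ α.1 p.1 * g α.2.1 p.2.1 * φ α.2.2 p.2.2))^2)
      ((Set.Icc (0:ℝ) 1) ×ˢ (Set.Icc (0:ℝ) 1) ×ˢ (Set.Icc (0:ℝ) 1)) :=
    fun v => Stmt4.integrableOn_of_bounded_on hbox (by infer_instance)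
      ((hG2m v).pow_const 2) (fun p _ => Stmt4.sq_abs_le (hG2b v p))
  have hG3int : ∀ v : Fin n × Fin n × Fin n → ℝ, IntegrableOn (fun p : ℝ × ℝ × ℝ =>
      (∑ α : Fin n × Fin n × Fin n, v α * (φ α.1 p.1 * φ α.2.1 p.2.1 * g α.2.2 p.2.2))^2)
      ((Set.Icc (0:ℝ) 1) ×ˢ (Set.Icc (0:ℝ) 1) ×ˢ (Set.Icc (0:ℝ) 1)) :=
    fun v => Stmt4.integrableOn_of_bounded_on hbox (by infer_instance)
      ((hG3m v).pow_const 2) (fun p _ => Stmt4.sq_abs_le (hG3b v p))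
  have hsplitQ : ∀ v : Fin n × Fin n × Fin n → ℝ, v ⬝ᵥ P3.mulVec v
      = (∫ p in (Set.Icc (0:ℝ) 1) ×ˢ (Set.Icc (0:ℝ) 1) ×ˢ (Set.Icc (0:ℝ) 1),
        (∑ α : Fin n × Fin n × Fin n, v α * (g α.1 p.1 * φ α.2.1 p.2.1 * φ α.2.2 p.2.2))^2)
      + (∫ p in (Set.Icc (0:ℝ) 1) ×ˢ (Set.Icc (0:ℝ) 1) ×ˢ (Set.Icc (0:ℝ) 1),
        (∑ α : Fin n × Fin n × Fin n, v α * (φ α.1 p.1 * g α.2.1 p.2.1 * φ α.2.2 p.2.2))^2)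
      + (∫ p in (Set.Icc (0:ℝ) 1) ×ˢ (Set.Icc (0:ℝ) 1) ×ˢ (Set.Icc (0:ℝ) 1),
        (∑ α : Fin n × Fin n × Fin n, v α * (φ α.1 p.1 * φ α.2.1 p.2.1 * g α.2.2 p.2.2))^2) := by
    intro v
    rw [hP3v v]
    have h12 : IntegrableOn (fun p : ℝ × ℝ × ℝ =>
        (∑ α : Fin n × Fin n × Fin n, v α * (g α.1 p.1 * φ α.2.1 p.2.1 * φ α.2.2 p.2.2))^2
        + (∑ α : Fin n × Fin n × Fin n, v α * (φ α.1 p.1 * g α.2.1 p.2.1 * φ α.2.2 p.2.2))^2)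
        ((Set.Icc (0:ℝ) 1) ×ˢ (Set.Icc (0:ℝ) 1) ×ˢ (Set.Icc (0:ℝ) 1)) :=
      (hG1int v).add (hG2int v)
    have e1 := integral_add (μ := volume.restrict
        ((Set.Icc (0:ℝ) 1) ×ˢ (Set.Icc (0:ℝ) 1) ×ˢ (Set.Icc (0:ℝ) 1))) h12 (hG3int v)
    have e2 := integral_add (μ := volume.restrict
        ((Set.Icc (0:ℝ) 1) ×ˢ (Set.Icc (0:ℝ) 1) ×ˢ (Set.Icc (0:ℝ) 1))) (hG1int v) (hG2int v)
    calc _ = _ := e1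
      _ = _ := by rw [e2]
  have main3 : ∀ v : Fin n × Fin n × Fin n → ℝ,
      (4/3)*h^3 * (∑ α, v α^2) ≤ v ⬝ᵥ P3.mulVec v ∧
      v ⬝ᵥ P3.mulVec v ≤ 12*h*(∑ α, v α^2) := by
    intro v
    have c1l := Stmt4.chain_ge (l1 := 4*h) (l2 := h/3) (l3 := h/3)
      hgm hφm hφm (by positivity : (0:ℝ) ≤ 1/h) zero_le_one zero_le_one hgb hφb hφb
      (by positivity) (by positivity)
      (fun c => (Stmt4.g_form_bounds hpos hh1 hg c).1)
      (fun c => (Stmt4.phi_form_bounds hpos hh1 hφ c).1)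
      (fun c => (Stmt4.phi_form_bounds hpos hh1 hφ c).1) v
    have c2l := Stmt4.chain_ge (l1 := h/3) (l2 := 4*h) (l3 := h/3)
      hφm hgm hφm zero_le_one (by positivity : (0:ℝ) ≤ 1/h) zero_le_one hφb hgb hφb
      (by positivity) (by positivity)
      (fun c => (Stmt4.phi_form_bounds hpos hh1 hφ c).1)
      (fun c => (Stmt4.g_form_bounds hpos hh1 hg c).1)
      (fun c => (Stmt4.phi_form_bounds hpos hh1 hφ c).1) v
    have c3l := Stmt4.chain_ge (l1 := h/3) (l2 := h/3) (l3 := 4*h)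
      hφm hφm hgm zero_le_one zero_le_one (by positivity : (0:ℝ) ≤ 1/h) hφb hφb hgb
      (by positivity) (by positivity)
      (fun c => (Stmt4.phi_form_bounds hpos hh1 hφ c).1)
      (fun c => (Stmt4.phi_form_bounds hpos hh1 hφ c).1)
      (fun c => (Stmt4.g_form_bounds hpos hh1 hg c).1) v
    have c1u := Stmt4.chain_le (l1 := 4/h) (l2 := h) (l3 := h)
      hgm hφm hφm (by positivity : (0:ℝ) ≤ 1/h) zero_le_one zero_le_one hgb hφb hφb
      hpos.le hpos.le
      (fun c => (Stmt4.g_form_bounds hpos hh1 hg c).2)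
      (fun c => (Stmt4.phi_form_bounds hpos hh1 hφ c).2)
      (fun c => (Stmt4.phi_form_bounds hpos hh1 hφ c).2) v
    have c2u := Stmt4.chain_le (l1 := h) (l2 := 4/h) (l3 := h)
      hφm hgm hφm zero_le_one (by positivity : (0:ℝ) ≤ 1/h) zero_le_one hφb hgb hφb
      (by positivity) hpos.le
      (fun c => (Stmt4.phi_form_bounds hpos hh1 hφ c).2)
      (fun c => (Stmt4.g_form_bounds hpos hh1 hg c).2)
      (fun c => (Stmt4.phi_form_bounds hpos hh1 hφ c).2) v
    have c3u := Stmt4.chain_le (l1 := h) (l2 := h) (l3 := 4/h)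
      hφm hφm hgm zero_le_one zero_le_one (by positivity : (0:ℝ) ≤ 1/h) hφb hφb hgb
      hpos.le (by positivity)
      (fun c => (Stmt4.phi_form_bounds hpos hh1 hφ c).2)
      (fun c => (Stmt4.phi_form_bounds hpos hh1 hφ c).2)
      (fun c => (Stmt4.g_form_bounds hpos hh1 hg c).2) v
    rw [hsplitQ v]
    have r1 : 4*h*(h/3)*(h/3) * ∑ α, v α^2 = (4/9)*(h^3 * ∑ α, v α^2) := by ring
    have r2 : (h/3)*(4*h)*(h/3) * ∑ α, v α^2 = (4/9)*(h^3 * ∑ α, v α^2) := by ring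
    have r3 : (h/3)*(h/3)*(4*h) * ∑ α, v α^2 = (4/9)*(h^3 * ∑ α, v α^2) := by ring
    have rt : (4/3)*h^3 * ∑ α, v α^2 = (4/3)*(h^3 * ∑ α, v α^2) := by ring
    have s1 : 4/h*h*h * ∑ α, v α^2 = 4*(h * ∑ α, v α^2) := by field_simp
    have s2 : h*(4/h)*h * ∑ α, v α^2 = 4*(h * ∑ α, v α^2) := by field_simp
    have s3 : h*h*(4/h) * ∑ α, v α^2 = 4*(h * ∑ α, v α^2) := by field_simp
    have st : 12*h * ∑ α, v α^2 = 12*(h * ∑ α, v α^2) := by ring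
    constructor
    · rw [rt]
      rw [r1] at c1l
      rw [r2] at c2l
      rw [r3] at c3l
      linarith
    · rw [st]
      rw [s1] at c1u
      rw [s2] at c2u
      rw [s3] at c3u
      linarith
  have part3 : ∀ (lam : ℝ) (v : Fin n × Fin n × Fin n → ℝ), v ≠ 0 → L.mulVec v = lam • v →
      (4 / 3) * Dmin * h ^ 3 ≤ lam ∧ lam ≤ 12 * Dmax * h := by
    intro lam v hv hev
    have hS : 0 < ∑ α, v α^2 := by
      obtain ⟨α, hα⟩ := Function.ne_iff.mp hv
      apply Finset.sum_pos'
      · exact fun β _ => sq_nonneg _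
      · refine ⟨α, Finset.mem_univ α, ?_⟩
        have h1 : 0 < |v α| := abs_pos.mpr hα
        nlinarith [sq_abs (v α)]
    have hlam : v ⬝ᵥ L.mulVec v = lam * ∑ α, v α^2 := by
      rw [hev]
      calc v ⬝ᵥ (lam • v) = ∑ α, v α * (lam * v α) := rfl
        _ = lam * ∑ α, v α^2 := by
            rw [Finset.mul_sum]
            exact Finset.sum_congr rfl (fun α _ => by ring)
    obtain ⟨m2l, m2u⟩ := main2 v
    obtain ⟨m3l, m3u⟩ := main3 v
    constructor
    · have key : ((4/3) * Dmin * h^3) * ∑ α, v α^2 ≤ lam * ∑ α, v α^2 := by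
        calc ((4/3) * Dmin * h^3) * ∑ α, v α^2
            = Dmin * ((4/3)*h^3 * ∑ α, v α^2) := by ring
          _ ≤ Dmin * (v ⬝ᵥ P3.mulVec v) := mul_le_mul_of_nonneg_left m3l hDmin.le
          _ ≤ v ⬝ᵥ L.mulVec v := m2l
          _ = lam * ∑ α, v α^2 := hlam
      exact le_of_mul_le_mul_right key hS
    · have key : lam * ∑ α, v α^2 ≤ (12 * Dmax * h) * ∑ α, v α^2 := by
        calc lam * ∑ α, v α^2 = v ⬝ᵥ L.mulVec v := hlam.symm
          _ ≤ Dmax * (v ⬝ᵥ P3.mulVec v) := m2u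
          _ ≤ Dmax * (12*h*(∑ α, v α^2)) := mul_le_mul_of_nonneg_left m3u hDmax.le
          _ = (12 * Dmax * h) * ∑ α, v α^2 := by ring
      exact le_of_mul_le_mul_right key hS
  refine ⟨?_, main2, part3, ?_⟩
  · rw [Matrix.IsSymm]
    apply Matrix.ext
    rintro ⟨i, j, k⟩ ⟨i', j', k'⟩
    rw [Matrix.transpose_apply, hL i' j' k' i j k, hL i j k i' j' k']
    apply integral_congr_ae
    apply ae_of_all
    intro p
    ring
  · intro lam mu v w hv hw hev hew
    have hlamu := (part3 lam v hv hev).2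
    have hmul := (part3 mu w hw hew).1
    have hfac : (0:ℝ) ≤ 9 * (Dmax / Dmin) * (1 / h ^ 2) := by positivity
    have hkey : 9 * (Dmax / Dmin) * (1 / h ^ 2) * ((4 / 3) * Dmin * h ^ 3)
        = 12 * Dmax * h := by
      field_simp
      ring
    calc lam ≤ 12 * Dmax * h := hlamu
      _ = 9 * (Dmax / Dmin) * (1 / h ^ 2) * ((4 / 3) * Dmin * h ^ 3) := hkey.symm
      _ ≤ 9 * (Dmax / Dmin) * (1 / h ^ 2) * mu := mul_le_mul_of_nonneg_left hmul hfac
end
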